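/- arXiv:2308.03812 — 6 statements merged into one kernel-verified Lean document; each statement's English description precedes it below -/
import Mathlib

section
/- Let n ∈ ℕ with n ≥ 2 and let φ : ℝ → ℝ be continuous and such that lim_{x→−∞} φ(x) and lim_{x→∞} φ(x) exist, are finite, and are distinct. Then for every d > 0 there exists a two-layer network f ∈ N²_φ(ℝⁿ) such that for every one-layer network g ∈ N¹_φ(ℝⁿ) one has sup_{x∈ℝⁿ} |f(x) − g(x)| ≥ d. -/
open Filter Topology MeasureTheory

noncomputable section

/-- `ℝⁿ` with the Euclidean norm. -/
abbrev E (n : ℕ) := EuclideanSpace ℝ (Fin n)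

/-- Closure of a set of real-valued functions with respect to the supremum
norm over the whole domain (global uniform convergence). -/
def UnifClosure {α : Type*} (S : Set (α → ℝ)) : Set (α → ℝ) :=
  {f | ∀ ε : ℝ, 0 < ε → ∃ g ∈ S, ∀ x, |f x - g x| ≤ ε}

/-- The space `N^l_φ(ℝⁿ)` of `l`-hidden-layer neural networks (the value at
`l = 0` is a dummy). -/
def NN (φ : ℝ → ℝ) (n : ℕ) : ℕ → Set (E n → ℝ)
  | 0 => {0}
  | 1 => ↑(Submodule.span ℝ
      {f : E n → ℝ | ∃ (a : E n) (b : ℝ), f = fun x => φ ((inner ℝ a x : ℝ) + b)})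
  | (l+2) => ↑(Submodule.span ℝ
      {f : E n → ℝ | ∃ g ∈ NN φ n (l+1), ∃ b : ℝ, f = fun x => φ (g x + b)})

/-- `N^∞_φ(ℝⁿ) = ⋃_{l ≥ 1} N^l_φ(ℝⁿ)`. -/
def NNinf (φ : ℝ → ℝ) (n : ℕ) : Set (E n → ℝ) :=
  {f | ∃ l : ℕ, 1 ≤ l ∧ f ∈ NN φ n l}

/-- `C₀(ℝⁿ)`: continuous real-valued functions on `ℝⁿ` vanishing at infinity. -/
def C0 (n : ℕ) : Set (E n → ℝ) :=
  {f | Continuous f ∧ Tendsto f (cocompact (E n)) (𝓝 0)}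

namespace Stmt3Aux
open Real intervalIntegral

lemma integral_sin_two (a b : ℝ) :
    ∫ θ in a..b, Real.sin (2 * θ) = (Real.cos (2*a) - Real.cos (2*b)) / 2 := by
  rw [intervalIntegral.integral_comp_mul_left (fun x => Real.sin x) two_ne_zero]
  simp [integral_sin]; ring

lemma integral_sin_two_full : (∫ θ in (0:ℝ)..2*π, Real.sin (2*θ)) = 0 := by
  rw [integral_sin_two]
  rw [show (2:ℝ)*(2*π) = 2*π + 2*π by ring, Real.cos_add_two_pi, Real.cos_two_pi]
  norm_num

variable {n : ℕ}

def i0 (hn : 2 ≤ n) : Fin n := ⟨0, by omega⟩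
def i1 (hn : 2 ≤ n) : Fin n := ⟨1, by omega⟩

def pt (hn : 2 ≤ n) (θ R : ℝ) : E n :=
  (R * Real.cos θ) • EuclideanSpace.single (i0 hn) (1:ℝ)
    + (R * Real.sin θ) • EuclideanSpace.single (i1 hn) (1:ℝ)

lemma inner_pt (hn : 2 ≤ n) (a : E n) (θ R : ℝ) :
    (inner ℝ a (pt hn θ R) : ℝ) = R * (a (i0 hn) * Real.cos θ + a (i1 hn) * Real.sin θ) := by
  simp [pt, inner_add_right, real_inner_smul_right, EuclideanSpace.inner_single_right]
  ring

lemma pt_continuous (hn : 2 ≤ n) (R : ℝ) : Continuous (fun θ => pt hn θ R) := by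
  unfold pt; fun_prop

def Sm (hn : 2 ≤ n) (h : E n → ℝ) (m : ℕ) : ℝ :=
  ∫ θ in (0:ℝ)..(2*π), h (pt hn θ (m:ℝ)) * Real.sin (2*θ)

lemma cos_zero_null (θ₀ : ℝ) : volume {θ : ℝ | Real.cos (θ - θ₀) = 0} = 0 := by
  have hsub : {θ : ℝ | Real.cos (θ - θ₀) = 0} ⊆
      Set.range (fun k : ℤ => θ₀ + (2 * (k:ℝ) + 1) * π / 2) := by
    intro θ hθ
    obtain ⟨k, hk⟩ := Real.cos_eq_zero_iff.mp hθ
    exact ⟨k, by push_cast; linarith⟩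
  exact measure_mono_null hsub ((Set.countable_range _).measure_zero _)

lemma i0_ne_i1 (hn : 2 ≤ n) : i0 hn ≠ i1 hn := by
  simp [i0, i1, Fin.mk.injEq]

lemma sin_cos_zero_null : volume {θ : ℝ | Real.cos θ = 0 ∨ Real.sin θ = 0} = 0 := by
  have h1 : volume {θ : ℝ | Real.cos θ = 0} = 0 := by simpa using cos_zero_null 0
  have h2 : volume {θ : ℝ | Real.sin θ = 0} = 0 := by
    have hsub : {θ : ℝ | Real.sin θ = 0} ⊆ Set.range (fun k : ℤ => (k:ℝ) * π) := by
      intro θ hθ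
      obtain ⟨k, hk⟩ := Real.sin_eq_zero_iff.mp hθ
      exact ⟨k, hk⟩
    exact measure_mono_null hsub ((Set.countable_range _).measure_zero _)
  have he : {θ : ℝ | Real.cos θ = 0 ∨ Real.sin θ = 0}
      = {θ : ℝ | Real.cos θ = 0} ∪ {θ : ℝ | Real.sin θ = 0} := rfl
  rw [he]
  exact measure_union_null h1 h2

lemma gen_tendsto (hn : 2 ≤ n) {φ : ℝ → ℝ} {L₁ L₂ M : ℝ} (hφc : Continuous φ)
    (h₁ : Tendsto φ atBot (𝓝 L₁)) (h₂ : Tendsto φ atTop (𝓝 L₂))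
    (hM : ∀ t, |φ t| ≤ M) (a : E n) (b : ℝ) :
    Tendsto (Sm hn (fun x => φ ((inner ℝ a x : ℝ) + b))) atTop (𝓝 0) := by
  set p := a (i0 hn) with hp
  set q := a (i1 hn) with hq
  set w : ℝ → ℝ := fun θ => p * Real.cos θ + q * Real.sin θ with hwdef
  have hwc : Continuous w :=
    (continuous_const.mul Real.continuous_cos).add (continuous_const.mul Real.continuous_sin)
  have hrw : ∀ m : ℕ, Sm hn (fun x => φ ((inner ℝ a x : ℝ) + b)) m
      = ∫ θ in (0:ℝ)..(2*π), φ ((m:ℝ) * w θ + b) * Real.sin (2*θ) := by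
    intro m
    refine intervalIntegral.integral_congr fun θ _ => ?_
    show φ ((inner ℝ a (pt hn θ (m:ℝ)) : ℝ) + b) * Real.sin (2*θ) = _
    rw [inner_pt]
  by_cases h0 : p = 0 ∧ q = 0
  · have hz : ∀ m:ℕ, Sm hn (fun x => φ ((inner ℝ a x :ℝ) + b)) m = 0 := by
      intro m
      rw [hrw m]
      have he : (fun θ => φ ((m:ℝ) * w θ + b) * Real.sin (2*θ))
           = fun θ => φ b * Real.sin (2*θ) := by
        funext θ; rw [hwdef]; rw [h0.1, h0.2]; norm_num
      rw [he, intervalIntegral.integral_const_mul, integral_sin_two_full, mul_zero]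
    exact Tendsto.congr (fun m => (hz m).symm) tendsto_const_nhds
  -- phase representation
  have hzne : (⟨p, q⟩ : ℂ) ≠ 0 := by
    intro h
    exact h0 ⟨congrArg Complex.re h, congrArg Complex.im h⟩
  set ρ : ℝ := ‖(⟨p, q⟩ : ℂ)‖ with hρdef
  set θ₀ : ℝ := Complex.arg ⟨p, q⟩ with hθ₀def
  have hρ : 0 < ρ := by
    rw [hρdef]; exact (norm_pos_iff.mpr hzne)
  have hw : ∀ θ, w θ = ρ * Real.cos (θ - θ₀) := by
    intro θ
    rw [Real.cos_sub, hwdef]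
    have hc : Real.cos θ₀ = p / ρ := by
      rw [hθ₀def, Complex.cos_arg hzne]
    have hs : Real.sin θ₀ = q / ρ := by
      rw [hθ₀def, Complex.sin_arg]
    rw [hc, hs]
    field_simp
  -- the symmetrization identity
  have hint : ∀ m : ℕ, IntervalIntegrable
      (fun θ => φ ((m:ℝ) * w θ + b) * Real.sin (2*θ)) volume 0 (2*π) :=
    fun m => ((hφc.comp (((continuous_const.mul hwc)).add continuous_const)).mul
      (by fun_prop)).intervalIntegrable _ _
  have hint' : ∀ m : ℕ, IntervalIntegrable
      (fun θ => φ (-((m:ℝ) * w θ) + b) * Real.sin (2*θ)) volume 0 (2*π) :=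
    fun m => ((hφc.comp ((((continuous_const.mul hwc)).neg).add continuous_const)).mul
      (by fun_prop)).intervalIntegrable _ _
  have hIJ : ∀ m:ℕ, (∫ θ in (0:ℝ)..2*π, φ ((m:ℝ)*w θ + b) * Real.sin (2*θ))
      = ∫ θ in (0:ℝ)..2*π, φ (-((m:ℝ)*w θ) + b) * Real.sin (2*θ) := by
    intro m
    have hper : Function.Periodic (fun u => φ ((m:ℝ)*w u + b) * Real.sin (2*u)) (2*π) := by
      intro θ
      have h1 : w (θ + 2*π) = w θ := by
        rw [hwdef]; simp [Real.cos_add_two_pi, Real.sin_add_two_pi]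
      have h3 : Real.sin (2*(θ + 2*π)) = Real.sin (2*θ) := by
        rw [show 2*(θ+2*π) = (2*θ + 2*π) + 2*π by ring, Real.sin_add_two_pi,
          Real.sin_add_two_pi]
      simp only [h1, h3]
    have e1 : ∀ θ, φ (-((m:ℝ)*w θ) + b) * Real.sin (2*θ)
        = (fun u => φ ((m:ℝ)*w u + b) * Real.sin (2*u)) (θ + π) := by
      intro θ
      have hw' : w (θ + π) = - w θ := by
        rw [hwdef]; simp [Real.cos_add_pi, Real.sin_add_pi]; ring
      have hs : Real.sin (2*(θ+π)) = Real.sin (2*θ) := by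
        rw [show 2*(θ+π) = 2*θ + 2*π by ring, Real.sin_add_two_pi]
      simp only [hw', hs]
      ring_nf
    have A1 : (∫ θ in (0:ℝ)..2*π, φ (-((m:ℝ)*w θ) + b) * Real.sin (2*θ))
        = ∫ θ in (0:ℝ)..2*π, (fun u => φ ((m:ℝ)*w u + b) * Real.sin (2*u)) (θ + π) :=
      intervalIntegral.integral_congr fun θ _ => e1 θ
    have A2 := intervalIntegral.integral_comp_add_right (a := 0) (b := 2*π)
      (fun u => φ ((m:ℝ)*w u + b) * Real.sin (2*u)) π
    have A3 := hper.intervalIntegral_add_eq (0 + π) 0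
    rw [show ((0+π)+2*π : ℝ) = 2*π+π by ring] at A3
    rw [show ((0:ℝ)+2*π) = 2*π by ring] at A3
    exact (A1.trans (A2.trans A3)).symm
  have hsplit : ∀ m:ℕ, Sm hn (fun x => φ ((inner ℝ a x :ℝ) + b)) m
      = (∫ θ in (0:ℝ)..2*π,
          (φ ((m:ℝ)*w θ + b) + φ (-((m:ℝ)*w θ) + b)) * Real.sin (2*θ)) / 2 := by
    intro m
    have hadd : (∫ θ in (0:ℝ)..2*π,
        (φ ((m:ℝ)*w θ + b) + φ (-((m:ℝ)*w θ) + b)) * Real.sin (2*θ))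
      = (∫ θ in (0:ℝ)..2*π, φ ((m:ℝ)*w θ + b) * Real.sin (2*θ))
        + ∫ θ in (0:ℝ)..2*π, φ (-((m:ℝ)*w θ) + b) * Real.sin (2*θ) := by
      rw [← intervalIntegral.integral_add (hint m) (hint' m)]
      exact intervalIntegral.integral_congr fun θ _ => by ring
    rw [hrw m, hadd, ← hIJ m]
    ring
  have hDCT : Tendsto (fun m : ℕ => ∫ θ in (0:ℝ)..2*π,
      (φ ((m:ℝ)*w θ + b) + φ (-((m:ℝ)*w θ) + b)) * Real.sin (2*θ)) atTop
      (𝓝 (∫ θ in (0:ℝ)..2*π, (L₂ + L₁) * Real.sin (2*θ))) := by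
    apply intervalIntegral.tendsto_integral_filter_of_dominated_convergence
      (bound := fun _ => M + M)
    · exact Eventually.of_forall fun m => Continuous.aestronglyMeasurable (by
        exact ((hφc.comp (((continuous_const.mul hwc)).add continuous_const)).add
          (hφc.comp ((((continuous_const.mul hwc)).neg).add continuous_const))).mul
          (by fun_prop))
    · refine Eventually.of_forall fun m => (ae_of_all _ fun θ _ => ?_)
      have h1 : |φ ((m:ℝ)*w θ + b) + φ (-((m:ℝ)*w θ) + b)| ≤ M + M :=
        (abs_add_le _ _).trans (add_le_add (hM _) (hM _))
      have h2 : |Real.sin (2*θ)| ≤ 1 := abs_le.mpr ⟨Real.neg_one_le_sin _, Real.sin_le_one _⟩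
      calc ‖(φ ((m:ℝ)*w θ + b) + φ (-((m:ℝ)*w θ) + b)) * Real.sin (2*θ)‖
          = |φ ((m:ℝ)*w θ + b) + φ (-((m:ℝ)*w θ) + b)| * |Real.sin (2*θ)| := abs_mul _ _
        _ ≤ (M + M) * 1 := by
            apply mul_le_mul h1 h2 (abs_nonneg _)
            have := (abs_nonneg (φ ((m:ℝ)*w θ + b) + φ (-((m:ℝ)*w θ) + b))).trans h1
            linarith
        _ = M + M := mul_one _
    · exact intervalIntegrable_const
    · have hae : ∀ᵐ θ : ℝ, Real.cos (θ - θ₀) ≠ 0 := by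
        rw [ae_iff]
        simp only [ne_eq, not_not]
        exact cos_zero_null θ₀
      filter_upwards [hae] with θ hθ _
      have hwθ : w θ ≠ 0 := by
        rw [hw θ]; exact mul_ne_zero (ne_of_gt hρ) hθ
      rcases hwθ.lt_or_gt with hneg | hpos
      · have t1 : Tendsto (fun m:ℕ => (m:ℝ) * w θ + b) atTop atBot :=
          tendsto_atBot_add_const_right _ b
            (tendsto_natCast_atTop_atTop.atTop_mul_const_of_neg hneg)
        have t2 : Tendsto (fun m:ℕ => -((m:ℝ) * w θ) + b) atTop atTop := by
          refine tendsto_atTop_add_const_right _ b ?_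
          have : Tendsto (fun m:ℕ => (m:ℝ) * (-(w θ))) atTop atTop :=
            tendsto_natCast_atTop_atTop.atTop_mul_const (by linarith)
          exact this.congr fun m => by ring
        have := ((h₁.comp t1).add (h₂.comp t2)).mul_const (Real.sin (2*θ))
        rw [show L₁ + L₂ = L₂ + L₁ from add_comm _ _] at this
        exact this
      · have t1 : Tendsto (fun m:ℕ => (m:ℝ) * w θ + b) atTop atTop :=
          tendsto_atTop_add_const_right _ b
            (tendsto_natCast_atTop_atTop.atTop_mul_const hpos)
        have t2 : Tendsto (fun m:ℕ => -((m:ℝ) * w θ) + b) atTop atBot := by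
          refine tendsto_atBot_add_const_right _ b ?_
          have : Tendsto (fun m:ℕ => (m:ℝ) * (-(w θ))) atTop atBot :=
            tendsto_natCast_atTop_atTop.atTop_mul_const_of_neg (by linarith)
          exact this.congr fun m => by ring
        exact ((h₂.comp t1).add (h₁.comp t2)).mul_const (Real.sin (2*θ))
  have hval : (∫ θ in (0:ℝ)..2*π, (L₂ + L₁) * Real.sin (2*θ)) = 0 := by
    rw [intervalIntegral.integral_const_mul, integral_sin_two_full, mul_zero]
  rw [hval] at hDCT
  have := hDCT.div_const 2
  rw [zero_div] at this
  exact Tendsto.congr (fun m => (hsplit m).symm) this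



lemma one_layer (hn : 2 ≤ n) {φ : ℝ → ℝ} {L₁ L₂ M : ℝ} (hφc : Continuous φ)
    (h₁ : Tendsto φ atBot (𝓝 L₁)) (h₂ : Tendsto φ atTop (𝓝 L₂))
    (hM : ∀ t, |φ t| ≤ M) :
    ∀ g ∈ NN φ n 1, Continuous g ∧ Tendsto (Sm hn g) atTop (𝓝 0) := by
  intro g hg
  have hg' : g ∈ Submodule.span ℝ
      {f : E n → ℝ | ∃ (a : E n) (b : ℝ), f = fun x => φ ((inner ℝ a x : ℝ) + b)} := hg
  clear hg
  induction hg' using Submodule.span_induction with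
  | mem x hx =>
    obtain ⟨a, b, rfl⟩ := hx
    constructor
    · exact hφc.comp ((continuous_const.inner continuous_id).add continuous_const)
    · exact gen_tendsto hn hφc h₁ h₂ hM a b
  | zero =>
    refine ⟨continuous_const, ?_⟩
    have : ∀ m : ℕ, Sm hn (0 : E n → ℝ) m = 0 := by
      intro m
      unfold Sm
      simp
    exact Tendsto.congr (fun m => (this m).symm) tendsto_const_nhds
  | add x y hx hy ihx ihy =>
    refine ⟨ihx.1.add ihy.1, ?_⟩
    have hadd : ∀ m : ℕ, Sm hn (x + y) m = Sm hn x m + Sm hn y m := by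
      intro m
      unfold Sm
      have Ix : IntervalIntegrable (fun θ => x (pt hn θ (m:ℝ)) * Real.sin (2*θ))
          volume 0 (2*π) :=
        ((ihx.1.comp (pt_continuous hn m)).mul (by fun_prop)).intervalIntegrable _ _
      have Iy : IntervalIntegrable (fun θ => y (pt hn θ (m:ℝ)) * Real.sin (2*θ))
          volume 0 (2*π) :=
        ((ihy.1.comp (pt_continuous hn m)).mul (by fun_prop)).intervalIntegrable _ _
      rw [← intervalIntegral.integral_add Ix Iy]
      exact intervalIntegral.integral_congr fun θ _ => by simp [Pi.add_apply]; ring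
    have := ihx.2.add ihy.2
    rw [add_zero] at this
    exact Tendsto.congr (fun m => (hadd m).symm) this
  | smul c x hx ihx =>
    refine ⟨ihx.1.const_smul c, ?_⟩
    have hsmul : ∀ m : ℕ, Sm hn (c • x) m = c * Sm hn x m := by
      intro m
      unfold Sm
      rw [← intervalIntegral.integral_const_mul]
      exact intervalIntegral.integral_congr fun θ _ => by simp [Pi.smul_apply]; ring
    have := ihx.2.const_mul c
    rw [mul_zero] at this
    exact Tendsto.congr (fun m => (hsmul m).symm) this
lemma inner_single_pt (hn : 2 ≤ n) (θ R : ℝ) :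
    ((inner ℝ (EuclideanSpace.single (i0 hn) (1:ℝ)) (pt hn θ R) : ℝ) + 0 = R * Real.cos θ)
    ∧ ((inner ℝ (EuclideanSpace.single (i1 hn) (1:ℝ)) (pt hn θ R) : ℝ) + 0 = R * Real.sin θ) := by
  constructor <;>
  · rw [inner_pt]
    simp [EuclideanSpace.single_apply, i0_ne_i1 hn, (i0_ne_i1 hn).symm, i0, i1]

lemma two_layer_tendsto (hn : 2 ≤ n) {φ : ℝ → ℝ} {L₁ L₂ M : ℝ} (hφc : Continuous φ)
    (h₁ : Tendsto φ atBot (𝓝 L₁)) (h₂ : Tendsto φ atTop (𝓝 L₂)) (hM : ∀ t, |φ t| ≤ M)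
    (t b : ℝ) :
    Tendsto (Sm hn (fun x =>
        φ (t * φ ((inner ℝ (EuclideanSpace.single (i0 hn) (1:ℝ)) x : ℝ) + 0)
          + t * φ ((inner ℝ (EuclideanSpace.single (i1 hn) (1:ℝ)) x : ℝ) + 0) + b))) atTop
      (𝓝 (φ (t*L₂ + t*L₂ + b) - φ (t*L₁ + t*L₂ + b)
          + φ (t*L₁ + t*L₁ + b) - φ (t*L₂ + t*L₁ + b))) := by
  set c1 := φ (t*L₂ + t*L₂ + b) with hc1
  set c2 := φ (t*L₁ + t*L₂ + b) with hc2
  set c3 := φ (t*L₁ + t*L₁ + b) with hc3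
  set c4 := φ (t*L₂ + t*L₁ + b) with hc4
  set G : ℝ → ℝ := fun θ =>
    (if θ ≤ π/2 then c1 else if θ ≤ π then c2 else if θ ≤ 3*π/2 then c3 else c4)
      * Real.sin (2*θ) with hG
  have hrw : ∀ m : ℕ, Sm hn (fun x =>
      φ (t * φ ((inner ℝ (EuclideanSpace.single (i0 hn) (1:ℝ)) x : ℝ) + 0)
        + t * φ ((inner ℝ (EuclideanSpace.single (i1 hn) (1:ℝ)) x : ℝ) + 0) + b)) m
      = ∫ θ in (0:ℝ)..(2*π),
          φ (t * φ ((m:ℝ) * Real.cos θ) + t * φ ((m:ℝ) * Real.sin θ) + b)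
            * Real.sin (2*θ) := by
    intro m
    refine intervalIntegral.integral_congr fun θ _ => ?_
    show φ (t * φ ((inner ℝ (EuclideanSpace.single (i0 hn) (1:ℝ)) (pt hn θ (m:ℝ)) : ℝ) + 0)
        + t * φ ((inner ℝ (EuclideanSpace.single (i1 hn) (1:ℝ)) (pt hn θ (m:ℝ)) : ℝ) + 0) + b)
        * Real.sin (2*θ) = _
    rw [(inner_single_pt hn θ (m:ℝ)).1, (inner_single_pt hn θ (m:ℝ)).2]
  -- integrability of G
  have hGbound : ∀ θ, |G θ| ≤ M := by
    intro θ
    simp only [hG]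
    have h2 : |Real.sin (2*θ)| ≤ 1 := abs_le.mpr ⟨Real.neg_one_le_sin _, Real.sin_le_one _⟩
    have h1 : |(if θ ≤ π/2 then c1 else if θ ≤ π then c2 else if θ ≤ 3*π/2 then c3 else c4)|
        ≤ M := by
      split_ifs <;> first | exact hM _
    have h3 := mul_le_mul h1 h2 (abs_nonneg _) ((abs_nonneg (φ 0)).trans (hM 0))
    rw [abs_mul]
    simpa using h3
  have hGmeas : Measurable G := by
    apply Measurable.mul ?_ (by fun_prop)
    refine Measurable.ite (measurableSet_le measurable_id measurable_const) measurable_const ?_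
    refine Measurable.ite (measurableSet_le measurable_id measurable_const) measurable_const ?_
    exact Measurable.ite (measurableSet_le measurable_id measurable_const) measurable_const
      measurable_const
  have hGint : IntervalIntegrable G volume 0 (2*π) := by
    rw [intervalIntegrable_iff]
    have hfin : volume (Set.uIoc (0:ℝ) (2*π)) < ⊤ := by
      rw [Set.uIoc_of_le (by positivity)]
      exact measure_Ioc_lt_top
    refine MeasureTheory.Integrable.mono' (integrableOn_const hfin.ne)
      hGmeas.aestronglyMeasurable (ae_of_all _ fun θ => hGbound θ)
  -- DCT
  have hDCT : Tendsto (fun m : ℕ => ∫ θ in (0:ℝ)..(2*π),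
      φ (t * φ ((m:ℝ) * Real.cos θ) + t * φ ((m:ℝ) * Real.sin θ) + b) * Real.sin (2*θ))
      atTop (𝓝 (∫ θ in (0:ℝ)..(2*π), G θ)) := by
    apply intervalIntegral.tendsto_integral_filter_of_dominated_convergence
      (bound := fun _ => M)
    · refine Eventually.of_forall fun m => Continuous.aestronglyMeasurable ?_
      exact (hφc.comp (((continuous_const.mul (hφc.comp (by fun_prop))).add
        (continuous_const.mul (hφc.comp (by fun_prop)))).add continuous_const)).mul
        (by fun_prop)
    · refine Eventually.of_forall fun m => (ae_of_all _ fun θ _ => ?_)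
      have h2 : |Real.sin (2*θ)| ≤ 1 := abs_le.mpr ⟨Real.neg_one_le_sin _, Real.sin_le_one _⟩
      have h3 := mul_le_mul
        (hM (t * φ ((m:ℝ) * Real.cos θ) + t * φ ((m:ℝ) * Real.sin θ) + b)) h2
        (abs_nonneg _) ((abs_nonneg (φ 0)).trans (hM 0))
      rw [Real.norm_eq_abs, abs_mul]
      simpa using h3
    · exact intervalIntegrable_const
    · have hae : ∀ᵐ θ : ℝ, ¬(Real.cos θ = 0 ∨ Real.sin θ = 0) := by
        rw [ae_iff]
        simp only [not_not]
        exact sin_cos_zero_null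
      filter_upwards [hae] with θ hθ hmem
      push_neg at hθ
      obtain ⟨hcθ, hsθ⟩ := hθ
      have hmem' : θ ∈ Set.Ioc (0:ℝ) (2*π) := by
        rwa [Set.uIoc_of_le (by positivity)] at hmem
      -- limits of the inner units
      set A : ℝ := if 0 < Real.cos θ then L₂ else L₁ with hA
      set B : ℝ := if 0 < Real.sin θ then L₂ else L₁ with hB
      have TA : Tendsto (fun m:ℕ => φ ((m:ℝ) * Real.cos θ)) atTop (𝓝 A) := by
        rcases hcθ.lt_or_gt with hneg | hpos
        · rw [hA, if_neg (not_lt.2 hneg.le)]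
          exact h₁.comp (tendsto_natCast_atTop_atTop.atTop_mul_const_of_neg hneg)
        · rw [hA, if_pos hpos]
          exact h₂.comp (tendsto_natCast_atTop_atTop.atTop_mul_const hpos)
      have TB : Tendsto (fun m:ℕ => φ ((m:ℝ) * Real.sin θ)) atTop (𝓝 B) := by
        rcases hsθ.lt_or_gt with hneg | hpos
        · rw [hB, if_neg (not_lt.2 hneg.le)]
          exact h₁.comp (tendsto_natCast_atTop_atTop.atTop_mul_const_of_neg hneg)
        · rw [hB, if_pos hpos]
          exact h₂.comp (tendsto_natCast_atTop_atTop.atTop_mul_const hpos)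
      have Tmain : Tendsto (fun m:ℕ =>
          φ (t * φ ((m:ℝ) * Real.cos θ) + t * φ ((m:ℝ) * Real.sin θ) + b) * Real.sin (2*θ))
          atTop (𝓝 (φ (t*A + t*B + b) * Real.sin (2*θ))) := by
        refine Tendsto.mul_const _ ?_
        exact (hφc.tendsto _).comp (((TA.const_mul t).add (TB.const_mul t)).add_const b)
      -- identify the limit with G θ
      have hGval : G θ = φ (t*A + t*B + b) * Real.sin (2*θ) := by
        simp only [hG]
        congr 1
        rcases le_or_gt θ (π/2) with hq1 | hq1
        · have hθlt : θ < π/2 := lt_of_le_of_ne hq1 (fun h => hcθ (by rw [h, Real.cos_pi_div_two]))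
          have hcos : 0 < Real.cos θ := Real.cos_pos_of_mem_Ioo
            ⟨by linarith [hmem'.1, pi_pos], hθlt⟩
          have hsin : 0 < Real.sin θ := Real.sin_pos_of_pos_of_lt_pi hmem'.1
            (by linarith [pi_pos])
          rw [if_pos hq1, hA, hB, if_pos hcos, if_pos hsin, hc1]
        rcases le_or_gt θ π with hq2 | hq2
        · have hθlt : θ < π := lt_of_le_of_ne hq2 (fun h => hsθ (by rw [h, Real.sin_pi]))
          have hcos : Real.cos θ < 0 := Real.cos_neg_of_pi_div_two_lt_of_lt hq1
            (by linarith [pi_pos])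
          have hsin : 0 < Real.sin θ := Real.sin_pos_of_pos_of_lt_pi hmem'.1 hθlt
          rw [if_neg (not_le.2 hq1), if_pos hq2, hA, hB, if_neg (not_lt.2 hcos.le),
            if_pos hsin, hc2]
        rcases le_or_gt θ (3*π/2) with hq3 | hq3
        · have h32 : Real.cos (3*π/2 : ℝ) = 0 := by
            rw [show (3*π/2 : ℝ) = π/2 + π by ring, Real.cos_add_pi, Real.cos_pi_div_two,
              neg_zero]
          have hθlt : θ < 3*π/2 := lt_of_le_of_ne hq3 (fun h => hcθ (by rw [h, h32]))
          have hcos : Real.cos θ < 0 := Real.cos_neg_of_pi_div_two_lt_of_lt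
            (by linarith [pi_pos]) (by linarith)
          have hsin : Real.sin θ < 0 := by
            have h5 : 0 < Real.sin (θ - π) := Real.sin_pos_of_pos_of_lt_pi
              (by linarith) (by linarith [pi_pos])
            rw [Real.sin_sub_pi] at h5
            linarith
          rw [if_neg (not_le.2 hq1), if_neg (not_le.2 hq2), if_pos hq3, hA, hB,
            if_neg (not_lt.2 hcos.le), if_neg (not_lt.2 hsin.le), hc3]
        · have hθlt : θ < 2*π := lt_of_le_of_ne hmem'.2 (fun h => hsθ (by rw [h]; exact Real.sin_two_pi))
          have hcos : 0 < Real.cos θ := by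
            have := Real.cos_pos_of_mem_Ioo (x := θ - 2*π)
              ⟨by linarith, by linarith [pi_pos]⟩
            rwa [Real.cos_sub_two_pi] at this
          have hsin : Real.sin θ < 0 := by
            have := Real.sin_neg_of_neg_of_neg_pi_lt (x := θ - 2*π)
              (by linarith) (by linarith)
            rwa [Real.sin_sub_two_pi] at this
          rw [if_neg (not_le.2 hq1), if_neg (not_le.2 hq2), if_neg (not_le.2 hq3), hA, hB,
            if_pos hcos, if_neg (not_lt.2 hsin.le), hc4]
      rw [hGval]
      exact Tmain
  -- compute ∫ G
  have hsub : ∀ c d : ℝ, 0 ≤ c → d ≤ 2*π → c ≤ d →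
      IntervalIntegrable G volume c d := by
    intro c d hc hd hcd
    refine hGint.mono_set ?_
    rw [Set.uIcc_of_le hcd, Set.uIcc_of_le (by positivity)]
    exact Set.Icc_subset_Icc hc hd
  have pi_pos' := pi_pos
  have P1 : (∫ θ in (0:ℝ)..(π/2), G θ) = c1 := by
    have : (∫ θ in (0:ℝ)..(π/2), G θ) = ∫ θ in (0:ℝ)..(π/2), c1 * Real.sin (2*θ) := by
      refine intervalIntegral.integral_congr fun θ hθ => ?_
      rw [Set.uIcc_of_le (by positivity)] at hθ
      simp only [hG]
      simp only [if_pos hθ.2]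
    rw [this, intervalIntegral.integral_const_mul, integral_sin_two,
      show (2*(π/2):ℝ) = π by ring]
    simp [Real.cos_pi]
  have P2 : (∫ θ in (π/2:ℝ)..π, G θ) = -c2 := by
    have : (∫ θ in (π/2:ℝ)..π, G θ) = ∫ θ in (π/2:ℝ)..π, c2 * Real.sin (2*θ) := by
      refine intervalIntegral.integral_congr fun θ hθ => ?_
      rw [Set.uIcc_of_le (by linarith)] at hθ
      rcases eq_or_lt_of_le hθ.1 with heq | hlt
      · simp only [hG]; simp only [← heq]
        rw [if_pos le_rfl, show (2*(π/2):ℝ) = π by ring, Real.sin_pi, mul_zero, mul_zero]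
      · simp only [hG]; simp only [if_neg (not_le.2 hlt), if_pos hθ.2]
    rw [this, intervalIntegral.integral_const_mul, integral_sin_two,
      show (2*(π/2):ℝ) = π by ring, show (2*π:ℝ) = 0 + 2*π by ring,
      Real.cos_add_two_pi]
    simp [Real.cos_pi]
    ring
  have P3 : (∫ θ in (π:ℝ)..(3*π/2), G θ) = c3 := by
    have : (∫ θ in (π:ℝ)..(3*π/2), G θ) = ∫ θ in (π:ℝ)..(3*π/2), c3 * Real.sin (2*θ) := by
      refine intervalIntegral.integral_congr fun θ hθ => ?_
      rw [Set.uIcc_of_le (by linarith)] at hθ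
      rcases eq_or_lt_of_le hθ.1 with heq | hlt
      · simp only [hG]; simp only [← heq]
        rw [if_neg (by linarith), if_pos le_rfl, show (2*π:ℝ) = 0 + 2*π by ring,
          Real.sin_add_two_pi, Real.sin_zero, mul_zero, mul_zero]
      · simp only [hG]; simp only [if_neg (by linarith : ¬ θ ≤ π/2), if_neg (not_le.2 hlt),
          if_pos hθ.2]
    rw [this, intervalIntegral.integral_const_mul, integral_sin_two]
    have e2 : Real.cos (2*(3*π/2)) = -1 := by
      rw [show (2*(3*π/2):ℝ) = π + 2*π by ring, Real.cos_add_two_pi, Real.cos_pi]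
    rw [e2, Real.cos_two_pi]
    ring
  have P4 : (∫ θ in (3*π/2:ℝ)..(2*π), G θ) = -c4 := by
    have : (∫ θ in (3*π/2:ℝ)..(2*π), G θ) = ∫ θ in (3*π/2:ℝ)..(2*π), c4 * Real.sin (2*θ) := by
      refine intervalIntegral.integral_congr fun θ hθ => ?_
      rw [Set.uIcc_of_le (by linarith)] at hθ
      rcases eq_or_lt_of_le hθ.1 with heq | hlt
      · simp only [hG]; simp only [← heq]
        rw [if_neg (by linarith), if_neg (by linarith), if_pos le_rfl,
          show (2*(3*π/2):ℝ) = π + 2*π by ring, Real.sin_add_two_pi, Real.sin_pi,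
          mul_zero, mul_zero]
      · simp only [hG]; simp only [if_neg (by linarith : ¬ θ ≤ π/2), if_neg (by linarith : ¬ θ ≤ π),
          if_neg (not_le.2 hlt)]
    rw [this, intervalIntegral.integral_const_mul, integral_sin_two]
    have e2 : Real.cos (2*(3*π/2)) = -1 := by
      rw [show (2*(3*π/2):ℝ) = π + 2*π by ring, Real.cos_add_two_pi, Real.cos_pi]
    have e3 : Real.cos (2*(2*π)) = 1 := by
      rw [show (2*(2*π):ℝ) = 2*π + 2*π by ring, Real.cos_add_two_pi, Real.cos_two_pi]
    rw [e2, e3]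
    ring
  have hsplit : (∫ θ in (0:ℝ)..(2*π), G θ) = c1 - c2 + c3 - c4 := by
    have h12 : (∫ θ in (0:ℝ)..π, G θ) = c1 - c2 := by
      rw [← intervalIntegral.integral_add_adjacent_intervals
        (hsub 0 (π/2) le_rfl (by linarith) (by linarith))
        (hsub (π/2) π (by linarith) (by linarith) (by linarith)), P1, P2]
      ring
    have h34 : (∫ θ in (π:ℝ)..(2*π), G θ) = c3 - c4 := by
      rw [← intervalIntegral.integral_add_adjacent_intervals
        (hsub π (3*π/2) (by linarith) (by linarith) (by linarith))
        (hsub (3*π/2) (2*π) (by linarith) (by linarith) (by linarith)), P3, P4]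
      ring
    rw [← intervalIntegral.integral_add_adjacent_intervals
      (hsub 0 π le_rfl (by linarith) (by linarith))
      (hsub π (2*π) (by linarith) (by linarith) (by linarith)), h12, h34]
    ring
  rw [hsplit] at hDCT
  exact Tendsto.congr (fun m => (hrw m).symm) hDCT
lemma exists_tb {φ : ℝ → ℝ} {L₁ L₂ : ℝ} (h₁ : Tendsto φ atBot (𝓝 L₁))
    (h₂ : Tendsto φ atTop (𝓝 L₂)) (hne : L₁ ≠ L₂) :
    ∃ t b : ℝ, φ (t*L₂ + t*L₂ + b) - φ (t*L₁ + t*L₂ + b)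
      + φ (t*L₁ + t*L₁ + b) - φ (t*L₂ + t*L₁ + b) ≠ 0 := by
  set D := L₂ - L₁ with hD
  have hD0 : D ≠ 0 := sub_ne_zero.2 (Ne.symm hne)
  have hDsq : 0 < D^2 := by positivity
  have hcex : ∃ c, φ c ≠ L₁ := by
    have hev : ∀ᶠ x in atTop, dist (φ x) L₂ < dist L₁ L₂ :=
      Metric.tendsto_nhds.mp h₂ _ (dist_pos.2 hne)
    obtain ⟨c, hc⟩ := hev.exists
    refine ⟨c, fun h => ?_⟩
    rw [h] at hc
    exact lt_irrefl _ hc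
  obtain ⟨c, hc⟩ := hcex
  have T0 : Tendsto (fun k : ℕ => c - (k:ℝ)*D^2) atTop atBot := by
    have h' : Tendsto (fun k:ℕ => (k:ℝ)*D^2) atTop atTop :=
      tendsto_natCast_atTop_atTop.atTop_mul_const hDsq
    have := tendsto_atBot_add_const_right atTop c (tendsto_neg_atTop_atBot.comp h')
    exact this.congr fun k => by simp; ring
  have T0' : Tendsto (fun k : ℕ => c - 2*((k:ℝ)*D^2)) atTop atBot := by
    have h' : Tendsto (fun k:ℕ => (k:ℝ)*(2*D^2)) atTop atTop :=
      tendsto_natCast_atTop_atTop.atTop_mul_const (by positivity)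
    have := tendsto_atBot_add_const_right atTop c (tendsto_neg_atTop_atBot.comp h')
    exact this.congr fun k => by simp; ring
  have main : Tendsto (fun k : ℕ => φ c - φ (c - (k:ℝ)*D^2)
      + φ (c - 2*((k:ℝ)*D^2)) - φ (c - (k:ℝ)*D^2)) atTop
      (𝓝 (φ c - L₁ + L₁ - L₁)) :=
    ((tendsto_const_nhds.sub (h₁.comp T0)).add (h₁.comp T0')).sub (h₁.comp T0)
  have hlim_ne : φ c - L₁ + L₁ - L₁ ≠ 0 := by
    have : φ c - L₁ + L₁ - L₁ = φ c - L₁ := by ring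
    rw [this]
    exact sub_ne_zero.2 hc
  have main2 : Tendsto (fun k : ℕ =>
      φ (((k:ℝ)*D)*L₂ + ((k:ℝ)*D)*L₂ + (c - 2*L₂*((k:ℝ)*D)))
      - φ (((k:ℝ)*D)*L₁ + ((k:ℝ)*D)*L₂ + (c - 2*L₂*((k:ℝ)*D)))
      + φ (((k:ℝ)*D)*L₁ + ((k:ℝ)*D)*L₁ + (c - 2*L₂*((k:ℝ)*D)))
      - φ (((k:ℝ)*D)*L₂ + ((k:ℝ)*D)*L₁ + (c - 2*L₂*((k:ℝ)*D)))) atTop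
      (𝓝 (φ c - L₁ + L₁ - L₁)) := by
    refine main.congr fun k => ?_
    rw [show ((k:ℝ)*D)*L₂ + ((k:ℝ)*D)*L₂ + (c - 2*L₂*((k:ℝ)*D)) = c by ring,
      show ((k:ℝ)*D)*L₁ + ((k:ℝ)*D)*L₂ + (c - 2*L₂*((k:ℝ)*D)) = c - (k:ℝ)*D^2 by rw [hD]; ring,
      show ((k:ℝ)*D)*L₁ + ((k:ℝ)*D)*L₁ + (c - 2*L₂*((k:ℝ)*D)) = c - 2*((k:ℝ)*D^2) by rw [hD]; ring,
      show ((k:ℝ)*D)*L₂ + ((k:ℝ)*D)*L₁ + (c - 2*L₂*((k:ℝ)*D)) = c - (k:ℝ)*D^2 by rw [hD]; ring]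
  obtain ⟨k, hk⟩ := (main2.eventually_ne hlim_ne).exists
  exact ⟨(k:ℝ)*D, c - 2*L₂*((k:ℝ)*D), hk⟩
lemma phi_bounded {φ : ℝ → ℝ} {L₁ L₂ : ℝ} (hφc : Continuous φ)
    (h₁ : Tendsto φ atBot (𝓝 L₁)) (h₂ : Tendsto φ atTop (𝓝 L₂)) :
    ∃ M : ℝ, ∀ t, |φ t| ≤ M := by
  obtain ⟨A, hA⟩ := eventually_atBot.mp (Metric.tendsto_nhds.mp h₁ 1 one_pos)
  obtain ⟨B, hB⟩ := eventually_atTop.mp (Metric.tendsto_nhds.mp h₂ 1 one_pos)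
  obtain ⟨C, hC⟩ := (isCompact_Icc (a := A) (b := B)).exists_bound_of_continuousOn
    hφc.continuousOn
  refine ⟨max C (max (|L₁| + 1) (|L₂| + 1)), fun t => ?_⟩
  rcases le_or_gt t A with h | h
  · have := hA t h
    rw [Real.dist_eq] at this
    calc |φ t| ≤ |φ t - L₁| + |L₁| := by
          simpa using abs_add_le (φ t - L₁) L₁
    _ ≤ |L₁| + 1 := by linarith
    _ ≤ _ := le_max_of_le_right (le_max_left _ _)
  rcases le_or_gt B t with h' | h'
  · have := hB t h'
    rw [Real.dist_eq] at this
    calc |φ t| ≤ |φ t - L₂| + |L₂| := by simpa using abs_add_le (φ t - L₂) L₂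
    _ ≤ |L₂| + 1 := by linarith
    _ ≤ _ := le_max_of_le_right (le_max_right _ _)
  · exact le_max_of_le_left (by simpa using hC t ⟨h.le, h'.le⟩)

end Stmt3Aux


open Stmt3Aux Real in
/-- If `φ` is continuous with distinct finite limits at `±∞` and `n ≥ 2`, then
for every `d > 0` there is a two-layer network whose uniform distance to every
one-layer network is at least `d`. -/
theorem stmt3 (n : ℕ) (hn : 2 ≤ n) (φ : ℝ → ℝ) (hφc : Continuous φ)
    (L₁ L₂ : ℝ) (h₁ : Tendsto φ atBot (𝓝 L₁)) (h₂ : Tendsto φ atTop (𝓝 L₂))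
    (hne : L₁ ≠ L₂) :
    ∀ d : ℝ, 0 < d → ∃ f ∈ NN φ n 2, ∀ g ∈ NN φ n 1,
      ENNReal.ofReal d ≤ ⨆ x : E n, ENNReal.ofReal |f x - g x| := by
  intro d hd
  obtain ⟨M, hM⟩ := phi_bounded hφc h₁ h₂
  obtain ⟨t, b, hV⟩ := exists_tb h₁ h₂ hne
  set V : ℝ := φ (t*L₂ + t*L₂ + b) - φ (t*L₁ + t*L₂ + b)
      + φ (t*L₁ + t*L₁ + b) - φ (t*L₂ + t*L₁ + b) with hVdef
  set u : E n → ℝ := fun x =>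
      t * φ ((inner ℝ (EuclideanSpace.single (i0 hn) (1:ℝ)) x : ℝ) + 0)
      + t * φ ((inner ℝ (EuclideanSpace.single (i1 hn) (1:ℝ)) x : ℝ) + 0) with hu
  have hu_mem : u ∈ NN φ n 1 := by
    show u ∈ (Submodule.span ℝ
      {f : E n → ℝ | ∃ (a : E n) (b : ℝ), f = fun x => φ ((inner ℝ a x : ℝ) + b)} :
        Submodule ℝ (E n → ℝ))
    have m1 : (fun x : E n => φ ((inner ℝ (EuclideanSpace.single (i0 hn) (1:ℝ)) x : ℝ) + 0))
        ∈ Submodule.span ℝ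
          {f : E n → ℝ | ∃ (a : E n) (b : ℝ), f = fun x => φ ((inner ℝ a x : ℝ) + b)} :=
      Submodule.subset_span ⟨_, 0, rfl⟩
    have m2 : (fun x : E n => φ ((inner ℝ (EuclideanSpace.single (i1 hn) (1:ℝ)) x : ℝ) + 0))
        ∈ Submodule.span ℝ
          {f : E n → ℝ | ∃ (a : E n) (b : ℝ), f = fun x => φ ((inner ℝ a x : ℝ) + b)} :=
      Submodule.subset_span ⟨_, 0, rfl⟩
    have hsum := Submodule.add_mem _ (Submodule.smul_mem _ t m1) (Submodule.smul_mem _ t m2)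
    have heq : u = t • (fun x : E n =>
        φ ((inner ℝ (EuclideanSpace.single (i0 hn) (1:ℝ)) x : ℝ) + 0))
        + t • (fun x : E n =>
        φ ((inner ℝ (EuclideanSpace.single (i1 hn) (1:ℝ)) x : ℝ) + 0)) := by
      funext x
      simp [hu, Pi.add_apply, Pi.smul_apply, smul_eq_mul]
    rw [heq]
    exact hsum
  set f0 : E n → ℝ := fun x => φ (u x + b) with hf0
  have hf0_mem : f0 ∈ NN φ n 2 := by
    show f0 ∈ (Submodule.span ℝ
      {f : E n → ℝ | ∃ g ∈ NN φ n 1, ∃ b : ℝ, f = fun x => φ (g x + b)} :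
        Submodule ℝ (E n → ℝ))
    exact Submodule.subset_span ⟨u, hu_mem, b, rfl⟩
  have huc : Continuous u := by
    apply Continuous.add
    · exact continuous_const.mul (hφc.comp
        ((continuous_const.inner continuous_id).add continuous_const))
    · exact continuous_const.mul (hφc.comp
        ((continuous_const.inner continuous_id).add continuous_const))
  have hf0c : Continuous f0 := hφc.comp (huc.add continuous_const)
  have hVabs : 0 < |V| := abs_pos.2 hV
  set K : ℝ := 8*d/|V| with hKdef
  have hK : 0 < K := by positivity
  refine ⟨K • f0, Submodule.smul_mem _ K hf0_mem, ?_⟩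
  intro g hg
  obtain ⟨hgc, hgS⟩ := one_layer hn hφc h₁ h₂ hM g hg
  by_contra hcon
  rw [not_le] at hcon
  have hlt : ∀ x, |(K • f0) x - g x| < d := fun x =>
    (ENNReal.ofReal_lt_ofReal_iff hd).1
      (lt_of_le_of_lt (le_iSup (fun x => ENNReal.ofReal |(K • f0) x - g x|) x) hcon)
  have hdiffS : ∀ m : ℕ, Sm hn (fun x => (K • f0) x - g x) m
      = K * Sm hn f0 m - Sm hn g m := by
    intro m
    unfold Sm
    have If : IntervalIntegrable (fun θ => K * (f0 (pt hn θ (m:ℝ)) * Real.sin (2*θ)))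
        volume 0 (2*π) :=
      (((hf0c.comp (pt_continuous hn m)).mul (by fun_prop)).intervalIntegrable _ _).const_mul K
    have Ig : IntervalIntegrable (fun θ => g (pt hn θ (m:ℝ)) * Real.sin (2*θ))
        volume 0 (2*π) :=
      ((hgc.comp (pt_continuous hn m)).mul (by fun_prop)).intervalIntegrable _ _
    rw [← intervalIntegral.integral_const_mul, ← intervalIntegral.integral_sub If Ig]
    refine intervalIntegral.integral_congr fun θ _ => ?_
    simp only [Pi.smul_apply, smul_eq_mul]
    ring
  have hSf0 : Tendsto (Sm hn f0) atTop (𝓝 V) := by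
    have := two_layer_tendsto hn hφc h₁ h₂ hM t b
    exact this
  have hT : Tendsto (fun m => Sm hn (fun x => (K • f0) x - g x) m) atTop (𝓝 (K * V - 0)) :=
    Tendsto.congr (fun m => (hdiffS m).symm) ((hSf0.const_mul K).sub hgS)
  rw [sub_zero] at hT
  obtain ⟨m, hm⟩ := (Metric.tendsto_nhds.mp hT d hd).exists
  rw [Real.dist_eq] at hm
  have hKV : |K * V| = 8 * d := by
    rw [abs_mul, abs_of_pos hK, hKdef]
    field_simp
  have hub : |Sm hn (fun x => (K • f0) x - g x) m| ≤ d * (2*π) := by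
    have hble : ∀ θ ∈ Set.uIoc (0:ℝ) (2*π),
        ‖((K • f0) (pt hn θ (m:ℝ)) - g (pt hn θ (m:ℝ))) * Real.sin (2*θ)‖ ≤ d := by
      intro θ _
      rw [Real.norm_eq_abs, abs_mul]
      have h2 : |Real.sin (2*θ)| ≤ 1 := abs_le.mpr ⟨Real.neg_one_le_sin _, Real.sin_le_one _⟩
      have := mul_le_mul (hlt (pt hn θ (m:ℝ))).le h2 (abs_nonneg _) hd.le
      simpa using this
    have := intervalIntegral.norm_integral_le_of_norm_le_const hble
    rw [Real.norm_eq_abs] at this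
    calc |Sm hn (fun x => (K • f0) x - g x) m| ≤ d * |2*π - 0| := this
      _ = d * (2*π) := by
          rw [sub_zero, abs_of_pos (by positivity)]
  have htri : |K * V| - |Sm hn (fun x => (K • f0) x - g x) m|
      ≤ |K * V - Sm hn (fun x => (K • f0) x - g x) m| :=
    abs_sub_abs_le_abs_sub _ _
  rw [abs_sub_comm] at htri
  have hpi := Real.pi_lt_d2
  have hmul : d * (2*π) ≤ d * 6.3 := by
    apply mul_le_mul_of_nonneg_left (by linarith) hd.le
  linarith
end
end

section
/- Let n ∈ ℕ and let φ : ℝ → ℝ be continuous and such that lim_{x→−∞} φ(x) and lim_{x→∞} φ(x) exist and are finite. Then the sup-norm closure of N^∞_φ(ℝⁿ) is an algebra under pointwise operations; in particular, if f and g both lie in the sup-norm closure of N^∞_φ(ℝⁿ), then so does the pointwise product x ↦ f(x)·g(x). -/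
open Filter Topology MeasureTheory

noncomputable section

open Filter Topology MeasureTheory Metric Set
open scoped Convolution

namespace Stmt4Aux


/-- 1-D span of dilated translates of `φ`. -/
def S1 (φ : ℝ → ℝ) : Submodule ℝ (ℝ → ℝ) :=
  Submodule.span ℝ {f : ℝ → ℝ | ∃ lam b : ℝ, f = fun s => φ (lam * s + b)}

lemma gen_mem_S1 (φ : ℝ → ℝ) (lam b : ℝ) : (fun s => φ (lam * s + b)) ∈ S1 φ :=
  Submodule.subset_span ⟨lam, b, rfl⟩

lemma S1_affine {φ : ℝ → ℝ} {g : ℝ → ℝ} (hg : g ∈ S1 φ) (c d : ℝ) :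
    (fun s => g (c * s + d)) ∈ S1 φ := by
  induction hg using Submodule.span_induction with
  | mem f hf =>
      obtain ⟨lam, b, rfl⟩ := hf
      have : (fun s => φ (lam * (c * s + d) + b)) =
          fun s => φ ((lam * c) * s + (lam * d + b)) := by
        funext s; ring_nf
      rw [this]; exact gen_mem_S1 φ _ _
  | zero => exact Submodule.zero_mem _
  | add x y hx hy ihx ihy => exact Submodule.add_mem _ ihx ihy
  | smul a x hx ihx => exact Submodule.smul_mem _ a ihx

/-- functions approximable on every symmetric compact interval by elements of `S1 φ`. -/
def Bset (φ : ℝ → ℝ) : Set (ℝ → ℝ) :=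
  {ψ | ∀ M ε : ℝ, 0 < M → 0 < ε → ∃ g ∈ S1 φ, ∀ s : ℝ, |s| ≤ M → |ψ s - g s| ≤ ε}

lemma S1_subset_Bset {φ : ℝ → ℝ} {g : ℝ → ℝ} (hg : g ∈ S1 φ) : g ∈ Bset φ := by
  intro M ε _ hε
  exact ⟨g, hg, fun s _ => by simp [abs_nonneg, hε.le]⟩

lemma Bset_add {φ : ℝ → ℝ} {f g : ℝ → ℝ} (hf : f ∈ Bset φ) (hg : g ∈ Bset φ) :
    (fun s => f s + g s) ∈ Bset φ := by
  intro M ε hM hε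
  obtain ⟨F, hF, hFa⟩ := hf M (ε / 2) hM (by positivity)
  obtain ⟨G, hG, hGa⟩ := hg M (ε / 2) hM (by positivity)
  refine ⟨F + G, Submodule.add_mem _ hF hG, fun s hs => ?_⟩
  have h1 := hFa s hs; have h2 := hGa s hs
  have : f s + g s - (F + G) s = (f s - F s) + (g s - G s) := by
    simp [Pi.add_apply]; ring
  rw [this]
  calc |f s - F s + (g s - G s)| ≤ |f s - F s| + |g s - G s| := abs_add_le _ _
    _ ≤ ε := by linarith

lemma Bset_smul {φ : ℝ → ℝ} {f : ℝ → ℝ} (hf : f ∈ Bset φ) (c : ℝ) :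
    (fun s => c * f s) ∈ Bset φ := by
  intro M ε hM hε
  obtain ⟨F, hF, hFa⟩ := hf M (ε / (|c| + 1)) hM (by positivity)
  refine ⟨c • F, Submodule.smul_mem _ c hF, fun s hs => ?_⟩
  have h1 := hFa s hs
  have : c * f s - (c • F) s = c * (f s - F s) := by simp [Pi.smul_apply]; ring
  rw [this, abs_mul]
  have hc : |c| ≤ |c| + 1 := by linarith
  calc |c| * |f s - F s| ≤ (|c| + 1) * (ε / (|c| + 1)) := by
        apply mul_le_mul hc h1 (abs_nonneg _) (by positivity)
    _ = ε := by field_simp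
    _ ≤ ε := le_refl _

lemma Bset_sub {φ : ℝ → ℝ} {f g : ℝ → ℝ} (hf : f ∈ Bset φ) (hg : g ∈ Bset φ) :
    (fun s => f s - g s) ∈ Bset φ := by
  have := Bset_add hf (Bset_smul hg (-1))
  have e : (fun s => f s + (-1) * g s) = fun s => f s - g s := by funext s; ring
  rwa [e] at this

lemma Bset_affine {φ : ℝ → ℝ} {ψ : ℝ → ℝ} (hψ : ψ ∈ Bset φ) (c d : ℝ) :
    (fun s => ψ (c * s + d)) ∈ Bset φ := by
  intro M ε hM hε
  obtain ⟨g, hg, hga⟩ := hψ (|c| * M + |d| + 1) ε (by positivity) hε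
  refine ⟨fun s => g (c * s + d), S1_affine hg c d, fun s hs => ?_⟩
  apply hga
  calc |c * s + d| ≤ |c * s| + |d| := abs_add_le _ _
    _ = |c| * |s| + |d| := by rw [abs_mul]
    _ ≤ |c| * M + |d| := by nlinarith [abs_nonneg c, abs_nonneg d]
    _ ≤ |c| * M + |d| + 1 := by linarith



variable {φ : ℝ → ℝ} {Bφ : ℝ}

lemma integrand_integrable (hφc : Continuous φ) (hBφ : ∀ x, |φ x| ≤ Bφ)
    (ρ : ContDiffBump (0 : ℝ)) (x : ℝ) :
    Integrable (fun t => (fun y => φ (x - y)) t * ρ.normed volume t) volume := by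
  apply (ρ.integrable_normed).bdd_mul (c := Bφ)
  · exact ((hφc.comp (continuous_const.sub continuous_id))).aestronglyMeasurable
  · exact Eventually.of_forall (fun t => by simpa [Real.norm_eq_abs] using hBφ (x - t))

lemma conv_eq (hφc : Continuous φ) (hBφ : ∀ x, |φ x| ≤ Bφ)
    (ρ : ContDiffBump (0 : ℝ)) (x : ℝ) :
    (ρ.normed volume ⋆[ContinuousLinearMap.lsmul ℝ ℝ] φ) x
      = ∫ t, ρ.normed volume t * φ (x - t) := by
  rw [convolution_def]
  simp [ContinuousLinearMap.lsmul_apply, smul_eq_mul]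

lemma conv_integrand_integrable (hφc : Continuous φ) (hBφ : ∀ x, |φ x| ≤ Bφ)
    (ρ : ContDiffBump (0 : ℝ)) (x : ℝ) :
    Integrable (fun t => ρ.normed volume t * φ (x - t)) volume := by
  have := integrand_integrable hφc hBφ ρ x
  simpa [mul_comm] using this

lemma conv_bound (hφc : Continuous φ) (hBφ : ∀ x, |φ x| ≤ Bφ)
    (ρ : ContDiffBump (0 : ℝ)) (x : ℝ) :
    |(ρ.normed volume ⋆[ContinuousLinearMap.lsmul ℝ ℝ] φ) x| ≤ Bφ := by
  rw [conv_eq hφc hBφ ρ x]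
  have hb : ∀ t, ‖ρ.normed volume t * φ (x - t)‖ ≤ Bφ * ρ.normed volume t := by
    intro t
    rw [Real.norm_eq_abs, abs_mul, abs_of_nonneg (ρ.nonneg_normed t), mul_comm]
    exact mul_le_mul_of_nonneg_right (hBφ _) (ρ.nonneg_normed t)
  calc |∫ t, ρ.normed volume t * φ (x - t)|
      ≤ ∫ t, Bφ * ρ.normed volume t := by
        rw [← Real.norm_eq_abs]
        exact norm_integral_le_of_norm_le (ρ.integrable_normed.const_mul Bφ)
          (Eventually.of_forall hb)
    _ = Bφ := by rw [integral_const_mul, ρ.integral_normed, mul_one]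

/-- If `φ` moves by at most `η` on the ball of radius `rOut` around `x`, then the
mollification is within `η` of `φ x`. -/
lemma conv_close (hφc : Continuous φ) (hBφ : ∀ x, |φ x| ≤ Bφ)
    (ρ : ContDiffBump (0 : ℝ)) (x : ℝ) {η : ℝ} (hη : 0 ≤ η)
    (hloc : ∀ y, |y - x| ≤ ρ.rOut → |φ y - φ x| ≤ η) :
    |(ρ.normed volume ⋆[ContinuousLinearMap.lsmul ℝ ℝ] φ) x - φ x| ≤ η := by
  have h1 : (ρ.normed volume ⋆[ContinuousLinearMap.lsmul ℝ ℝ] φ) x - φ x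
      = ∫ t, ρ.normed volume t * (φ (x - t) - φ x) := by
    rw [conv_eq hφc hBφ ρ x]
    have : ∀ t, ρ.normed volume t * (φ (x - t) - φ x)
        = ρ.normed volume t * φ (x - t) - ρ.normed volume t * φ x := fun t => by ring
    simp_rw [this]
    rw [integral_sub (conv_integrand_integrable hφc hBφ ρ x)
      (ρ.integrable_normed.mul_const (φ x)), integral_mul_const, ρ.integral_normed, one_mul]
  rw [h1]
  have hb : ∀ t, ‖ρ.normed volume t * (φ (x - t) - φ x)‖ ≤ η * ρ.normed volume t := by
    intro t
    by_cases ht : ρ.normed volume t = 0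
    · simp [ht]
    · rw [Real.norm_eq_abs, abs_mul, abs_of_nonneg (ρ.nonneg_normed t), mul_comm]
      apply mul_le_mul_of_nonneg_right _ (ρ.nonneg_normed t)
      have : t ∈ Function.support (ρ.normed volume) := ht
      rw [ρ.support_normed_eq] at this
      have htr : |t| < ρ.rOut := by simpa [Real.norm_eq_abs] using mem_ball_zero_iff.mp this
      have := hloc (x - t) (by simpa [abs_sub_comm] using htr.le)
      simpa using this
  have hint : Integrable (fun t => ρ.normed volume t * (φ (x - t) - φ x)) volume := by
    have h1 := conv_integrand_integrable hφc hBφ ρ x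
    have h2 := ρ.integrable_normed.mul_const (φ x) (μ := volume)
    have := h1.sub h2
    convert this using 1; funext t; simp [mul_sub]
  calc |∫ t, ρ.normed volume t * (φ (x - t) - φ x)|
      ≤ ∫ t, η * ρ.normed volume t := by
        rw [← Real.norm_eq_abs]
        exact norm_integral_le_of_norm_le (ρ.integrable_normed.const_mul η)
          (Eventually.of_forall hb)
    _ = η := by rw [integral_const_mul, ρ.integral_normed, mul_one]



variable {φ : ℝ → ℝ} {Bφ : ℝ}

lemma conv_eq' (ρ : ContDiffBump (0 : ℝ)) (x : ℝ) :
    (ρ.normed volume ⋆[ContinuousLinearMap.lsmul ℝ ℝ] φ) x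
      = ∫ t, ρ.normed volume t * φ (x - t) := by
  rw [convolution_def]
  simp [ContinuousLinearMap.lsmul_apply, smul_eq_mul]

/-- Riemann-sum approximation: on `[-M, M]`, the mollification of `φ` is uniformly
approximable by finite linear combinations of translates of `φ`. -/
lemma conv_riemann (hφc : Continuous φ) (hBφ : ∀ x, |φ x| ≤ Bφ)
    (ρ : ContDiffBump (0 : ℝ)) (M ε : ℝ) (hM : 0 < M) (hε : 0 < ε) :
    ∃ g ∈ Submodule.span ℝ {f : ℝ → ℝ | ∃ lam b : ℝ, f = fun s => φ (lam * s + b)},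
      ∀ x : ℝ, |x| ≤ M →
        |(ρ.normed volume ⋆[ContinuousLinearMap.lsmul ℝ ℝ] φ) x - g x| ≤ ε := by
  set ρn := ρ.normed volume with hρn
  have hρc : Continuous ρn := ρ.continuous_normed
  set r := ρ.rOut with hrdef
  have hr : 0 < r := ρ.rOut_pos
  have hρ0 : ∀ t : ℝ, t ∉ Icc (-r) r → ρn t = 0 := by
    intro t ht
    by_contra h
    have : t ∈ Function.support ρn := h
    rw [hρn, ρ.support_normed_eq] at this
    have := mem_ball_zero_iff.mp this
    rw [Real.norm_eq_abs, abs_lt] at this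
    exact ht ⟨by linarith [this.1], by linarith [this.2]⟩
  -- bound for ρn
  obtain ⟨Cρ, hCρ⟩ := (isCompact_Icc (a := -r) (b := r)).exists_bound_of_continuousOn
    hρc.continuousOn
  have hCρ' : ∀ t, |ρn t| ≤ max Cρ 0 + 1 := by
    intro t
    by_cases ht : t ∈ Icc (-r) r
    · have := hCρ t ht; rw [Real.norm_eq_abs] at this
      calc |ρn t| ≤ Cρ := this
        _ ≤ max Cρ 0 + 1 := by linarith [le_max_left Cρ 0]
    · rw [hρ0 t ht]; simp; positivity
  set Cρ' : ℝ := max Cρ 0 + 1 with hCρ'def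
  have hCρ'pos : 0 < Cρ' := by positivity
  have hBφ' : ∀ x, |φ x| ≤ Bφ + 1 ∧ 0 < Bφ + 1 := by
    intro x
    have h0 := hBφ x
    have : 0 ≤ Bφ := le_trans (abs_nonneg _) (hBφ 0)
    exact ⟨by linarith, by linarith⟩
  set Bφ' : ℝ := Bφ + 1 with hBφ'def
  have hBφ'pos : 0 < Bφ' := (hBφ' 0).2
  -- target per-point error
  set ε' : ℝ := ε / (2 * r) with hε'def
  have hε'pos : 0 < ε' := by positivity
  -- uniform continuity moduli
  have uρ := ((isCompact_Icc (a := -r) (b := r)).uniformContinuousOn_of_continuous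
    hρc.continuousOn)
  rw [Metric.uniformContinuousOn_iff_le] at uρ
  obtain ⟨δ₁, hδ₁pos, hδ₁⟩ := uρ (ε' / (2 * Bφ')) (by positivity)
  have uφ := ((isCompact_Icc (a := -(M + r)) (b := M + r)).uniformContinuousOn_of_continuous
    hφc.continuousOn)
  rw [Metric.uniformContinuousOn_iff_le] at uφ
  obtain ⟨δ₂, hδ₂pos, hδ₂⟩ := uφ (ε' / (2 * Cρ')) (by positivity)
  set δ : ℝ := min δ₁ δ₂ with hδdef
  have hδpos : 0 < δ := lt_min hδ₁pos hδ₂pos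
  -- choose N
  obtain ⟨N₀, hN₀⟩ := exists_nat_ge (2 * r / δ)
  set N : ℕ := N₀ + 1 with hNdef
  have hNpos : 0 < (N : ℝ) := by positivity
  have hNδ : 2 * r / N ≤ δ := by
    rw [div_le_iff₀ hNpos]
    have h1 : 2 * r / δ ≤ (N : ℝ) := le_trans hN₀ (by exact_mod_cast Nat.le_succ N₀)
    calc 2 * r = (2 * r / δ) * δ := by field_simp
      _ ≤ (N : ℝ) * δ := mul_le_mul_of_nonneg_right h1 hδpos.le
      _ = δ * N := mul_comm _ _
  have hstep : 0 < 2 * r / N := by positivity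
  -- nodes
  set a : ℕ → ℝ := fun k => -r + k * (2 * r / N) with hadef
  have ha0 : a 0 = -r := by simp [hadef]
  have haN : a N = r := by
    simp only [hadef]
    field_simp
    ring
  have hastep : ∀ k, a (k + 1) - a k = 2 * r / N := by
    intro k; simp only [hadef]; push_cast; ring
  have hamem : ∀ k : ℕ, k ≤ N → a k ∈ Icc (-r) r := by
    intro k hk
    constructor
    · simp only [hadef]; nlinarith [hstep, Nat.cast_nonneg (α := ℝ) k]
    · simp only [hadef]
      have hkN : (k : ℝ) ≤ N := by exact_mod_cast hk
      have h2 : (k : ℝ) * (2 * r / N) ≤ (N : ℝ) * (2 * r / N) :=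
        mul_le_mul_of_nonneg_right hkN hstep.le
      have h3 : (N : ℝ) * (2 * r / N) = 2 * r := by field_simp
      linarith
  have hN0 : (N : ℝ) ≠ 0 := ne_of_gt hNpos
  have hδ1le : δ ≤ δ₁ := min_le_left _ _
  have hδ2le : δ ≤ δ₂ := min_le_right _ _
  have hεeq : ε' * (2 * r) = ε := by rw [hε'def]; field_simp
  clear_value r Cρ' Bφ' ε' δ N a
  clear hε'def hδdef hNdef hadef hCρ'def hBφ'def hρn hrdef
  -- the approximant
  refine ⟨fun x => ∑ k ∈ Finset.range N, ((2 * r / N) * ρn (a k)) * φ (x - a k), ?_, ?_⟩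
  · have hfn : (fun x => ∑ k ∈ Finset.range N, ((2 * r / N) * ρn (a k)) * φ (x - a k))
        = ∑ k ∈ Finset.range N,
            (((2 * r / N) * ρn (a k)) • (fun x : ℝ => φ (1 * x + (-(a k))))) := by
      funext x
      rw [Finset.sum_apply]
      apply Finset.sum_congr rfl
      intro k _
      simp only [Pi.smul_apply, smul_eq_mul, one_mul]
      ring_nf
    rw [hfn]
    apply Submodule.sum_mem
    intro k _
    exact Submodule.smul_mem _ _ (Submodule.subset_span ⟨1, -(a k), rfl⟩)
  · intro x hx
    set h : ℝ → ℝ := fun t => ρn t * φ (x - t) with hhdef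
    have hhc : Continuous h := hρc.mul (hφc.comp (continuous_const.sub continuous_id))
    have hint : ∀ u v : ℝ, IntervalIntegrable h volume u v :=
      fun u v => hhc.intervalIntegrable u v
    have e1 : (ρ.normed volume ⋆[ContinuousLinearMap.lsmul ℝ ℝ] φ) x
        = ∫ t in Icc (-r) r, h t := by
      rw [conv_eq' ρ x]
      exact (setIntegral_eq_integral_of_forall_compl_eq_zero
        (fun t ht => by
          show ρn t * φ (x - t) = 0
          rw [hρ0 t ht, zero_mul])).symm
    have e2 : ∫ t in Icc (-r) r, h t = ∫ t in (-r)..r, h t := by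
      rw [MeasureTheory.integral_Icc_eq_integral_Ioc,
        intervalIntegral.integral_of_le (by linarith : -r ≤ r)]
    have e3 : ∫ t in (-r)..r, h t = ∑ k ∈ Finset.range N, ∫ t in a k..a (k+1), h t := by
      rw [← ha0, ← haN]
      exact (intervalIntegral.sum_integral_adjacent_intervals (fun k _ => hint _ _)).symm
    have e4 : ∀ k : ℕ, (2 * r / N) * h (a k) = ∫ _t in a k..a (k+1), h (a k) := by
      intro k
      rw [intervalIntegral.integral_const, hastep k, smul_eq_mul]
    have e5 : (fun x => ∑ k ∈ Finset.range N,
        ((2 * r / N) * ρn (a k)) * φ (x - a k)) x = ∑ k ∈ Finset.range N,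
        (2 * r / N) * h (a k) := by
      simp only
      apply Finset.sum_congr rfl
      intro k _
      show 2 * r / ↑N * ρn (a k) * φ (x - a k) = 2 * r / ↑N * (ρn (a k) * φ (x - a k))
      ring
    -- pointwise estimate on each piece
    have hpiece : ∀ k : ℕ, k < N → ∀ t ∈ Set.uIoc (a k) (a (k+1)),
        ‖h t - h (a k)‖ ≤ ε' := by
      intro k hk t ht
      have hle : a k ≤ a (k+1) := by linarith [hastep k, hstep]
      rw [Set.uIoc_of_le hle] at ht
      have hakm : a k ∈ Icc (-r) r := hamem k hk.le
      have hak1m : a (k+1) ∈ Icc (-r) r := hamem (k+1) hk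
      have htm : t ∈ Icc (-r) r := ⟨le_trans hakm.1 ht.1.le, le_trans ht.2 hak1m.2⟩
      have hdist : dist t (a k) ≤ δ := by
        rw [Real.dist_eq, abs_of_nonneg (by linarith [ht.1.le] : (0:ℝ) ≤ t - a k)]
        have : t - a k ≤ 2 * r / N := by linarith [ht.2, hastep k]
        linarith [hNδ]
      have dρ : |ρn t - ρn (a k)| ≤ ε' / (2 * Bφ') := by
        have := hδ₁ t htm (a k) hakm (le_trans hdist hδ1le)
        rwa [Real.dist_eq] at this
      have hxtm : x - t ∈ Icc (-(M + r)) (M + r) := by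
        rw [abs_le] at hx
        constructor <;> [linarith [htm.2]; linarith [htm.1]]
      have hxakm : x - a k ∈ Icc (-(M + r)) (M + r) := by
        rw [abs_le] at hx
        constructor <;> [linarith [hakm.2]; linarith [hakm.1]]
      have dφ : |φ (x - t) - φ (x - a k)| ≤ ε' / (2 * Cρ') := by
        have hd2 : dist (x - t) (x - a k) ≤ δ₂ := by
          rw [Real.dist_eq]
          have : |x - t - (x - a k)| = |t - a k| := by rw [abs_sub_comm]; congr 1; ring
          rw [this, ← Real.dist_eq]
          exact le_trans hdist hδ2le
        have := hδ₂ (x - t) hxtm (x - a k) hxakm hd2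
        rwa [Real.dist_eq] at this
      have hsplit : h t - h (a k)
          = (ρn t - ρn (a k)) * φ (x - t) + ρn (a k) * (φ (x - t) - φ (x - a k)) := by
        show ρn t * φ (x - t) - ρn (a k) * φ (x - a k) = _
        ring
      rw [Real.norm_eq_abs, hsplit]
      have b1 : |(ρn t - ρn (a k)) * φ (x - t)| ≤ (ε' / (2 * Bφ')) * Bφ' := by
        rw [abs_mul]
        exact mul_le_mul dρ (hBφ' _).1 (abs_nonneg _) (by positivity)
      have b2 : |ρn (a k) * (φ (x - t) - φ (x - a k))| ≤ Cρ' * (ε' / (2 * Cρ')) := by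
        rw [abs_mul]
        exact mul_le_mul (hCρ' _) dφ (abs_nonneg _) (by positivity)
      have eb1 : (ε' / (2 * Bφ')) * Bφ' = ε' / 2 := by field_simp
      have eb2 : Cρ' * (ε' / (2 * Cρ')) = ε' / 2 := by field_simp
      calc |(ρn t - ρn (a k)) * φ (x - t) + ρn (a k) * (φ (x - t) - φ (x - a k))|
          ≤ |(ρn t - ρn (a k)) * φ (x - t)| + |ρn (a k) * (φ (x - t) - φ (x - a k))| :=
            abs_add_le _ _
        _ ≤ ε' / (2 * Bφ') * Bφ' + Cρ' * (ε' / (2 * Cρ')) := add_le_add b1 b2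
        _ = ε' := by rw [eb1, eb2]; ring
    -- assemble
    rw [e1, e2, e3, e5]
    rw [← Finset.sum_sub_distrib]
    have hterm : ∀ k ∈ Finset.range N,
        |(∫ t in a k..a (k+1), h t) - (2 * r / N) * h (a k)| ≤ ε' * (2 * r / N) := by
      intro k hk
      rw [Finset.mem_range] at hk
      rw [e4 k, ← intervalIntegral.integral_sub (hint _ _) intervalIntegrable_const]
      have hb := intervalIntegral.norm_integral_le_of_norm_le_const
        (C := ε') (f := fun t => h t - h (a k)) (a := a k) (b := a (k+1))
        (fun t ht => hpiece k hk t ht)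
      rw [Real.norm_eq_abs] at hb
      calc |∫ t in a k..a (k+1), (h t - h (a k))| ≤ ε' * |a (k+1) - a k| := hb
        _ = ε' * (2 * r / N) := by rw [hastep k, abs_of_pos hstep]
    calc |∑ k ∈ Finset.range N, ((∫ t in a k..a (k+1), h t) - (2 * r / N) * h (a k))|
        ≤ ∑ k ∈ Finset.range N,
            |(∫ t in a k..a (k+1), h t) - (2 * r / N) * h (a k)| :=
          Finset.abs_sum_le_sum_abs _ _
      _ ≤ ∑ _k ∈ Finset.range N, ε' * (2 * r / N) := Finset.sum_le_sum hterm
      _ = N * (ε' * (2 * r / N)) := by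
          rw [Finset.sum_const, Finset.card_range, nsmul_eq_mul]
      _ = ε' * (2 * r) := by field_simp
      _ = ε := hεeq







/-- Difference-quotient step: if all dilated translates of `ψ` multiplied by `s^j`
are approximable, so are those of `deriv ψ` multiplied by `s^(j+1)`. -/
lemma deriv_step {φ ψ ψd : ℝ → ℝ} (hψd : ∀ x, HasDerivAt ψ (ψd x) x)
    (hψdc : Continuous ψd) (j : ℕ)
    (H : ∀ lam b : ℝ, (fun s => s ^ j * ψ (lam * s + b)) ∈ Bset φ) :
    ∀ lam b : ℝ, (fun s => s ^ (j + 1) * ψd (lam * s + b)) ∈ Bset φ := by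
  intro lam b M ε hM hε
  set A : ℝ := (|lam| + 1) * M + |b| with hA
  have hA0 : 0 < A := by positivity
  set ε₁ : ℝ := ε / (2 * (M ^ (j + 1) + 1)) with hε₁
  have hε₁pos : 0 < ε₁ := by positivity
  have uc := (isCompact_Icc (a := -A) (b := A)).uniformContinuousOn_of_continuous
    hψdc.continuousOn
  rw [Metric.uniformContinuousOn_iff_le] at uc
  obtain ⟨δ, hδpos, hδ⟩ := uc ε₁ hε₁pos
  set η : ℝ := min (δ / (M + 1)) 1 with hη
  have hηpos : 0 < η := lt_min (by positivity) one_pos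
  have hη1 : η ≤ 1 := min_le_right _ _
  have hηδ : η * M ≤ δ := by
    have h1 : η ≤ δ / (M + 1) := min_le_left _ _
    calc η * M ≤ (δ / (M + 1)) * M := mul_le_mul_of_nonneg_right h1 hM.le
      _ ≤ δ := by rw [div_mul_eq_mul_div, div_le_iff₀ (by positivity)]; nlinarith
  -- the approximating difference quotient
  have hu : (fun s => (1 / η) * ((fun s => s ^ j * ψ ((lam + η) * s + b)) s
      - (fun s => s ^ j * ψ (lam * s + b)) s)) ∈ Bset φ :=
    Bset_smul (Bset_sub (H (lam + η) b) (H lam b)) (1 / η)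
  obtain ⟨g, hg, hga⟩ := hu M (ε / 2) hM (by positivity)
  refine ⟨g, hg, fun s hs => ?_⟩
  have key : |(1 / η) * (s ^ j * ψ ((lam + η) * s + b) - s ^ j * ψ (lam * s + b))
      - s ^ (j + 1) * ψd (lam * s + b)| ≤ ε / 2 := by
    set x : ℝ := lam * s + b with hx
    set y : ℝ := (lam + η) * s + b with hy
    have hyx : y - x = η * s := by rw [hx, hy]; ring
    have hxA : x ∈ Icc (-A) A := by
      rw [hx]
      constructor <;>
      · rw [hA]
        have h1 : |lam * s + b| ≤ (|lam| + 1) * M + |b| := by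
          calc |lam * s + b| ≤ |lam * s| + |b| := abs_add_le _ _
            _ = |lam| * |s| + |b| := by rw [abs_mul]
            _ ≤ (|lam| + 1) * M + |b| := by nlinarith [abs_nonneg lam, abs_nonneg s]
        rw [abs_le] at h1
        linarith [h1.1, h1.2]
    have hyA : y ∈ Icc (-A) A := by
      rw [hy]
      constructor <;>
      · rw [hA]
        have h1 : |(lam + η) * s + b| ≤ (|lam| + 1) * M + |b| := by
          calc |(lam + η) * s + b| ≤ |(lam + η) * s| + |b| := abs_add_le _ _
            _ = |lam + η| * |s| + |b| := by rw [abs_mul]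
            _ ≤ (|lam| + 1) * M + |b| := by
                have : |lam + η| ≤ |lam| + 1 := by
                  calc |lam + η| ≤ |lam| + |η| := abs_add_le _ _
                    _ ≤ |lam| + 1 := by rw [abs_of_pos hηpos]; linarith
                nlinarith [abs_nonneg lam, abs_nonneg s, abs_nonneg (lam + η)]
        rw [abs_le] at h1
        linarith [h1.1, h1.2]
    have ftc : ∫ t in x..y, ψd t = ψ y - ψ x :=
      intervalIntegral.integral_eq_sub_of_hasDerivAt (fun t _ => hψd t)
        (hψdc.intervalIntegrable x y)
    have hconst : ∫ _t in x..y, ψd x = η * s * ψd x := by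
      rw [intervalIntegral.integral_const, hyx, smul_eq_mul]
    have hid : (1 / η) * (s ^ j * ψ ((lam + η) * s + b) - s ^ j * ψ (lam * s + b))
        - s ^ (j + 1) * ψd (lam * s + b)
        = (s ^ j / η) * ((ψ y - ψ x) - η * s * ψd x) := by
      rw [hx, hy]; field_simp; ring
    rw [hid, ← ftc, ← hconst, ← intervalIntegral.integral_sub
      (hψdc.intervalIntegrable x y) intervalIntegrable_const]
    have hbound : ∀ t ∈ Set.uIoc x y, ‖ψd t - ψd x‖ ≤ ε₁ := by
      intro t ht
      rw [Set.mem_uIoc] at ht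
      have htA : t ∈ Icc (-A) A := by
        rcases ht with ⟨h1, h2⟩ | ⟨h1, h2⟩
        · exact ⟨le_trans hxA.1 h1.le, le_trans h2 hyA.2⟩
        · exact ⟨le_trans hyA.1 h1.le, le_trans h2 hxA.2⟩
      have hdist : dist t x ≤ δ := by
        rw [Real.dist_eq]
        have habs : |t - x| ≤ |y - x| := by
          rcases ht with ⟨h1, h2⟩ | ⟨h1, h2⟩
          · rw [abs_of_nonneg (by linarith : (0:ℝ) ≤ t - x)]
            calc t - x ≤ y - x := by linarith
              _ ≤ |y - x| := le_abs_self _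
          · rw [abs_of_nonpos (by linarith : t - x ≤ 0)]
            calc -(t - x) ≤ -(y - x) := by linarith
              _ ≤ |y - x| := neg_le_abs _
        calc |t - x| ≤ |y - x| := habs
          _ = |η * s| := by rw [hyx]
          _ = η * |s| := by rw [abs_mul, abs_of_pos hηpos]
          _ ≤ η * M := by nlinarith
          _ ≤ δ := hηδ
      have := hδ t htA x hxA hdist
      rwa [Real.dist_eq] at this
    have hnorm := intervalIntegral.norm_integral_le_of_norm_le_const hbound
    rw [Real.norm_eq_abs] at hnorm
    calc |(s ^ j / η) * ∫ t in x..y, (ψd t - ψd x)|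
        = (|s| ^ j / η) * |∫ t in x..y, (ψd t - ψd x)| := by
          rw [abs_mul, abs_div, abs_pow, abs_of_pos hηpos]
      _ ≤ (|s| ^ j / η) * (ε₁ * |y - x|) := by
          apply mul_le_mul_of_nonneg_left hnorm (by positivity)
      _ = (|s| ^ j / η) * (ε₁ * (η * |s|)) := by
          rw [hyx, abs_mul, abs_of_pos hηpos]
      _ = ε₁ * |s| ^ (j + 1) := by field_simp; ring
      _ ≤ ε₁ * M ^ (j + 1) := by
          apply mul_le_mul_of_nonneg_left _ hε₁pos.le
          exact pow_le_pow_left₀ (abs_nonneg _) hs _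
      _ ≤ ε / 2 := by
          rw [hε₁]
          rw [div_mul_eq_mul_div, div_le_div_iff₀ (by positivity) (by norm_num)]
          nlinarith [pow_nonneg (abs_nonneg s) (j+1), pow_nonneg hM.le (j+1), hε.le]
  have h2 := hga s hs
  calc |s ^ (j + 1) * ψd (lam * s + b) - g s|
      ≤ |s ^ (j + 1) * ψd (lam * s + b)
          - (1 / η) * (s ^ j * ψ ((lam + η) * s + b) - s ^ j * ψ (lam * s + b))|
        + |(1 / η) * (s ^ j * ψ ((lam + η) * s + b) - s ^ j * ψ (lam * s + b)) - g s| := by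
          have e : s ^ (j + 1) * ψd (lam * s + b) - g s
              = (s ^ (j + 1) * ψd (lam * s + b)
                - (1 / η) * (s ^ j * ψ ((lam + η) * s + b) - s ^ j * ψ (lam * s + b)))
              + ((1 / η) * (s ^ j * ψ ((lam + η) * s + b) - s ^ j * ψ (lam * s + b)) - g s) := by
            ring
          rw [e]; exact abs_add_le _ _
    _ ≤ ε / 2 + ε / 2 := by
        rw [abs_sub_comm] at key
        exact add_le_add key h2
    _ = ε := by ring







/-- Monomials `s` and `s^2` are in `Bset φ` when `φ` is continuous, bounded
and nonconstant. -/
lemma monomials_mem_Bset {φ : ℝ → ℝ} {Bφ : ℝ} (hφc : Continuous φ)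
    (hBφ : ∀ x, |φ x| ≤ Bφ) {u v : ℝ} (huv : φ u ≠ φ v) :
    (fun s : ℝ => s) ∈ Bset φ ∧ (fun s : ℝ => s ^ 2) ∈ Bset φ := by
  set d : ℝ := |φ u - φ v| with hd
  have hdpos : 0 < d := abs_pos.mpr (sub_ne_zero.mpr huv)
  -- continuity at u and v
  obtain ⟨δu, hδupos, hδu⟩ := Metric.continuousAt_iff.mp (hφc.continuousAt (x := u))
    (d / 4) (by positivity)
  obtain ⟨δv, hδvpos, hδv⟩ := Metric.continuousAt_iff.mp (hφc.continuousAt (x := v))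
    (d / 4) (by positivity)
  set r0 : ℝ := min (δu / 2) (δv / 2) with hr0
  have hr0pos : 0 < r0 := lt_min (by positivity) (by positivity)
  set ρ : ContDiffBump (0 : ℝ) := ⟨r0 / 2, r0, by positivity, by linarith⟩ with hρ
  set ψ : ℝ → ℝ := ρ.normed volume ⋆[ContinuousLinearMap.lsmul ℝ ℝ] φ with hψ
  have hρr : ρ.rOut = r0 := rfl
  -- ψ is smooth
  have hψsm : ContDiff ℝ (⊤ : ℕ∞) ψ :=
    HasCompactSupport.contDiff_convolution_left _ ρ.hasCompactSupport_normed
      ρ.contDiff_normed (hφc.locallyIntegrable)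
  have hψsm' : Differentiable ℝ ψ ∧ ContDiff ℝ (⊤ : ℕ∞) (deriv ψ) := by
    have := contDiff_infty_iff_deriv.mp hψsm
    exact ⟨this.1, this.2⟩
  have hψ'sm' : Differentiable ℝ (deriv ψ) ∧ ContDiff ℝ (⊤ : ℕ∞) (deriv (deriv ψ)) := by
    have := contDiff_infty_iff_deriv.mp hψsm'.2
    exact ⟨this.1, this.2⟩
  set ψ1 : ℝ → ℝ := deriv ψ with hψ1
  set ψ2 : ℝ → ℝ := deriv ψ1 with hψ2
  have hdψ : ∀ x, HasDerivAt ψ (ψ1 x) x := fun x => (hψsm'.1 x).hasDerivAt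
  have hdψ1 : ∀ x, HasDerivAt ψ1 (ψ2 x) x := fun x => (hψ'sm'.1 x).hasDerivAt
  have hψ1c : Continuous ψ1 := hψsm'.2.continuous
  have hψ2c : Continuous ψ2 := hψ'sm'.2.continuous
  -- ψ is bounded
  have hψb : ∀ x, |ψ x| ≤ Bφ := fun x => conv_bound hφc hBφ ρ x
  have hBφ0 : 0 ≤ Bφ := le_trans (abs_nonneg _) (hψb 0)
  -- ψ is nonconstant
  have hψuv : ψ u ≠ ψ v := by
    have hu : |ψ u - φ u| ≤ d / 4 := by
      apply conv_close hφc hBφ ρ u (by positivity)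
      intro y hy
      have : dist y u < δu := by
        rw [Real.dist_eq]
        calc |y - u| ≤ ρ.rOut := hy
          _ = r0 := hρr
          _ ≤ δu / 2 := min_le_left _ _
          _ < δu := by linarith
      exact le_of_lt (by simpa [Real.dist_eq] using hδu this)
    have hv : |ψ v - φ v| ≤ d / 4 := by
      apply conv_close hφc hBφ ρ v (by positivity)
      intro y hy
      have : dist y v < δv := by
        rw [Real.dist_eq]
        calc |y - v| ≤ ρ.rOut := hy
          _ = r0 := hρr
          _ ≤ δv / 2 := min_le_right _ _
          _ < δv := by linarith
      exact le_of_lt (by simpa [Real.dist_eq] using hδv this)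
    intro hcontra
    have : d ≤ d / 4 + d / 4 := by
      calc d = |φ u - φ v| := hd
        _ = |(φ u - ψ u) + (ψ u - ψ v) + (ψ v - φ v)| := by ring_nf
        _ ≤ |(φ u - ψ u) + (ψ u - ψ v)| + |ψ v - φ v| := abs_add_le _ _
        _ ≤ |φ u - ψ u| + |ψ u - ψ v| + |ψ v - φ v| := by
            have := abs_add_le (φ u - ψ u) (ψ u - ψ v)
            linarith
        _ = |φ u - ψ u| + 0 + |ψ v - φ v| := by rw [hcontra]; simp
        _ ≤ d / 4 + 0 + d / 4 := by
            rw [abs_sub_comm (φ u) (ψ u)]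
            exact add_le_add (add_le_add hu (le_refl 0)) hv
        _ = d / 4 + d / 4 := by ring
    linarith
  -- dilated translates of ψ are in Bset φ
  have hψB : ∀ lam b : ℝ, (fun s => ψ (lam * s + b)) ∈ Bset φ := by
    intro lam b
    apply Bset_affine _ lam b
    intro M ε hM hε
    exact conv_riemann hφc hBφ ρ M ε hM hε
  -- step 1: s * ψ1
  have H0 : ∀ lam b : ℝ, (fun s => s ^ 0 * ψ (lam * s + b)) ∈ Bset φ := by
    intro lam b
    have e : (fun s : ℝ => s ^ 0 * ψ (lam * s + b)) = fun s => ψ (lam * s + b) := by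
      funext s; simp
    rw [e]; exact hψB lam b
  have H1 := deriv_step hdψ hψ1c 0 H0
  have H2 := deriv_step hdψ1 hψ2c 1 H1
  -- nonvanishing of derivatives
  have hb₁ : ∃ b₁, ψ1 b₁ ≠ 0 := by
    by_contra hcon
    push_neg at hcon
    exact hψuv (is_const_of_deriv_eq_zero hψsm'.1 hcon u v)
  have hb₂ : ∃ b₂, ψ2 b₂ ≠ 0 := by
    by_contra hcon
    push_neg at hcon
    have hψ1const : ∀ x, ψ1 x = ψ1 0 := fun x =>
      is_const_of_deriv_eq_zero hψ'sm'.1 hcon x 0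
    set c₀ : ℝ := ψ1 0 with hc₀
    by_cases hc : c₀ = 0
    · exact hψuv (is_const_of_deriv_eq_zero hψsm'.1
        (fun x => by show ψ1 x = 0; rw [hψ1const x]; exact hc) u v)
    · -- ψ x = ψ 0 + c₀ x, contradicting boundedness
      have hlin : ∀ x, ψ x = ψ 0 + c₀ * x := by
        intro x
        have hg : ∀ z, HasDerivAt (fun w => ψ w - c₀ * w) (0 : ℝ) z := by
          intro z
          have h1 := (hdψ z).sub ((hasDerivAt_id z).const_mul c₀)
          have : ψ1 z - c₀ * 1 = 0 := by rw [hψ1const z]; ring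
          rwa [this] at h1
        have hgd : Differentiable ℝ (fun w => ψ w - c₀ * w) :=
          fun z => (hg z).differentiableAt
        have := is_const_of_deriv_eq_zero hgd (fun z => (hg z).deriv) x 0
        linarith [this]
      set x₀ : ℝ := (2 * Bφ + 1) / c₀ with hx₀
      have : ψ x₀ = ψ 0 + (2 * Bφ + 1) := by
        rw [hlin x₀, hx₀]; field_simp
      have h1 := hψb x₀; have h2 := hψb 0
      rw [abs_le] at h1 h2
      linarith [h1.1, h1.2, h2.1, h2.2, this]
  -- extract monomials
  obtain ⟨b₁, hb₁⟩ := hb₁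
  obtain ⟨b₂, hb₂⟩ := hb₂
  constructor
  · have h := Bset_smul (H1 0 b₁) (1 / ψ1 b₁)
    have e : (fun s => (1 / ψ1 b₁) * ((fun s => s ^ (0+1) * ψ1 (0 * s + b₁)) s))
        = fun s : ℝ => s := by
      funext s
      simp only [zero_mul, zero_add, pow_one]
      field_simp
    rwa [e] at h
  · have h := Bset_smul (H2 0 b₂) (1 / ψ2 b₂)
    have e : (fun s => (1 / ψ2 b₂) * ((fun s => s ^ (1+1) * ψ2 (0 * s + b₂)) s))
        = fun s : ℝ => s ^ 2 := by
      funext s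
      simp only [zero_mul, zero_add]
      field_simp
    rwa [e] at h







variable {φ : ℝ → ℝ} {n : ℕ}

lemma NN_submodule {l : ℕ} (hl : 1 ≤ l) :
    ∃ p : Submodule ℝ (E n → ℝ), NN φ n l = ↑p := by
  match l, hl with
  | 1, _ => exact ⟨_, rfl⟩
  | (l+2), _ => exact ⟨_, rfl⟩

lemma NN_zero_mem {l : ℕ} (hl : 1 ≤ l) : (0 : E n → ℝ) ∈ NN φ n l := by
  obtain ⟨p, hp⟩ := NN_submodule (φ := φ) (n := n) hl
  rw [hp]; exact p.zero_mem

lemma NN_add_mem {l : ℕ} (hl : 1 ≤ l) {f g : E n → ℝ}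
    (hf : f ∈ NN φ n l) (hg : g ∈ NN φ n l) : f + g ∈ NN φ n l := by
  obtain ⟨p, hp⟩ := NN_submodule (φ := φ) (n := n) hl
  rw [hp] at hf hg ⊢; exact p.add_mem hf hg

lemma NN_smul_mem {l : ℕ} (hl : 1 ≤ l) (c : ℝ) {f : E n → ℝ}
    (hf : f ∈ NN φ n l) : c • f ∈ NN φ n l := by
  obtain ⟨p, hp⟩ := NN_submodule (φ := φ) (n := n) hl
  rw [hp] at hf ⊢; exact p.smul_mem c hf

lemma span_bdd {α : Type*} {B : ℝ} (hB : 0 ≤ B) {S : Set (α → ℝ)}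
    (hS : ∀ g ∈ S, ∀ x, |g x| ≤ B) {f : α → ℝ}
    (hf : f ∈ Submodule.span ℝ S) : ∃ C, 0 ≤ C ∧ ∀ x, |f x| ≤ C := by
  induction hf using Submodule.span_induction with
  | mem g hg => exact ⟨B, hB, hS g hg⟩
  | zero => exact ⟨0, le_refl 0, fun x => by simp⟩
  | add x y hx hy ihx ihy =>
      obtain ⟨C₁, h1, h1'⟩ := ihx; obtain ⟨C₂, h2, h2'⟩ := ihy
      refine ⟨C₁ + C₂, by linarith, fun z => ?_⟩
      calc |(x + y) z| = |x z + y z| := rfl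
        _ ≤ |x z| + |y z| := abs_add_le _ _
        _ ≤ C₁ + C₂ := add_le_add (h1' z) (h2' z)
  | smul a x hx ihx =>
      obtain ⟨C, hC, hC'⟩ := ihx
      refine ⟨|a| * C, by positivity, fun z => ?_⟩
      calc |(a • x) z| = |a| * |x z| := by simp [abs_mul]
        _ ≤ |a| * C := mul_le_mul_of_nonneg_left (hC' z) (abs_nonneg a)

lemma NN_bdd {Bφ : ℝ} (hBφ : ∀ x, |φ x| ≤ Bφ) (l : ℕ) (f : E n → ℝ)
    (hf : f ∈ NN φ n l) : ∃ C, 0 ≤ C ∧ ∀ x, |f x| ≤ C := by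
  have hBφ0 : 0 ≤ Bφ := le_trans (abs_nonneg _) (hBφ 0)
  rcases l with _ | l
  · rw [NN, Set.mem_singleton_iff] at hf
    exact ⟨0, le_refl 0, fun x => by rw [hf]; simp⟩
  rcases l with _ | l
  · exact span_bdd hBφ0 (fun g hg x => by
      obtain ⟨a, b, rfl⟩ := hg; exact hBφ _) hf
  · exact span_bdd hBφ0 (fun g hg x => by
      obtain ⟨g₀, _, b, rfl⟩ := hg; exact hBφ _) hf

/-- composition of an `S1` element with a level-`l` network is a level-`l+1` network -/
lemma comp_mem {l : ℕ} (hl : 1 ≤ l) {F : E n → ℝ} (hF : F ∈ NN φ n l)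
    {g : ℝ → ℝ} (hg : g ∈ S1 φ) : (fun x => g (F x)) ∈ NN φ n (l + 1) := by
  obtain ⟨m, rfl⟩ : ∃ m, l = m + 1 := ⟨l - 1, (Nat.succ_pred_eq_of_pos hl).symm⟩
  show (fun x => g (F x)) ∈ NN φ n (m + 2)
  induction hg using Submodule.span_induction with
  | mem g₁ hg₁ =>
      obtain ⟨lam, b, rfl⟩ := hg₁
      apply Submodule.subset_span
      refine ⟨lam • F, NN_smul_mem hl lam hF, b, ?_⟩
      funext x; simp [Pi.smul_apply, smul_eq_mul]
  | zero => exact Submodule.zero_mem _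
  | add x y hx hy ihx ihy => exact Submodule.add_mem _ ihx ihy
  | smul a x hx ihx => exact Submodule.smul_mem _ a ihx

/-- level lifting: any network can be approximated at the next level
(given that `id ∈ Bset φ`). -/
lemma NN_lift {Bφ : ℝ} (hBφ : ∀ x, |φ x| ≤ Bφ) (hid : (fun s : ℝ => s) ∈ Bset φ)
    {l : ℕ} (hl : 1 ≤ l) {F : E n → ℝ} (hF : F ∈ NN φ n l) {ε : ℝ} (hε : 0 < ε) :
    ∃ F' ∈ NN φ n (l + 1), ∀ x, |F x - F' x| ≤ ε := by
  obtain ⟨C, hC0, hC⟩ := NN_bdd hBφ l F hF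
  obtain ⟨g, hg, hga⟩ := hid (C + 1) ε (by positivity) hε
  refine ⟨fun x => g (F x), comp_mem hl hF hg, fun x => ?_⟩
  exact hga (F x) (le_trans (hC x) (by linarith))

lemma NN_liftTo {Bφ : ℝ} (hBφ : ∀ x, |φ x| ≤ Bφ) (hid : (fun s : ℝ => s) ∈ Bset φ)
    {l : ℕ} (hl : 1 ≤ l) {F : E n → ℝ} (hF : F ∈ NN φ n l) (L : ℕ) (hL : l ≤ L) :
    ∀ ε : ℝ, 0 < ε → ∃ F' ∈ NN φ n L, ∀ x, |F x - F' x| ≤ ε := by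
  induction L, hL using Nat.le_induction with
  | base => exact fun ε hε => ⟨F, hF, fun x => by simp [abs_nonneg, hε.le]⟩
  | succ L hlL ih =>
      intro ε hε
      obtain ⟨G, hG, hGa⟩ := ih (ε / 2) (by positivity)
      obtain ⟨F', hF', hF'a⟩ := NN_lift hBφ hid (le_trans hl hlL) hG (by positivity : (0:ℝ) < ε / 2)
      refine ⟨F', hF', fun x => ?_⟩
      calc |F x - F' x| = |(F x - G x) + (G x - F' x)| := by ring_nf
        _ ≤ |F x - G x| + |G x - F' x| := abs_add_le _ _
        _ ≤ ε / 2 + ε / 2 := add_le_add (hGa x) (hF'a x)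
        _ = ε := by ring

/-- common-level approximation property -/
def KeyA (φ : ℝ → ℝ) (n : ℕ) : Prop :=
  ∀ f g : E n → ℝ, f ∈ NNinf φ n → g ∈ NNinf φ n → ∀ ε : ℝ, 0 < ε →
    ∃ L, 1 ≤ L ∧ ∃ F ∈ NN φ n L, ∃ G ∈ NN φ n L,
      (∀ x, |f x - F x| ≤ ε) ∧ (∀ x, |g x - G x| ≤ ε)

/-- approximate products -/
def KeyB (φ : ℝ → ℝ) (n : ℕ) : Prop :=
  ∀ L : ℕ, 1 ≤ L → ∀ F ∈ NN φ n L, ∀ G ∈ NN φ n L, ∀ ε : ℝ, 0 < ε →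
    ∃ P ∈ NNinf φ n, ∀ x, |F x * G x - P x| ≤ ε

lemma keyA_noncst {Bφ : ℝ} (hBφ : ∀ x, |φ x| ≤ Bφ)
    (hid : (fun s : ℝ => s) ∈ Bset φ) : KeyA φ n := by
  rintro f g ⟨l₁, hl₁, hf⟩ ⟨l₂, hl₂, hg⟩ ε hε
  refine ⟨max l₁ l₂, le_trans hl₁ (le_max_left _ _), ?_⟩
  obtain ⟨F, hF, hFa⟩ := NN_liftTo hBφ hid hl₁ hf (max l₁ l₂) (le_max_left _ _) ε hε
  obtain ⟨G, hG, hGa⟩ := NN_liftTo hBφ hid hl₂ hg (max l₁ l₂) (le_max_right _ _) ε hε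
  exact ⟨F, hF, G, hG, hFa, hGa⟩

lemma keyB_noncst {Bφ : ℝ} (hBφ : ∀ x, |φ x| ≤ Bφ)
    (hsq : (fun s : ℝ => s ^ 2) ∈ Bset φ) : KeyB φ n := by
  intro L hL F hF G hG ε hε
  obtain ⟨C₁, hC₁0, hC₁⟩ := NN_bdd hBφ L F hF
  obtain ⟨C₂, hC₂0, hC₂⟩ := NN_bdd hBφ L G hG
  set M : ℝ := C₁ + C₂ + 1 with hM
  have hMpos : 0 < M := by positivity
  obtain ⟨h, hh, hha⟩ := hsq M (ε / 2) hMpos (by positivity)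
  -- P = (h∘(F+G) - h∘F - h∘G)/2
  have m1 : (fun x => h ((F + G) x)) ∈ NN φ n (L + 1) :=
    comp_mem hL (NN_add_mem hL hF hG) hh
  have m2 : (fun x => h (F x)) ∈ NN φ n (L + 1) := comp_mem hL hF hh
  have m3 : (fun x => h (G x)) ∈ NN φ n (L + 1) := comp_mem hL hG hh
  set P : E n → ℝ := (1/2 : ℝ) • ((fun x => h ((F + G) x)) + (-1 : ℝ) • (fun x => h (F x))
      + (-1 : ℝ) • (fun x => h (G x))) with hP
  have hPmem : P ∈ NN φ n (L + 1) := by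
    apply NN_smul_mem (by linarith)
    exact NN_add_mem (by linarith) (NN_add_mem (by linarith) m1 (NN_smul_mem (by linarith) _ m2))
      (NN_smul_mem (by linarith) _ m3)
  refine ⟨P, ⟨L + 1, by linarith, hPmem⟩, fun x => ?_⟩
  have e1 : |(F x + G x) ^ 2 - h (F x + G x)| ≤ ε / 2 := by
    apply hha
    calc |F x + G x| ≤ |F x| + |G x| := abs_add_le _ _
      _ ≤ C₁ + C₂ := add_le_add (hC₁ x) (hC₂ x)
      _ ≤ M := by rw [hM]; linarith
  have e2 : |(F x) ^ 2 - h (F x)| ≤ ε / 2 := hha _ (by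
    calc |F x| ≤ C₁ := hC₁ x
      _ ≤ M := by rw [hM]; linarith)
  have e3 : |(G x) ^ 2 - h (G x)| ≤ ε / 2 := hha _ (by
    calc |G x| ≤ C₂ := hC₂ x
      _ ≤ M := by rw [hM]; linarith)
  have hPx : P x = (1/2) * (h (F x + G x) - h (F x) - h (G x)) := by
    rw [hP]; simp [Pi.smul_apply, Pi.add_apply, smul_eq_mul]; ring
  have hid2 : F x * G x = (1/2) * ((F x + G x) ^ 2 - (F x) ^ 2 - (G x) ^ 2) := by ring
  rw [hPx, hid2]
  have : (1/2) * ((F x + G x) ^ 2 - (F x) ^ 2 - (G x) ^ 2)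
      - (1/2) * (h (F x + G x) - h (F x) - h (G x))
      = (1/2) * (((F x + G x) ^ 2 - h (F x + G x)) - ((F x) ^ 2 - h (F x))
          - ((G x) ^ 2 - h (G x))) := by ring
  rw [this]
  rw [abs_mul, abs_of_pos (by norm_num : (0:ℝ) < 1/2)]
  have habs : |((F x + G x) ^ 2 - h (F x + G x)) - ((F x) ^ 2 - h (F x))
      - ((G x) ^ 2 - h (G x))| ≤ ε / 2 + ε / 2 + ε / 2 := by
    calc |((F x + G x) ^ 2 - h (F x + G x)) - ((F x) ^ 2 - h (F x)) - ((G x) ^ 2 - h (G x))|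
        ≤ |((F x + G x) ^ 2 - h (F x + G x)) - ((F x) ^ 2 - h (F x))|
          + |(G x) ^ 2 - h (G x)| := abs_sub _ _
      _ ≤ |(F x + G x) ^ 2 - h (F x + G x)| + |(F x) ^ 2 - h (F x)|
          + |(G x) ^ 2 - h (G x)| := by
            have := abs_sub ((F x + G x) ^ 2 - h (F x + G x)) ((F x) ^ 2 - h (F x))
            linarith
      _ ≤ ε / 2 + ε / 2 + ε / 2 := by
            exact add_le_add (add_le_add e1 e2) e3
  calc (1/2) * |((F x + G x) ^ 2 - h (F x + G x)) - ((F x) ^ 2 - h (F x))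
      - ((G x) ^ 2 - h (G x))| ≤ (1/2) * (ε / 2 + ε / 2 + ε / 2) := by linarith
    _ ≤ ε := by linarith

-- constant case
lemma const_mem (hcst : ∀ x y : ℝ, φ x = φ y) {l : ℕ} (hl : 1 ≤ l) (t : ℝ) :
    (fun _ : E n => t * φ 0) ∈ NN φ n l := by
  rcases l with _ | l
  · omega
  rcases l with _ | l
  · have : (fun _ : E n => t * φ 0)
        = t • (fun x : E n => φ ((inner ℝ (0 : E n) x : ℝ) + 0)) := by
      funext x; simp [Pi.smul_apply, smul_eq_mul, hcst (inner ℝ (0 : E n) x + 0) 0]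
    rw [this]
    exact Submodule.smul_mem _ t (Submodule.subset_span ⟨0, 0, rfl⟩)
  · have : (fun _ : E n => t * φ 0)
        = t • (fun x : E n => φ ((0 : E n → ℝ) x + 0)) := by
      funext x; simp [Pi.smul_apply, smul_eq_mul, hcst ((0 : E n → ℝ) x + 0) 0]
    rw [this]
    exact Submodule.smul_mem _ t
      (Submodule.subset_span ⟨0, NN_zero_mem (by omega), 0, rfl⟩)

lemma const_char (hcst : ∀ x y : ℝ, φ x = φ y) {l : ℕ} (hl : 1 ≤ l)
    {f : E n → ℝ} (hf : f ∈ NN φ n l) : ∃ t : ℝ, f = fun _ => t * φ 0 := by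
  have key : ∀ (S : Set (E n → ℝ)), (∀ g ∈ S, ∃ t : ℝ, g = fun _ => t * φ 0) →
      ∀ f ∈ Submodule.span ℝ S, ∃ t : ℝ, f = fun _ => t * φ 0 := by
    intro S hS f hf
    induction hf using Submodule.span_induction with
    | mem g hg => exact hS g hg
    | zero => exact ⟨0, by funext x; simp⟩
    | add x y hx hy ihx ihy =>
        obtain ⟨t₁, rfl⟩ := ihx; obtain ⟨t₂, rfl⟩ := ihy
        exact ⟨t₁ + t₂, by funext x; simp [Pi.add_apply]; ring⟩
    | smul a x hx ihx =>
        obtain ⟨t, rfl⟩ := ihx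
        exact ⟨a * t, by funext x; simp [Pi.smul_apply, smul_eq_mul]; ring⟩
  rcases l with _ | l
  · omega
  rcases l with _ | l
  · exact key _ (fun g hg => by
      obtain ⟨a, b, rfl⟩ := hg
      exact ⟨1, by funext x; rw [one_mul, hcst ((inner ℝ a x : ℝ) + b) 0]⟩) f hf
  · exact key _ (fun g hg => by
      obtain ⟨g₀, _, b, rfl⟩ := hg
      exact ⟨1, by funext x; rw [one_mul, hcst (g₀ x + b) 0]⟩) f hf

lemma keyA_cst (hcst : ∀ x y : ℝ, φ x = φ y) : KeyA φ n := by
  rintro f g ⟨l₁, hl₁, hf⟩ ⟨l₂, hl₂, hg⟩ ε hε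
  obtain ⟨t₁, rfl⟩ := const_char hcst hl₁ hf
  obtain ⟨t₂, rfl⟩ := const_char hcst hl₂ hg
  exact ⟨1, le_refl 1, _, const_mem hcst (le_refl 1) t₁, _, const_mem hcst (le_refl 1) t₂,
    fun x => by simp [hε.le], fun x => by simp [hε.le]⟩

lemma keyB_cst (hcst : ∀ x y : ℝ, φ x = φ y) : KeyB φ n := by
  intro L hL F hF G hG ε hε
  obtain ⟨t₁, rfl⟩ := const_char hcst hL hF
  obtain ⟨t₂, rfl⟩ := const_char hcst hL hG
  refine ⟨fun _ => (t₁ * φ 0 * t₂) * φ 0, ⟨1, le_refl 1, const_mem hcst (le_refl 1) _⟩,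
    fun x => ?_⟩
  have : t₁ * φ 0 * (t₂ * φ 0) - t₁ * φ 0 * t₂ * φ 0 = 0 := by ring
  rw [this, abs_zero]; exact hε.le

lemma UC_bdd {Bφ : ℝ} (hBφ : ∀ x, |φ x| ≤ Bφ) {f : E n → ℝ}
    (hf : f ∈ UnifClosure (NNinf φ n)) : ∃ C, 0 ≤ C ∧ ∀ x, |f x| ≤ C := by
  obtain ⟨F, ⟨l, hl, hF⟩, hFa⟩ := hf 1 one_pos
  obtain ⟨C, hC0, hC⟩ := NN_bdd hBφ l F hF
  refine ⟨C + 1, by linarith, fun x => ?_⟩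
  calc |f x| = |(f x - F x) + F x| := by ring_nf
    _ ≤ |f x - F x| + |F x| := abs_add_le _ _
    _ ≤ 1 + C := add_le_add (hFa x) (hC x)
    _ = C + 1 := by ring

/-- final assembly: given the two key properties, the closure is an algebra -/
lemma assembly {Bφ : ℝ} (hBφ : ∀ x, |φ x| ≤ Bφ) (kA : KeyA φ n) (kB : KeyB φ n) :
    (∀ f g : E n → ℝ, f ∈ UnifClosure (NNinf φ n) → g ∈ UnifClosure (NNinf φ n) →
      (fun x => f x + g x) ∈ UnifClosure (NNinf φ n)) ∧
    (∀ (c : ℝ) (f : E n → ℝ), f ∈ UnifClosure (NNinf φ n) →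
      (fun x => c * f x) ∈ UnifClosure (NNinf φ n)) ∧
    (∀ f g : E n → ℝ, f ∈ UnifClosure (NNinf φ n) → g ∈ UnifClosure (NNinf φ n) →
      (fun x => f x * g x) ∈ UnifClosure (NNinf φ n)) := by
  refine ⟨?_, ?_, ?_⟩
  · -- addition
    intro f g hf hg ε hε
    obtain ⟨F₀, hF₀, hF₀a⟩ := hf (ε / 4) (by positivity)
    obtain ⟨G₀, hG₀, hG₀a⟩ := hg (ε / 4) (by positivity)
    obtain ⟨L, hL, F, hF, G, hG, hFa, hGa⟩ := kA F₀ G₀ hF₀ hG₀ (ε / 4) (by positivity)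
    refine ⟨F + G, ⟨L, hL, NN_add_mem hL hF hG⟩, fun x => ?_⟩
    have : f x + g x - (F + G) x
        = (f x - F₀ x) + (F₀ x - F x) + ((g x - G₀ x) + (G₀ x - G x)) := by
      simp [Pi.add_apply]; ring
    rw [this]
    calc |(f x - F₀ x) + (F₀ x - F x) + ((g x - G₀ x) + (G₀ x - G x))|
        ≤ |(f x - F₀ x) + (F₀ x - F x)| + |(g x - G₀ x) + (G₀ x - G x)| := abs_add_le _ _
      _ ≤ (|f x - F₀ x| + |F₀ x - F x|) + (|g x - G₀ x| + |G₀ x - G x|) :=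
            add_le_add (abs_add_le _ _) (abs_add_le _ _)
      _ ≤ (ε / 4 + ε / 4) + (ε / 4 + ε / 4) := by
            exact add_le_add (add_le_add (hF₀a x) (hFa x)) (add_le_add (hG₀a x) (hGa x))
      _ = ε := by ring
  · -- scalar multiplication
    intro c f hf ε hε
    obtain ⟨F, ⟨l, hl, hF⟩, hFa⟩ := hf (ε / (|c| + 1)) (by positivity)
    refine ⟨c • F, ⟨l, hl, NN_smul_mem hl c hF⟩, fun x => ?_⟩
    have : c * f x - (c • F) x = c * (f x - F x) := by simp [Pi.smul_apply]; ring
    rw [this, abs_mul]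
    calc |c| * |f x - F x| ≤ (|c| + 1) * (ε / (|c| + 1)) := by
          apply mul_le_mul (by linarith) (hFa x) (abs_nonneg _) (by positivity)
      _ = ε := by field_simp
  · -- multiplication
    intro f g hf hg ε hε
    obtain ⟨C₁, hC₁0, hC₁⟩ := UC_bdd hBφ hf
    obtain ⟨C₂, hC₂0, hC₂⟩ := UC_bdd hBφ hg
    set C : ℝ := C₁ + C₂ + 1 with hC
    have hCpos : 0 < C := by positivity
    set ε' : ℝ := min 1 (ε / (3 * C + 3)) with hε'
    have hε'pos : 0 < ε' := lt_min one_pos (by positivity)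
    have hε'1 : ε' ≤ 1 := min_le_left _ _
    have hε'2 : ε' ≤ ε / (3 * C + 3) := min_le_right _ _
    obtain ⟨F₀, hF₀, hF₀a⟩ := hf (ε' / 2) (by positivity)
    obtain ⟨G₀, hG₀, hG₀a⟩ := hg (ε' / 2) (by positivity)
    obtain ⟨L, hL, F, hF, G, hG, hFa, hGa⟩ := kA F₀ G₀ hF₀ hG₀ (ε' / 2) (by positivity)
    have hfF : ∀ x, |f x - F x| ≤ ε' := fun x => by
      calc |f x - F x| = |(f x - F₀ x) + (F₀ x - F x)| := by ring_nf
        _ ≤ |f x - F₀ x| + |F₀ x - F x| := abs_add_le _ _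
        _ ≤ ε' / 2 + ε' / 2 := add_le_add (hF₀a x) (hFa x)
        _ = ε' := by ring
    have hgG : ∀ x, |g x - G x| ≤ ε' := fun x => by
      calc |g x - G x| = |(g x - G₀ x) + (G₀ x - G x)| := by ring_nf
        _ ≤ |g x - G₀ x| + |G₀ x - G x| := abs_add_le _ _
        _ ≤ ε' / 2 + ε' / 2 := add_le_add (hG₀a x) (hGa x)
        _ = ε' := by ring
    have hGbd : ∀ x, |G x| ≤ C₂ + 1 := fun x => by
      calc |G x| = |(G x - g x) + g x| := by ring_nf
        _ ≤ |G x - g x| + |g x| := abs_add_le _ _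
        _ ≤ ε' + C₂ := add_le_add (by rw [abs_sub_comm]; exact hgG x) (hC₂ x)
        _ ≤ C₂ + 1 := by linarith
    obtain ⟨P, hP, hPa⟩ := kB L hL F hF G hG ε' hε'pos
    refine ⟨P, hP, fun x => ?_⟩
    have key : |f x * g x - F x * G x| ≤ C₁ * ε' + (C₂ + 1) * ε' := by
      have : f x * g x - F x * G x = f x * (g x - G x) + G x * (f x - F x) := by ring
      rw [this]
      calc |f x * (g x - G x) + G x * (f x - F x)|
          ≤ |f x * (g x - G x)| + |G x * (f x - F x)| := abs_add_le _ _
        _ = |f x| * |g x - G x| + |G x| * |f x - F x| := by rw [abs_mul, abs_mul]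
        _ ≤ C₁ * ε' + (C₂ + 1) * ε' := by
              apply add_le_add
              · exact mul_le_mul (hC₁ x) (hgG x) (abs_nonneg _) hC₁0
              · exact mul_le_mul (hGbd x) (hfF x) (abs_nonneg _) (by linarith)
    calc |f x * g x - P x| = |(f x * g x - F x * G x) + (F x * G x - P x)| := by ring_nf
      _ ≤ |f x * g x - F x * G x| + |F x * G x - P x| := abs_add_le _ _
      _ ≤ (C₁ * ε' + (C₂ + 1) * ε') + ε' := add_le_add key (hPa x)
      _ ≤ (3 * C + 3) * ε' := by nlinarith
      _ ≤ (3 * C + 3) * (ε / (3 * C + 3)) := by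
            apply mul_le_mul_of_nonneg_left hε'2 (by positivity)
      _ = ε := by field_simp


lemma bounded_of_limits {φ : ℝ → ℝ} (hφc : Continuous φ)
    (h₁ : ∃ L₁ : ℝ, Tendsto φ atBot (𝓝 L₁)) (h₂ : ∃ L₂ : ℝ, Tendsto φ atTop (𝓝 L₂)) :
    ∃ B : ℝ, ∀ x, |φ x| ≤ B := by
  obtain ⟨L₁, h1⟩ := h₁
  obtain ⟨L₂, h2⟩ := h₂
  have e1 : ∀ᶠ x in atBot, dist (φ x) L₁ < 1 := Metric.tendsto_nhds.mp h1 1 one_pos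
  have e2 : ∀ᶠ x in atTop, dist (φ x) L₂ < 1 := Metric.tendsto_nhds.mp h2 1 one_pos
  rw [Filter.eventually_atBot] at e1
  rw [Filter.eventually_atTop] at e2
  obtain ⟨a, ha⟩ := e1
  obtain ⟨b, hb⟩ := e2
  obtain ⟨C, hC⟩ := (isCompact_Icc (a := a) (b := b)).exists_bound_of_continuousOn
    hφc.continuousOn
  refine ⟨max C (max (|L₁| + 1) (|L₂| + 1)), fun x => ?_⟩
  rcases le_or_gt x a with hxa | hxa
  · have := ha x hxa
    rw [Real.dist_eq] at this
    have : |φ x| ≤ |L₁| + 1 := by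
      calc |φ x| = |(φ x - L₁) + L₁| := by ring_nf
        _ ≤ |φ x - L₁| + |L₁| := abs_add_le _ _
        _ ≤ |L₁| + 1 := by linarith
    exact le_trans this (le_trans (le_max_left _ _) (le_max_right _ _))
  rcases le_or_gt b x with hbx | hbx
  · have := hb x hbx
    rw [Real.dist_eq] at this
    have : |φ x| ≤ |L₂| + 1 := by
      calc |φ x| = |(φ x - L₂) + L₂| := by ring_nf
        _ ≤ |φ x - L₂| + |L₂| := abs_add_le _ _
        _ ≤ |L₂| + 1 := by linarith
    exact le_trans this (le_trans (le_max_right _ _) (le_max_right _ _))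
  · have hx : x ∈ Icc a b := ⟨hxa.le, hbx.le⟩
    have := hC x hx
    rw [Real.norm_eq_abs] at this
    exact le_trans this (le_max_left _ _)

end Stmt4Aux

/-- If `φ` is continuous with finite limits at `±∞`, then the uniform closure
of `N^∞_φ(ℝⁿ)` is an algebra under the pointwise operations; in particular it
is closed under pointwise products. -/
theorem stmt4 (n : ℕ) (hn : 1 ≤ n) (φ : ℝ → ℝ) (hφc : Continuous φ)
    (h₁ : ∃ L₁ : ℝ, Tendsto φ atBot (𝓝 L₁))
    (h₂ : ∃ L₂ : ℝ, Tendsto φ atTop (𝓝 L₂)) :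
    (∀ f g : E n → ℝ, f ∈ UnifClosure (NNinf φ n) → g ∈ UnifClosure (NNinf φ n) →
      (fun x => f x + g x) ∈ UnifClosure (NNinf φ n)) ∧
    (∀ (c : ℝ) (f : E n → ℝ), f ∈ UnifClosure (NNinf φ n) →
      (fun x => c * f x) ∈ UnifClosure (NNinf φ n)) ∧
    (∀ f g : E n → ℝ, f ∈ UnifClosure (NNinf φ n) → g ∈ UnifClosure (NNinf φ n) →
      (fun x => f x * g x) ∈ UnifClosure (NNinf φ n)) := by
  obtain ⟨Bφ, hBφ⟩ := Stmt4Aux.bounded_of_limits hφc h₁ h₂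
  by_cases hcst : ∀ x y : ℝ, φ x = φ y
  · exact Stmt4Aux.assembly hBφ (Stmt4Aux.keyA_cst hcst) (Stmt4Aux.keyB_cst hcst)
  · push_neg at hcst
    obtain ⟨u, v, huv⟩ := hcst
    obtain ⟨hid, hsq⟩ := Stmt4Aux.monomials_mem_Bset hφc hBφ huv
    exact Stmt4Aux.assembly hBφ (Stmt4Aux.keyA_noncst hBφ hid) (Stmt4Aux.keyB_noncst hBφ hsq)
end
end

section
/- Let g : ℝ → ℝ be continuous with compact support, and define f : ℝ² → ℝ by f(x,y) := ∫₀^{2π} g(x cos θ + y sin θ) dθ. Then f ∈ C₀(ℝ²). If moreover ∫_ℝ g(x) dx = 0, then there exists a constant C ∈ ℝ such that |f(x,y)| ≤ C / (1 + ‖(x,y)‖³) for all (x,y) ∈ ℝ², where ‖(x,y)‖ = √(x² + y²). -/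
open Filter Topology MeasureTheory Real Set

noncomputable section

lemma rot_inv (g : ℝ → ℝ) (x y : ℝ) :
    (∫ θ in (0:ℝ)..(2*π), g (x * Real.cos θ + y * Real.sin θ))
      = ∫ θ in (0:ℝ)..(2*π), g (Real.sqrt (x^2+y^2) * Real.cos θ) := by
  by_cases h0 : x = 0 ∧ y = 0
  · simp [h0.1, h0.2]
  · set z : ℂ := ⟨x, y⟩ with hz
    have hzne : z ≠ 0 := by
      intro h
      rw [Complex.ext_iff] at h
      simp only [hz, Complex.zero_re, Complex.zero_im] at h
      exact h0 h
    set r := Real.sqrt (x^2+y^2) with hrdef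
    have habs : ‖z‖ = r := by
      rw [Complex.norm_def, Complex.normSq_mk]; ring_nf
      rfl
    have hrpos : 0 < r := by
      rw [← habs]; exact (norm_pos_iff.mpr hzne)
    set φ := z.arg with hφ
    have hcos : x = r * Real.cos φ := by
      rw [Complex.cos_arg hzne, habs]
      field_simp
      rfl
    have hsin : y = r * Real.sin φ := by
      rw [Complex.sin_arg, habs]
      field_simp
      rfl
    have hper : Function.Periodic (fun θ => g (r * Real.cos θ)) (2*π) := by
      intro t; simp [Real.cos_add_two_pi]
    have key : ∀ θ : ℝ, x * Real.cos θ + y * Real.sin θ = r * Real.cos (θ - φ) := by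
      intro θ
      rw [Real.cos_sub, hcos, hsin]; ring
    calc (∫ θ in (0:ℝ)..(2*π), g (x * Real.cos θ + y * Real.sin θ))
        = ∫ θ in (0:ℝ)..(2*π), g (r * Real.cos (θ - φ)) := by
          simp only [key]
      _ = ∫ θ in (0-φ:ℝ)..(2*π-φ), g (r * Real.cos θ) := by
          exact (intervalIntegral.integral_comp_sub_right (fun t => g (r * Real.cos t)) φ).symm ▸ rfl
      _ = ∫ θ in (0:ℝ)..(2*π), g (r * Real.cos θ) := by
          have := hper.intervalIntegral_add_eq (-φ) 0
          simpa [sub_eq_neg_add, add_comm] using this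

lemma Gcont (g : ℝ → ℝ) (hg : Continuous g) {R r : ℝ} (hR : 0 < R)
    (hsupp : ∀ u, R ≤ |u| → g u = 0) (hr : R < r) :
    Continuous (fun u => g u / Real.sqrt (r^2 - u^2)) := by
  rw [continuous_iff_continuousAt]
  intro u
  by_cases h : u^2 < r^2
  · exact ContinuousAt.div hg.continuousAt
      ((Real.continuous_sqrt.comp (continuous_const.sub (continuous_pow 2))).continuousAt)
      (ne_of_gt (Real.sqrt_pos.2 (by linarith)))
  · have hu : R < |u| := by
      push_neg at h
      have : r ≤ |u| := by nlinarith [sq_abs u, abs_nonneg u, hR.trans hr]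
      linarith
    have hopen : IsOpen {v : ℝ | R < |v|} := isOpen_lt continuous_const continuous_abs
    have hev : (fun u => g u / Real.sqrt (r^2 - u^2)) =ᶠ[nhds u] (fun _ => (0:ℝ)) := by
      filter_upwards [hopen.mem_nhds hu] with v hv
      simp [hsupp v (le_of_lt hv)]
    exact ContinuousAt.congr continuousAt_const hev.symm

lemma subst_lemma (g : ℝ → ℝ) (hg : Continuous g) {R r : ℝ} (hR : 0 < R)
    (hsupp : ∀ u, R ≤ |u| → g u = 0) (hr : R < r) :
    (∫ θ in (0:ℝ)..(2*π), g (r * Real.cos θ))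
      = 2 * ∫ u in (-R:ℝ)..R, g u / Real.sqrt (r^2 - u^2) := by
  have hrpos : 0 < r := hR.trans hr
  set G : ℝ → ℝ := fun u => g u / Real.sqrt (r^2 - u^2) with hGdef
  have hGcont : Continuous G := Gcont g hg hR hsupp hr
  have hderiv : ∀ θ ∈ uIcc (0:ℝ) (2*π), HasDerivAt (fun t => r * Real.cos t) (-(r * Real.sin θ)) θ := by
    intro θ _
    simpa [mul_neg] using (Real.hasDerivAt_cos θ).const_mul r
  have hd'cont : Continuous (fun θ => -(r * Real.sin θ)) := by continuity
  -- square root simplification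
  have hsq : ∀ θ : ℝ, Real.sqrt (r^2 - (r * Real.cos θ)^2) = r * |Real.sin θ| := by
    intro θ
    have h1 : r^2 - (r * Real.cos θ)^2 = (r * Real.sin θ)^2 := by
      have := Real.sin_sq_add_cos_sq θ
      nlinarith
    rw [h1, Real.sqrt_sq_eq_abs, abs_mul, abs_of_pos hrpos]
  have hgzero : ∀ θ : ℝ, Real.sin θ = 0 → g (r * Real.cos θ) = 0 := by
    intro θ hθ
    apply hsupp
    have h2 : |r * Real.cos θ| = r := by
      rcases sq_eq_one_iff.mp (show Real.cos θ ^ 2 = 1 by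
        nlinarith [Real.sin_sq_add_cos_sq θ]) with h | h <;>
        simp [h, abs_of_pos hrpos]
    linarith [hr.le, h2.ge]
  -- first half [0, π]
  have h1 : (∫ θ in (0:ℝ)..π, g (r * Real.cos θ)) = ∫ u in (-r:ℝ)..r, G u := by
    have hcv := intervalIntegral.integral_comp_smul_deriv
      (f := fun t => r * Real.cos t) (f' := fun θ => -(r * Real.sin θ)) (g := G)
      (a := 0) (b := π)
      (fun θ _ => by simpa [mul_neg] using (Real.hasDerivAt_cos θ).const_mul r)
      hd'cont.continuousOn hGcont
    have heq : EqOn (fun θ => (-(r * Real.sin θ)) • G (r * Real.cos θ))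
        (fun θ => -(g (r * Real.cos θ))) (uIcc (0:ℝ) π) := by
      intro θ hθ
      rw [uIcc_of_le Real.pi_pos.le] at hθ
      have hs : 0 ≤ Real.sin θ := Real.sin_nonneg_of_nonneg_of_le_pi hθ.1 hθ.2
      rcases eq_or_lt_of_le hs with hs0 | hs0
      · simp [hGdef, ← hs0, hgzero θ hs0.symm]
      · simp only [hGdef, smul_eq_mul, hsq θ, abs_of_pos hs0]
        field_simp
    have := intervalIntegral.integral_congr (μ := volume) heq
    simp only [Function.comp] at hcv
    rw [this] at hcv
    simp only [Real.cos_zero, Real.cos_pi, mul_one, mul_neg_one] at hcv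
    rw [intervalIntegral.integral_neg] at hcv
    have := neg_eq_iff_eq_neg.mp hcv
    rw [this, intervalIntegral.integral_symm]
    ring
  -- second half [π, 2π]
  have h2 : (∫ θ in π..(2*π), g (r * Real.cos θ)) = ∫ u in (-r:ℝ)..r, G u := by
    have hcv := intervalIntegral.integral_comp_smul_deriv
      (f := fun t => r * Real.cos t) (f' := fun θ => -(r * Real.sin θ)) (g := G)
      (a := π) (b := 2*π)
      (fun θ _ => by simpa [mul_neg] using (Real.hasDerivAt_cos θ).const_mul r)
      hd'cont.continuousOn hGcont
    have heq : EqOn (fun θ => (-(r * Real.sin θ)) • G (r * Real.cos θ))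
        (fun θ => g (r * Real.cos θ)) (uIcc π (2*π)) := by
      intro θ hθ
      rw [uIcc_of_le (by linarith [Real.pi_pos])] at hθ
      have hs : Real.sin θ ≤ 0 := by
        have h3 : 0 ≤ Real.sin (θ - π) := by
          apply Real.sin_nonneg_of_nonneg_of_le_pi <;> [linarith [hθ.1]; linarith [hθ.2]]
        rw [Real.sin_sub_pi] at h3
        linarith
      rcases eq_or_lt_of_le hs with hs0 | hs0
      · simp [hGdef, hs0, hgzero θ hs0]
      · simp only [hGdef, smul_eq_mul, hsq θ, abs_of_neg hs0]
        have hne : r * Real.sin θ ≠ 0 := (mul_neg_of_pos_of_neg hrpos hs0).ne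
        field_simp
        rw [mul_div_cancel_left₀ _ hs0.ne]
    have := intervalIntegral.integral_congr (μ := volume) heq
    simp only [Function.comp] at hcv
    rw [this] at hcv
    simpa [Real.cos_two_pi, Real.cos_pi] using hcv
  have hint : ∀ a b : ℝ, IntervalIntegrable (fun θ => g (r * Real.cos θ)) volume a b :=
    fun a b => (hg.comp (continuous_const.mul Real.continuous_cos)).intervalIntegrable a b
  have hsplit : (∫ θ in (0:ℝ)..(2*π), g (r * Real.cos θ))
      = (∫ θ in (0:ℝ)..π, g (r * Real.cos θ)) + ∫ θ in π..(2*π), g (r * Real.cos θ) :=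
    (intervalIntegral.integral_add_adjacent_intervals (hint 0 π) (hint π (2*π))).symm
  -- shrink interval
  have hGsupp : Function.support G ⊆ Ioc (-R) R := by
    intro u hu
    have hgu : g u ≠ 0 := fun h => hu (by simp [hGdef, h])
    have : |u| < R := lt_of_not_ge (fun h => hgu (hsupp u h))
    rw [abs_lt] at this
    exact ⟨this.1, this.2.le⟩
  have hshr : (∫ u in (-r:ℝ)..r, G u) = ∫ u in (-R:ℝ)..R, G u := by
    rw [intervalIntegral.integral_eq_integral_of_support_subset
        (hGsupp.trans (Ioc_subset_Ioc (by linarith) hr.le)),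
      ← intervalIntegral.integral_eq_integral_of_support_subset hGsupp]
  rw [hsplit, h1, h2, hshr]
  ring

lemma bound1 (g : ℝ → ℝ) (hg : Continuous g) {R M r : ℝ} (hR : 1 ≤ R)
    (hsupp : ∀ u, R ≤ |u| → g u = 0) (hM : ∀ u, |g u| ≤ M) (hr : 2*R ≤ r) :
    |∫ θ in (0:ℝ)..(2*π), g (r * Real.cos θ)| ≤ 8*M*R/r := by
  have hRpos : 0 < R := lt_of_lt_of_le one_pos hR
  have hrpos : 0 < r := by linarith
  have hM0 : 0 ≤ M := (abs_nonneg _).trans (hM 0)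
  rw [subst_lemma g hg hRpos hsupp (by linarith)]
  have hbd : ∀ u ∈ Set.uIoc (-R) R, ‖g u / Real.sqrt (r^2 - u^2)‖ ≤ M / (r/2) := by
    intro u hu
    rw [Set.uIoc_of_le (by linarith)] at hu
    have hu2 : u^2 ≤ R^2 := by nlinarith [hu.1, hu.2]
    have hs : r/2 ≤ Real.sqrt (r^2 - u^2) := by
      rw [show r/2 = Real.sqrt ((r/2)^2) by rw [Real.sqrt_sq (by positivity)]]
      exact Real.sqrt_le_sqrt (by nlinarith)
    rw [Real.norm_eq_abs, abs_div, abs_of_nonneg (Real.sqrt_nonneg _)]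
    gcongr
    exact hM u
  have := intervalIntegral.norm_integral_le_of_norm_le_const hbd
  rw [Real.norm_eq_abs] at this
  have habs : |R - (-R)| = 2*R := by rw [abs_of_pos (by linarith)]; ring
  rw [habs] at this
  calc |2 * ∫ u in (-R:ℝ)..R, g u / Real.sqrt (r^2 - u^2)|
      = 2 * |∫ u in (-R:ℝ)..R, g u / Real.sqrt (r^2 - u^2)| := by
        rw [abs_mul, abs_two]
    _ ≤ 2 * (M / (r/2) * (2*R)) := by linarith
    _ = 8*M*R/r := by field_simp; ring

lemma bound2 (g : ℝ → ℝ) (hg : Continuous g) {R M r : ℝ} (hR : 1 ≤ R)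
    (hsupp : ∀ u, R ≤ |u| → g u = 0) (hM : ∀ u, |g u| ≤ M) (hr : 2*R ≤ r)
    (hzero : (∫ x, g x) = 0) :
    |∫ θ in (0:ℝ)..(2*π), g (r * Real.cos θ)| ≤ 8*M*R^3/r^3 := by
  have hRpos : 0 < R := lt_of_lt_of_le one_pos hR
  have hrpos : 0 < r := by linarith
  have hM0 : 0 ≤ M := (abs_nonneg _).trans (hM 0)
  rw [subst_lemma g hg hRpos hsupp (by linarith)]
  have hgsupp : Function.support g ⊆ Set.Ioc (-R) R := by
    intro u hu
    have : |u| < R := lt_of_not_ge (fun h => hu (hsupp u h))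
    rw [abs_lt] at this
    exact ⟨this.1, this.2.le⟩
  have hI : (∫ u in (-R:ℝ)..R, g u) = ∫ x, g x :=
    intervalIntegral.integral_eq_integral_of_support_subset hgsupp
  have h0 : (∫ u in (-R:ℝ)..R, g u / r) = 0 := by
    rw [intervalIntegral.integral_div, hI, hzero, zero_div]
  have hGint : IntervalIntegrable (fun u => g u / Real.sqrt (r^2 - u^2)) volume (-R) R :=
    (Gcont g hg hRpos hsupp (by linarith)).intervalIntegrable _ _
  have hsplit : (∫ u in (-R:ℝ)..R, g u / Real.sqrt (r^2 - u^2))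
      = ∫ u in (-R:ℝ)..R, (g u / Real.sqrt (r^2 - u^2) - g u / r) := by
    rw [intervalIntegral.integral_sub hGint ((hg.div_const r).intervalIntegrable _ _), h0,
      sub_zero]
  rw [hsplit]
  have hbd : ∀ u ∈ Set.uIoc (-R) R,
      ‖g u / Real.sqrt (r^2 - u^2) - g u / r‖ ≤ M * (2*R^2/r^3) := by
    intro u hu
    rw [Set.uIoc_of_le (by linarith)] at hu
    have hu2 : u^2 ≤ R^2 := by nlinarith [hu.1, hu.2]
    set s := Real.sqrt (r^2 - u^2) with hsdef
    have hssq : s^2 = r^2 - u^2 := Real.sq_sqrt (by nlinarith)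
    have hs1 : r/2 ≤ s := by
      rw [hsdef, show r/2 = Real.sqrt ((r/2)^2) by rw [Real.sqrt_sq (by positivity)]]
      exact Real.sqrt_le_sqrt (by nlinarith)
    have hs2 : s ≤ r := by
      have h := Real.sqrt_le_sqrt (show r^2 - u^2 ≤ r^2 by nlinarith)
      rwa [Real.sqrt_sq hrpos.le] at h
    have hspos : 0 < s := by linarith
    have hkey : 1/s - 1/r ≤ 2*R^2/r^3 := by
      rw [div_sub_div _ _ (ne_of_gt hspos) (ne_of_gt hrpos),
        div_le_div_iff₀ (by positivity) (by positivity)]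
      have e1 : (r - s) * r ≤ R^2 := by
        nlinarith [mul_nonneg (sub_nonneg.2 hs2) hspos.le, hssq, hu2]
      have e2 : R^2 * r^2 ≤ 2*R^2*(s*r) := by
        nlinarith [mul_le_mul_of_nonneg_left hs1 (show (0:ℝ) ≤ 2*R^2*r by positivity)]
      nlinarith [mul_le_mul_of_nonneg_right e1 (sq_nonneg r), e2]
    have hrw : g u / s - g u / r = g u * (1/s - 1/r) := by ring
    rw [Real.norm_eq_abs, hrw, abs_mul]
    have hnn : 0 ≤ 1/s - 1/r := by
      have := one_div_le_one_div_of_le hspos hs2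
      linarith
    rw [abs_of_nonneg hnn]
    exact mul_le_mul (hM u) hkey hnn hM0
  have := intervalIntegral.norm_integral_le_of_norm_le_const hbd
  rw [Real.norm_eq_abs] at this
  have habs : |R - (-R)| = 2*R := by rw [abs_of_pos (by linarith)]; ring
  rw [habs] at this
  calc |2 * ∫ u in (-R:ℝ)..R, (g u / Real.sqrt (r^2 - u^2) - g u / r)|
      = 2 * |∫ u in (-R:ℝ)..R, (g u / Real.sqrt (r^2 - u^2) - g u / r)| := by
        rw [abs_mul, abs_two]
    _ ≤ 2 * (M * (2*R^2/r^3) * (2*R)) := by linarith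
    _ = 8*M*R^3/r^3 := by field_simp; ring

/-- For `g` continuous with compact support, the rotational average
`f(x,y) = ∫₀^{2π} g(x cos θ + y sin θ) dθ` vanishes at infinity; if moreover
`∫ g = 0`, then `|f(x,y)| ≤ C / (1 + ‖(x,y)‖³)`. -/
theorem stmt6 (g : ℝ → ℝ) (hg : Continuous g) (hgsupp : HasCompactSupport g)
    (f : ℝ × ℝ → ℝ)
    (hf : ∀ p : ℝ × ℝ,
      f p = ∫ θ in (0:ℝ)..(2 * Real.pi), g (p.1 * Real.cos θ + p.2 * Real.sin θ)) :
    (Continuous f ∧ Tendsto f (cocompact (ℝ × ℝ)) (𝓝 0)) ∧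
    ((∫ x, g x) = 0 → ∃ C : ℝ, ∀ p : ℝ × ℝ,
      |f p| ≤ C / (1 + Real.sqrt (p.1 ^ 2 + p.2 ^ 2) ^ 3)) := by
  -- bound on g
  obtain ⟨M, hMn⟩ := hgsupp.exists_bound_of_continuous hg
  have hM : ∀ u, |g u| ≤ M := fun u => (Real.norm_eq_abs (g u)) ▸ hMn u
  have hM0 : 0 ≤ M := (abs_nonneg _).trans (hM 0)
  -- support radius
  obtain ⟨c, hc⟩ := hgsupp.isBounded.subset_closedBall 0
  set R₀ : ℝ := max 1 (|c| + 1) with hR₀def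
  have hR₀1 : 1 ≤ R₀ := le_max_left _ _
  have hsupp : ∀ u, R₀ ≤ |u| → g u = 0 := by
    intro u hu
    apply image_eq_zero_of_notMem_tsupport
    intro hmem
    have := hc hmem
    rw [Metric.mem_closedBall, Real.dist_eq, sub_zero] at this
    have h2 : |c| + 1 ≤ R₀ := le_max_right _ _
    have h3 : c ≤ |c| := le_abs_self c
    linarith
  have hR₀pos : 0 < R₀ := lt_of_lt_of_le one_pos hR₀1
  -- f in terms of radius
  have hfr : ∀ p : ℝ × ℝ,
      f p = ∫ θ in (0:ℝ)..(2*π), g (Real.sqrt (p.1^2 + p.2^2) * Real.cos θ) :=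
    fun p => (hf p).trans (rot_inv g p.1 p.2)
  have hnorm_le : ∀ p : ℝ × ℝ, ‖p‖ ≤ Real.sqrt (p.1^2 + p.2^2) := by
    intro p
    rw [Prod.norm_def, Real.norm_eq_abs, Real.norm_eq_abs]
    apply max_le
    · rw [← Real.sqrt_sq_eq_abs]
      exact Real.sqrt_le_sqrt (by nlinarith [sq_nonneg p.2])
    · rw [← Real.sqrt_sq_eq_abs]
      exact Real.sqrt_le_sqrt (by nlinarith [sq_nonneg p.1])
  constructor
  · constructor
    · -- continuity
      have : f = fun p : ℝ × ℝ =>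
          ∫ θ in (0:ℝ)..(2*π), (fun (q : ℝ × ℝ) (θ : ℝ) =>
            g (q.1 * Real.cos θ + q.2 * Real.sin θ)) p θ := funext hf
      rw [this]
      apply intervalIntegral.continuous_parametric_intervalIntegral_of_continuous'
      apply hg.comp
      exact ((continuous_fst.fst.mul (Real.continuous_cos.comp continuous_snd)).add
        (continuous_fst.snd.mul (Real.continuous_sin.comp continuous_snd)))
    · -- tendsto zero
      apply squeeze_zero_norm' (a := fun p : ℝ × ℝ => 8*M*R₀/‖p‖)
      · filter_upwards [tendsto_norm_cocompact_atTop.eventually_ge_atTop (2*R₀)] with p hp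
        have hr : 2*R₀ ≤ Real.sqrt (p.1^2 + p.2^2) := hp.trans (hnorm_le p)
        have hppos : 0 < ‖p‖ := by linarith
        rw [Real.norm_eq_abs]
        calc |f p| ≤ 8*M*R₀/Real.sqrt (p.1^2 + p.2^2) := by
              rw [hfr p]; exact bound1 g hg hR₀1 hsupp hM hr
          _ ≤ 8*M*R₀/‖p‖ := by
              apply div_le_div_of_nonneg_left (by positivity) hppos (hnorm_le p)
      · have h1 := (tendsto_norm_cocompact_atTop (E := ℝ×ℝ)).inv_tendsto_atTop
        have h2 := h1.const_mul (8*M*R₀)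
        simpa [div_eq_mul_inv, mul_zero] using h2
  · -- decay
    intro hzero
    refine ⟨max (M*(2*π)*(1+(2*R₀)^3)) (16*M*R₀^3), fun p => ?_⟩
    set r := Real.sqrt (p.1^2 + p.2^2) with hrdef
    have hr0 : 0 ≤ r := Real.sqrt_nonneg _
    have hd : 0 < 1 + r^3 := by positivity
    have hMR3 : 0 ≤ M*R₀^3 := by positivity
    rcases le_or_gt (2*R₀) r with hcase | hcase
    · have hb : |f p| ≤ 8*M*R₀^3/r^3 := by
        rw [hfr p]; exact bound2 g hg hR₀1 hsupp hM hcase hzero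
      have h1 : (1:ℝ) ≤ r := by linarith
      have hr3 : (1:ℝ) ≤ r^3 := by nlinarith [mul_nonneg (sub_nonneg.2 h1) (sq_nonneg r)]
      calc |f p| ≤ 8*M*R₀^3/r^3 := hb
        _ ≤ 16*M*R₀^3/(1+r^3) := by
            rw [div_le_div_iff₀ (by positivity) hd]
            nlinarith [hr3, hMR3]
        _ ≤ max (M*(2*π)*(1+(2*R₀)^3)) (16*M*R₀^3) / (1+r^3) := by
            gcongr
            exact le_max_right _ _
    · have hb : |f p| ≤ M * (2*π) := by
        rw [hf p]
        have h := intervalIntegral.norm_integral_le_of_norm_le_const (C := M)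
          (f := fun θ => g (p.1 * Real.cos θ + p.2 * Real.sin θ)) (a := 0) (b := 2*π)
          (fun θ _ => (Real.norm_eq_abs _) ▸ hM _)
        rw [Real.norm_eq_abs] at h
        calc |∫ θ in (0:ℝ)..(2*π), g (p.1 * Real.cos θ + p.2 * Real.sin θ)|
            ≤ M * |2*π - 0| := h
          _ = M * (2*π) := by rw [sub_zero, abs_of_pos Real.two_pi_pos]
      have hcube : r^3 ≤ (2*R₀)^3 := by
        have := pow_le_pow_left₀ hr0 hcase.le 3
        exact this
      calc |f p| ≤ M*(2*π) := hb
        _ ≤ max (M*(2*π)*(1+(2*R₀)^3)) (16*M*R₀^3) / (1+r^3) := by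
            rw [le_div_iff₀ hd]
            have hle : M*(2*π)*(1+r^3) ≤ M*(2*π)*(1+(2*R₀)^3) := by
              apply mul_le_mul_of_nonneg_left (by linarith) (by positivity)
            exact hle.trans (le_max_left _ _)
end
end

section
/- Let φ : ℝ → ℝ be bounded and continuous, let n ∈ ℕ, and let A be a sup-norm closed subalgebra of the algebra C_b(ℝⁿ) of bounded continuous functions ℝⁿ → ℝ (i.e., A is a linear subspace closed under pointwise multiplication and closed in the supremum norm). If N¹_φ(ℝⁿ) ⊆ A, then N^l_φ(ℝⁿ) ⊆ A for every l ∈ ℕ. -/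
open Filter Topology MeasureTheory

noncomputable section

/-- If `φ` is bounded and continuous and `A` is a uniformly closed subalgebra
of `C_b(ℝⁿ)` containing `N¹_φ(ℝⁿ)`, then `A` contains `N^l_φ(ℝⁿ)` for every
`l ∈ ℕ`. -/
theorem stmt11 (φ : ℝ → ℝ) (hφc : Continuous φ) (hφb : ∃ M : ℝ, ∀ x, |φ x| ≤ M)
    (n : ℕ) (hn : 1 ≤ n) (A : Set (E n → ℝ))
    (hAcb : ∀ f ∈ A, Continuous f ∧ ∃ M : ℝ, ∀ x, |f x| ≤ M)
    (hAadd : ∀ f ∈ A, ∀ g ∈ A, (fun x => f x + g x) ∈ A)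
    (hAsmul : ∀ (c : ℝ), ∀ f ∈ A, (fun x => c * f x) ∈ A)
    (hAmul : ∀ f ∈ A, ∀ g ∈ A, (fun x => f x * g x) ∈ A)
    (hAclosed : UnifClosure A ⊆ A)
    (hA1 : NN φ n 1 ⊆ A) :
    ∀ l : ℕ, 1 ≤ l → NN φ n l ⊆ A := by
  -- 0 ∈ A
  have h0A : (0 : E n → ℝ) ∈ A := by
    apply hA1
    show (0 : E n → ℝ) ∈ (Submodule.span ℝ _ : Submodule ℝ (E n → ℝ))
    exact Submodule.zero_mem _
  -- span of a subset of A is in A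
  have hspan : ∀ S : Set (E n → ℝ), S ⊆ A →
      ((Submodule.span ℝ S : Submodule ℝ (E n → ℝ)) : Set (E n → ℝ)) ⊆ A := by
    intro S hS f hf
    induction hf using Submodule.span_induction with
    | mem x hx => exact hS hx
    | zero => exact h0A
    | add x y hx hy hx' hy' => exact hAadd x hx' y hy'
    | smul c x hx hx' => exact hAsmul c x hx'
  -- key step: for g ∈ A and b : ℝ, φ ∘ (g + b) ∈ A
  have hkey : ∀ g ∈ A, ∀ b : ℝ, (fun x => φ (g x + b)) ∈ A := by
    intro g hg b
    by_cases hφ0 : ∀ y : ℝ, φ y = 0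
    · have : (fun x : E n => φ (g x + b)) = 0 := by
        funext x; simp [hφ0]
      rw [this]; exact h0A
    · push_neg at hφ0
      obtain ⟨b₀, hb₀⟩ := hφ0
      -- constants are in A
      have hconst : ∀ c : ℝ, (fun _ : E n => c) ∈ A := by
        intro c
        have hb₀A : (fun _ : E n => φ b₀) ∈ A := by
          apply hA1
          show _ ∈ (Submodule.span ℝ _ : Submodule ℝ (E n → ℝ))
          apply Submodule.subset_span
          refine ⟨0, b₀, ?_⟩
          funext x
          simp
        have := hAsmul (c / φ b₀) _ hb₀A
        simpa [div_mul_cancel₀ c hb₀] using this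
      -- polynomials in g are in A
      have hpoly : ∀ p : Polynomial ℝ, (fun x => p.eval (g x)) ∈ A := by
        intro p
        induction p using Polynomial.induction_on with
        | C c => simpa using hconst c
        | add p q hp hq =>
            have := hAadd _ hp _ hq
            simpa using this
        | monomial k c hk =>
            have := hAmul _ hk _ hg
            have heq : (fun x => (Polynomial.eval (g x) (Polynomial.C c * Polynomial.X ^ k)) * g x)
                = fun x => Polynomial.eval (g x) (Polynomial.C c * Polynomial.X ^ (k + 1)) := by
              funext x; simp [pow_succ]; ring
            rw [heq] at this
            exact this
      -- g is bounded
      obtain ⟨_, M, hM⟩ := hAcb g hg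
      apply hAclosed
      intro ε hε
      obtain ⟨p, hp⟩ := exists_polynomial_near_of_continuousOn (-M) M (fun y => φ (y + b))
        ((hφc.comp (continuous_add_right b)).continuousOn) ε hε
      refine ⟨fun x => p.eval (g x), hpoly p, fun x => ?_⟩
      have hx : g x ∈ Set.Icc (-M) M := by
        have := hM x
        constructor <;> [linarith [abs_le.mp this]; exact (abs_le.mp this).2]
      have := hp (g x) hx
      rw [abs_sub_comm]
      linarith [le_of_lt this]
  -- induction on l
  intro l
  induction l with
  | zero => intro h; exact absurd h (by norm_num)
  | succ k ih =>
      intro _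
      match k, ih with
      | 0, _ => exact hA1
      | (m+1), ih =>
          have hm : NN φ n (m+1) ⊆ A := ih (Nat.succ_le_succ (Nat.zero_le m))
          show (↑(Submodule.span ℝ
              {f : E n → ℝ | ∃ g ∈ NN φ n (m+1), ∃ b : ℝ, f = fun x => φ (g x + b)})
              : Set (E n → ℝ)) ⊆ A
          apply hspan
          rintro f ⟨g, hg, b, rfl⟩
          exact hkey g (hm hg) b
end
end

section
/- Let φ ∈ C₀(ℝ) and n ∈ ℕ. Then N^∞_φ(ℝⁿ) ⊆ C_R(ℝⁿ), i.e., every neural network with activation function φ and any number of hidden layers belongs to the commutative resolvent algebra. -/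
open Filter Topology MeasureTheory

noncomputable section

/-- The (real part of the) commutative resolvent algebra `C_R(ℝⁿ)`: the
uniformly closed span of the functions `g ∘ P_V` with `V ⊆ ℝⁿ` a linear
subspace, `P_V` the orthogonal projection onto `V`, and `g ∈ C₀(V)`. -/
def CR (n : ℕ) : Set (E n → ℝ) :=
  UnifClosure ↑(Submodule.span ℝ
    {f : E n → ℝ | ∃ (V : Submodule ℝ (E n)) (g : V → ℝ),
      Continuous g ∧ Tendsto g (cocompact V) (𝓝 0) ∧
      f = fun x => g (Submodule.orthogonalProjection V x)})

/-- `C₀(ℝ)`: continuous real-valued functions on `ℝ` vanishing at infinity. -/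
def C0R : Set (ℝ → ℝ) :=
  {f | Continuous f ∧ Tendsto f (cocompact ℝ) (𝓝 0)}

/-! ### Auxiliary definitions and lemmas -/

/-- The generating set of `CR n`. -/
def S (n : ℕ) : Set (E n → ℝ) :=
  {f : E n → ℝ | ∃ (V : Submodule ℝ (E n)) (g : V → ℝ),
      Continuous g ∧ Tendsto g (cocompact V) (𝓝 0) ∧
      f = fun x => g (Submodule.orthogonalProjection V x)}

/-- The span of the generating set of `CR n`. -/
def A (n : ℕ) : Submodule ℝ (E n → ℝ) := Submodule.span ℝ (S n)


lemma tendsto_cocompact_of_inj {V W : Type*} [NormedAddCommGroup V] [NormedSpace ℝ V]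
    [NormedAddCommGroup W] [NormedSpace ℝ W] [FiniteDimensional ℝ V]
    (f : V →ₗ[ℝ] W) (hf : Function.Injective f) :
    Tendsto f (cocompact V) (cocompact W) := by
  obtain ⟨K, hK0, hK⟩ := f.injective_iff_antilipschitz.mp hf
  apply Filter.tendsto_cocompact_cocompact_of_norm
  intro ε
  refine ⟨(K : ℝ) * max ε 0, fun x hx => ?_⟩
  have h1 : ‖x‖ ≤ (K : ℝ) * ‖f x‖ := by
    simpa [dist_zero_right, map_zero] using hK.le_mul_dist x 0
  by_contra h
  push_neg at h
  have h2 : ‖f x‖ ≤ max ε 0 := h.trans (le_max_left _ _)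
  have : ‖x‖ ≤ (K : ℝ) * max ε 0 :=
    h1.trans (mul_le_mul_of_nonneg_left h2 (by positivity))
  exact absurd this (not_le.mpr hx)

lemma bounded_of_C0 {α : Type*} [TopologicalSpace α] {g : α → ℝ} (hc : Continuous g)
    (ht : Tendsto g (cocompact α) (𝓝 0)) : ∃ M : ℝ, ∀ x, |g x| ≤ M := by
  have h1 : g ⁻¹' Metric.closedBall 0 1 ∈ cocompact α :=
    ht (Metric.closedBall_mem_nhds 0 one_pos)
  obtain ⟨K, hKc, hKs⟩ := mem_cocompact.mp h1
  obtain ⟨C, hC⟩ := (hKc.image hc).isBounded.subset_closedBall 0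
  refine ⟨max C 1, fun x => ?_⟩
  by_cases hx : x ∈ K
  · have := hC ⟨x, hx, rfl⟩
    simp only [Metric.mem_closedBall, dist_zero_right, Real.norm_eq_abs] at this
    exact this.trans (le_max_left _ _)
  · have := hKs hx
    simp only [Set.mem_preimage, Metric.mem_closedBall, dist_zero_right, Real.norm_eq_abs] at this
    exact this.trans (le_max_right _ _)

lemma const_mem_S (n : ℕ) (c : ℝ) : (fun _ : E n => c) ∈ S n := by
  refine ⟨⊥, fun _ => c, continuous_const, ?_, rfl⟩
  rw [Filter.cocompact_eq_bot]
  exact tendsto_bot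

lemma const_mem_A (n : ℕ) (c : ℝ) : (fun _ : E n => c) ∈ A n :=
  Submodule.subset_span (const_mem_S n c)

lemma mul_mem_S {n : ℕ} {f₁ f₂ : E n → ℝ} (h₁ : f₁ ∈ S n) (h₂ : f₂ ∈ S n) :
    f₁ * f₂ ∈ S n := by
  obtain ⟨V₁, g₁, hg₁c, hg₁t, rfl⟩ := h₁
  obtain ⟨V₂, g₂, hg₂c, hg₂t, rfl⟩ := h₂
  refine ⟨V₁ ⊔ V₂,
    fun w => g₁ (Submodule.orthogonalProjection V₁ (w : E n)) * g₂ (Submodule.orthogonalProjection V₂ (w : E n)),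
    ?_, ?_, ?_⟩
  · exact (hg₁c.comp ((Submodule.orthogonalProjection V₁).continuous.comp continuous_subtype_val)).mul
      (hg₂c.comp ((Submodule.orthogonalProjection V₂).continuous.comp continuous_subtype_val))
  · set T : (↥(V₁ ⊔ V₂)) →ₗ[ℝ] (↥V₁ × ↥V₂) :=
      (((Submodule.orthogonalProjection V₁).toLinearMap.comp (V₁ ⊔ V₂).subtype).prod
       ((Submodule.orthogonalProjection V₂).toLinearMap.comp (V₁ ⊔ V₂).subtype)) with hT
    have hTinj : Function.Injective T := by
      intro v w hvw
      have h0 : T (v - w) = 0 := by rw [map_sub, hvw, sub_self]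
      have h1 : Submodule.orthogonalProjection V₁ ((v - w : ↥(V₁ ⊔ V₂)) : E n) = 0 := congrArg Prod.fst h0
      have h2 : Submodule.orthogonalProjection V₂ ((v - w : ↥(V₁ ⊔ V₂)) : E n) = 0 := congrArg Prod.snd h0
      have m1 := Submodule.orthogonalProjectionOnto_eq_zero_iff.mp h1
      have m2 := Submodule.orthogonalProjectionOnto_eq_zero_iff.mp h2
      have hm : ((v - w : ↥(V₁ ⊔ V₂)) : E n) ∈ (V₁ ⊔ V₂)ᗮ := by
        rw [← Submodule.inf_orthogonal]; exact Submodule.mem_inf.mpr ⟨m1, m2⟩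
      have hmem : ((v - w : ↥(V₁ ⊔ V₂)) : E n) ∈ (V₁ ⊔ V₂) ⊓ (V₁ ⊔ V₂)ᗮ :=
        Submodule.mem_inf.mpr ⟨(v - w).2, hm⟩
      rw [Submodule.inf_orthogonal_eq_bot, Submodule.mem_bot] at hmem
      have : v - w = 0 := Subtype.ext hmem
      exact sub_eq_zero.mp this
    have hTc := tendsto_cocompact_of_inj T hTinj
    have hb₁ := bounded_of_C0 hg₁c hg₁t
    have hb₂ := bounded_of_C0 hg₂c hg₂t
    obtain ⟨M₁, hM₁⟩ := hb₁
    obtain ⟨M₂, hM₂⟩ := hb₂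
    have hF : Tendsto (fun p : ↥V₁ × ↥V₂ => g₁ p.1 * g₂ p.2)
        (cocompact (↥V₁ × ↥V₂)) (𝓝 0) := by
      rw [← Filter.coprod_cocompact, Filter.coprod, tendsto_sup]
      constructor
      · exact (hg₁t.comp tendsto_comap).zero_mul_isBoundedUnder_le
          (Filter.isBoundedUnder_of ⟨M₂, fun p => by simpa using hM₂ p.2⟩)
      · exact Filter.isBoundedUnder_le_mul_tendsto_zero
          (Filter.isBoundedUnder_of ⟨M₁, fun p => by simpa using hM₁ p.1⟩)
          (hg₂t.comp tendsto_comap)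
    exact hF.comp hTc
  · funext x
    have e1 : Submodule.orthogonalProjection V₁ ((Submodule.orthogonalProjection (V₁ ⊔ V₂) x : E n)) =
        Submodule.orthogonalProjection V₁ x := by
      have := Submodule.orthogonalProjectionOnto_starProjection_of_le (le_sup_left : V₁ ≤ V₁ ⊔ V₂) x
      rwa [Submodule.starProjection_apply] at this
    have e2 : Submodule.orthogonalProjection V₂ ((Submodule.orthogonalProjection (V₁ ⊔ V₂) x : E n)) =
        Submodule.orthogonalProjection V₂ x := by
      have := Submodule.orthogonalProjectionOnto_starProjection_of_le (le_sup_right : V₂ ≤ V₁ ⊔ V₂) x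
      rwa [Submodule.starProjection_apply] at this
    simp only [Pi.mul_apply]
    rw [e1, e2]

lemma mul_mem_A {n : ℕ} {f₁ f₂ : E n → ℝ} (h₁ : f₁ ∈ A n) (h₂ : f₂ ∈ A n) :
    f₁ * f₂ ∈ A n := by
  have hle : A n * A n ≤ A n := by
    rw [A, Submodule.span_mul_span]
    apply Submodule.span_le.mpr
    rintro f ⟨a, ha, b, hb, rfl⟩
    exact Submodule.subset_span (mul_mem_S ha hb)
  exact hle (Submodule.mul_mem_mul h₁ h₂)

lemma pow_mem_A {n : ℕ} {g : E n → ℝ} (hg : g ∈ A n) : ∀ k : ℕ, g ^ k ∈ A n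
  | 0 => by
      have : (g ^ 0 : E n → ℝ) = fun _ => 1 := by funext x; simp
      rw [this]; exact const_mem_A n 1
  | (k + 1) => by rw [pow_succ]; exact mul_mem_A (pow_mem_A hg k) hg

lemma poly_mem {n : ℕ} (p : Polynomial ℝ) {g : E n → ℝ} (hg : g ∈ A n) :
    (fun x => p.eval (g x)) ∈ A n := by
  induction p using Polynomial.induction_on' with
  | add p q hp hq =>
      have : (fun x => (p + q).eval (g x)) =
          (fun x => p.eval (g x)) + fun x => q.eval (g x) := by
        funext x; simp [Polynomial.eval_add]
      rw [this]; exact Submodule.add_mem _ hp hq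
  | monomial k c =>
      have : (fun x => (Polynomial.monomial k c).eval (g x)) = c • g ^ k := by
        funext x; simp [Polynomial.eval_monomial, mul_comm]
      rw [this]; exact Submodule.smul_mem _ _ (pow_mem_A hg k)

lemma bounded_mem_A {n : ℕ} {f : E n → ℝ} (hf : f ∈ A n) : ∃ M, ∀ x, |f x| ≤ M := by
  induction hf using Submodule.span_induction with
  | mem f hf =>
      obtain ⟨V, g, hgc, hgt, rfl⟩ := hf
      obtain ⟨M, hM⟩ := bounded_of_C0 hgc hgt
      exact ⟨M, fun x => hM _⟩
  | zero => exact ⟨0, by simp⟩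
  | add x y hx hy ihx ihy =>
      obtain ⟨M, hM⟩ := ihx; obtain ⟨M', hM'⟩ := ihy
      refine ⟨M + M', fun t => ?_⟩
      calc |(x + y) t| = |x t + y t| := by simp
        _ ≤ |x t| + |y t| := abs_add_le _ _
        _ ≤ M + M' := add_le_add (hM t) (hM' t)
  | smul a x hx ih =>
      obtain ⟨M, hM⟩ := ih
      refine ⟨|a| * M, fun t => ?_⟩
      calc |(a • x) t| = |a| * |x t| := by simp [abs_mul]
        _ ≤ |a| * M := mul_le_mul_of_nonneg_left (hM t) (abs_nonneg a)

lemma mem_CR_of_mem_A {n : ℕ} {f : E n → ℝ} (hf : f ∈ A n) : f ∈ CR n :=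
  fun ε hε => ⟨f, hf, fun x => by simpa using hε.le⟩

lemma CR_add {n : ℕ} {f g : E n → ℝ} (hf : f ∈ CR n) (hg : g ∈ CR n) : f + g ∈ CR n := by
  intro ε hε
  obtain ⟨f', hf', hfa⟩ := hf (ε / 2) (by positivity)
  obtain ⟨g', hg', hga⟩ := hg (ε / 2) (by positivity)
  refine ⟨f' + g', Submodule.add_mem _ hf' hg', fun x => ?_⟩
  simp only [Pi.add_apply]
  calc |f x + g x - (f' x + g' x)| = |(f x - f' x) + (g x - g' x)| := by congr 1; ring
    _ ≤ |f x - f' x| + |g x - g' x| := abs_add_le _ _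
    _ ≤ ε / 2 + ε / 2 := add_le_add (hfa x) (hga x)
    _ = ε := by ring

lemma CR_smul {n : ℕ} (c : ℝ) {f : E n → ℝ} (hf : f ∈ CR n) : c • f ∈ CR n := by
  intro ε hε
  obtain ⟨f', hf', hfa⟩ := hf (ε / (|c| + 1)) (by positivity)
  refine ⟨c • f', Submodule.smul_mem _ _ hf', fun x => ?_⟩
  simp only [Pi.smul_apply, smul_eq_mul]
  calc |c * f x - c * f' x| = |c| * |f x - f' x| := by rw [← abs_mul]; congr 1; ring
    _ ≤ |c| * (ε / (|c| + 1)) := mul_le_mul_of_nonneg_left (hfa x) (abs_nonneg c)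
    _ ≤ (|c| + 1) * (ε / (|c| + 1)) :=
        mul_le_mul_of_nonneg_right (by linarith [abs_nonneg c]) (by positivity)
    _ = ε := by field_simp

lemma span_subset_CR {n : ℕ} {T : Set (E n → ℝ)} (hT : T ⊆ CR n) :
    (Submodule.span ℝ T : Set (E n → ℝ)) ⊆ CR n := by
  intro f hf
  rw [SetLike.mem_coe] at hf
  induction hf using Submodule.span_induction with
  | mem g hg => exact hT hg
  | zero => exact mem_CR_of_mem_A (Submodule.zero_mem _)
  | add x y hx hy ihx ihy => exact CR_add ihx ihy
  | smul a x hx ih => exact CR_smul a ih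

lemma layer1_mem_A {n : ℕ} (φ : ℝ → ℝ) (hφ : φ ∈ C0R) (a : E n) (b : ℝ) :
    (fun x : E n => φ ((inner ℝ a x : ℝ) + b)) ∈ A n := by
  by_cases ha : a = 0
  · subst ha
    have : (fun x : E n => φ ((inner ℝ (0 : E n) x : ℝ) + b)) = fun _ => φ b := by
      funext x; simp
    rw [this]; exact const_mem_A n _
  · set V : Submodule ℝ (E n) := Submodule.span ℝ {a} with hV
    have haV : a ∈ V := Submodule.mem_span_singleton_self a
    apply Submodule.subset_span
    refine ⟨V, fun v => φ ((inner ℝ a (v : E n) : ℝ) + b), ?_, ?_, ?_⟩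
    · exact hφ.1.comp ((Continuous.inner continuous_const continuous_subtype_val).add
        continuous_const)
    · set L : ↥V →ₗ[ℝ] ℝ := (innerSL ℝ a).toLinearMap.comp V.subtype with hL
      have hkey : ∀ v : ↥V, L v = 0 → v = 0 := by
        intro v hv
        obtain ⟨c, hc⟩ := Submodule.mem_span_singleton.mp v.2
        have hinner : (inner ℝ a (v : E n) : ℝ) = 0 := hv
        rw [← hc, inner_smul_right] at hinner
        have haa : (inner ℝ a a : ℝ) ≠ 0 := inner_self_ne_zero.mpr ha
        have hc0 : c = 0 := by
          rcases mul_eq_zero.mp hinner with h | h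
          · exact h
          · exact absurd h haa
        apply Subtype.ext
        rw [← hc, hc0, zero_smul]; rfl
      have hLinj : Function.Injective L := by
        intro v w hvw
        have := hkey (v - w) (by rw [map_sub, hvw, sub_self])
        exact sub_eq_zero.mp this
      have hLc := tendsto_cocompact_of_inj L hLinj
      have htrans : Tendsto (fun t : ℝ => t + b) (cocompact ℝ) (cocompact ℝ) :=
        (Homeomorph.addRight b).isClosedEmbedding.tendsto_cocompact
      exact hφ.2.comp (htrans.comp hLc)
    · funext x
      have h0 := Submodule.starProjection_inner_eq_zero x a haV
      rw [Submodule.starProjection_apply] at h0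
      rw [inner_sub_left, sub_eq_zero] at h0
      have heq : (inner ℝ a ((Submodule.orthogonalProjection V x : E n)) : ℝ) = (inner ℝ a x : ℝ) := by
        have h1 := real_inner_comm a x
        have h2 := real_inner_comm a ((Submodule.orthogonalProjection V x : E n) : E n)
        linarith [h0]
      simp only [heq]

lemma comp_mem_CR {n : ℕ} (φ : ℝ → ℝ) (hφ : φ ∈ C0R) {g : E n → ℝ} (hg : g ∈ CR n) (b : ℝ) :
    (fun x => φ (g x + b)) ∈ CR n := by
  have hφu : UniformContinuous φ := hφ.1.uniformContinuous_of_tendsto_cocompact hφ.2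
  intro ε hε
  obtain ⟨δ, hδ0, hδ⟩ := Metric.uniformContinuous_iff.mp hφu (ε / 2) (by positivity)
  obtain ⟨g', hg', hga⟩ := hg (δ / 2) (by positivity)
  have hg'A : g' ∈ A n := hg'
  have hgb : (fun x => g' x + b) ∈ A n :=
    Submodule.add_mem (A n) hg'A (const_mem_A n b)
  obtain ⟨M, hM⟩ := bounded_mem_A hgb
  obtain ⟨p, hp⟩ := exists_polynomial_near_of_continuousOn (-M) M φ
    hφ.1.continuousOn (ε / 2) (by positivity)
  refine ⟨fun x => p.eval (g' x + b), poly_mem p hgb, fun x => ?_⟩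
  have h1 : |φ (g x + b) - φ (g' x + b)| ≤ ε / 2 := by
    have hd : dist (g x + b) (g' x + b) < δ := by
      rw [Real.dist_eq]
      calc |g x + b - (g' x + b)| = |g x - g' x| := by congr 1; ring
        _ ≤ δ / 2 := hga x
        _ < δ := by linarith
    have := hδ hd
    rw [Real.dist_eq] at this
    linarith
  have hIcc : g' x + b ∈ Set.Icc (-M) M := by
    have := abs_le.mp (hM x)
    exact ⟨this.1, this.2⟩
  have h2 := hp (g' x + b) hIcc
  calc |φ (g x + b) - p.eval (g' x + b)|
      ≤ |φ (g x + b) - φ (g' x + b)| + |φ (g' x + b) - p.eval (g' x + b)| :=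
        abs_sub_le _ _ _
    _ ≤ ε / 2 + ε / 2 := add_le_add h1 (by rw [abs_sub_comm]; exact h2.le)
    _ = ε := by ring

/-- For `φ ∈ C₀(ℝ)`, every neural network with activation `φ` and any number
of hidden layers belongs to the commutative resolvent algebra. -/
theorem stmt12 (φ : ℝ → ℝ) (hφ : φ ∈ C0R) (n : ℕ) (hn : 1 ≤ n) :
    NNinf φ n ⊆ CR n := by
  have main : ∀ k : ℕ, NN φ n (k + 1) ⊆ CR n := by
    intro k
    induction k with
    | zero =>
        intro f hf
        refine span_subset_CR ?_ (by simp only [zero_add, NN] at hf; exact hf)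
        rintro g ⟨a, b, rfl⟩
        exact mem_CR_of_mem_A (layer1_mem_A φ hφ a b)
    | succ k ih =>
        intro f hf
        refine span_subset_CR ?_ (by simp only [NN] at hf; exact hf)
        rintro g ⟨g₀, hg₀, b, rfl⟩
        exact comp_mem_CR φ hφ (ih hg₀) b
  rintro f ⟨l, hl, hf⟩
  obtain ⟨k, rfl⟩ : ∃ k, l = k + 1 := ⟨l - 1, by omega⟩
  exact main k hf
end
end

section
/- Let n ∈ ℕ and let σ ∈ S(ℝ) be strictly monotone (for instance σ = tanh). Then S(ℝⁿ) equals the sup-norm closed linear span of the set of functions x ↦ ∏_{j=1}^m σ(a_j·x), where m ranges over nonnegative integers (the empty product being the constant function 1) and a₁, …, a_m ∈ ℝⁿ. -/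
open Filter Topology MeasureTheory

noncomputable section

/-- `S(ℝ)`: continuous functions `ℝ → ℝ` with finite limits at both `−∞`
and `∞`. -/
def SR : Set (ℝ → ℝ) :=
  {f | Continuous f ∧ (∃ L : ℝ, Tendsto f atBot (𝓝 L)) ∧
    (∃ L : ℝ, Tendsto f atTop (𝓝 L))}

/-- `S(ℝⁿ)`: the uniformly closed span of finite products
`x ↦ ∏_{j=1}^m g_j(a_j·x)` with `g_j ∈ S(ℝ)` and `a_j ∈ ℝⁿ`. -/
def SRn (n : ℕ) : Set (E n → ℝ) :=
  UnifClosure ↑(Submodule.span ℝ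
    {f : E n → ℝ | ∃ (m : ℕ), 1 ≤ m ∧ ∃ (g : Fin m → ℝ → ℝ) (a : Fin m → E n),
      (∀ j, g j ∈ SR) ∧ f = fun x => ∏ j, g j (inner ℝ (a j) x : ℝ)})

/-! ### Auxiliary lemmas -/

open Set in
/-- A continuous "clamped inverse" of a strictly monotone continuous function. -/
lemma aux_exists_clamped_inverse (σ : ℝ → ℝ) (hm : StrictMono σ)
    (t₀ t₁ : ℝ) (h01 : t₀ ≤ t₁) :
    ∃ ρ : ℝ → ℝ, Continuous ρ ∧
      ∀ t, max t₀ (min t₁ (ρ (σ t))) = max t₀ (min t₁ t) := by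
  set S : ℝ → Set ℝ := fun s => insert t₀ {t | t ∈ Icc t₀ t₁ ∧ σ t ≤ s} with hS
  have hbdd : ∀ s, BddAbove (S s) := by
    intro s
    refine ⟨t₁, ?_⟩
    rintro x (rfl | ⟨hx, -⟩)
    · exact h01
    · exact hx.2
  have hne : ∀ s, (S s).Nonempty := fun s => ⟨t₀, Or.inl rfl⟩
  set ρ₀ : ℝ → ℝ := fun s => sSup (S s) with hρ₀
  have hρ₀mono : Monotone ρ₀ := by
    intro s s' hss
    apply csSup_le_csSup (hbdd s') (hne s)
    rintro x (rfl | ⟨hx, hσx⟩)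
    · exact Or.inl rfl
    · exact Or.inr ⟨hx, hσx.trans hss⟩
  have hρ₀_mid : ∀ t ∈ Icc t₀ t₁, ρ₀ (σ t) = t := by
    intro t ht
    have : S (σ t) = Icc t₀ t := by
      ext x
      constructor
      · rintro (rfl | ⟨hx, hσx⟩)
        · exact ⟨le_rfl, ht.1⟩
        · exact ⟨hx.1, (hm.le_iff_le).1 hσx⟩
      · rintro ⟨hx0, hxt⟩
        exact Or.inr ⟨⟨hx0, hxt.trans ht.2⟩, hm.monotone hxt⟩
    show sSup (S (σ t)) = t
    rw [this, csSup_Icc ht.1]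
  have hρ₀_top : ∀ s, σ t₁ ≤ s → ρ₀ s = t₁ := by
    intro s hs
    have : S s = Icc t₀ t₁ := by
      ext x
      constructor
      · rintro (rfl | ⟨hx, -⟩)
        · exact ⟨le_rfl, h01⟩
        · exact hx
      · intro hx
        exact Or.inr ⟨hx, (hm.monotone hx.2).trans hs⟩
    show sSup (S s) = t₁
    rw [this, csSup_Icc h01]
  have hρ₀_bot : ∀ s, s ≤ σ t₀ → ρ₀ s = t₀ := by
    intro s hs
    have : S s = {t₀} := by
      ext x
      constructor
      · rintro (rfl | ⟨hx, hσx⟩)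
        · rfl
        · have : x ≤ t₀ := (hm.le_iff_le).1 (hσx.trans hs)
          exact le_antisymm this hx.1
      · rintro rfl; exact Or.inl rfl
    show sSup (S s) = t₀
    rw [this, csSup_singleton]
  set ρ : ℝ → ℝ := fun s => ρ₀ s + max 0 (s - σ t₁) + min 0 (s - σ t₀) with hρdef
  have hρmono : Monotone ρ := by
    intro s s' hss
    have h1 : max 0 (s - σ t₁) ≤ max 0 (s' - σ t₁) := by
      apply max_le_max le_rfl; linarith
    have h2 : min 0 (s - σ t₀) ≤ min 0 (s' - σ t₀) := by
      apply min_le_min le_rfl; linarith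
    exact add_le_add (add_le_add (hρ₀mono hss) h1) h2
  have hρsurj : Function.Surjective ρ := by
    intro y
    rcases le_total y t₀ with hy | hy
    · refine ⟨σ t₀ + (y - t₀), ?_⟩
      have h1 : σ t₀ + (y - t₀) ≤ σ t₀ := by linarith
      have h2 : σ t₀ ≤ σ t₁ := hm.monotone h01
      rw [hρdef]
      simp only
      rw [hρ₀_bot _ h1]
      rw [max_eq_left (by linarith), min_eq_right (by linarith)]
      ring
    · rcases le_total y t₁ with hy1 | hy1
      · refine ⟨σ y, ?_⟩
        have h2 : σ t₀ ≤ σ y := hm.monotone hy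
        have h3 : σ y ≤ σ t₁ := hm.monotone hy1
        rw [hρdef]
        simp only
        rw [hρ₀_mid y ⟨hy, hy1⟩, max_eq_left (by linarith), min_eq_left (by linarith)]
        ring
      · refine ⟨σ t₁ + (y - t₁), ?_⟩
        have h1 : σ t₁ ≤ σ t₁ + (y - t₁) := by linarith
        have h2 : σ t₀ ≤ σ t₁ := hm.monotone h01
        rw [hρdef]
        simp only
        rw [hρ₀_top _ h1, max_eq_right (by linarith), min_eq_left (by linarith)]
        ring
  refine ⟨ρ, hρmono.continuous_of_surjective hρsurj, ?_⟩
  intro t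
  rcases le_total t t₀ with ht | ht
  · have h1 : σ t ≤ σ t₀ := hm.monotone ht
    have h2 : σ t₀ ≤ σ t₁ := hm.monotone h01
    have hval : ρ (σ t) = t₀ + (σ t - σ t₀) := by
      rw [hρdef]; simp only
      rw [hρ₀_bot _ h1, max_eq_left (by linarith), min_eq_right (by linarith)]
      ring
    rw [hval]
    rw [min_eq_right (by linarith), min_eq_right (ht.trans h01),
      max_eq_left (by linarith), max_eq_left ht]
  · rcases le_total t t₁ with ht1 | ht1
    · have h2 : σ t₀ ≤ σ t := hm.monotone ht
      have h3 : σ t ≤ σ t₁ := hm.monotone ht1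
      have hval : ρ (σ t) = t := by
        rw [hρdef]; simp only
        rw [hρ₀_mid t ⟨ht, ht1⟩, max_eq_left (by linarith), min_eq_left (by linarith)]
        ring
      rw [hval]
    · have h1 : σ t₁ ≤ σ t := hm.monotone ht1
      have h2 : σ t₀ ≤ σ t₁ := hm.monotone h01
      have hval : ρ (σ t) = t₁ + (σ t - σ t₁) := by
        rw [hρdef]; simp only
        rw [hρ₀_top _ h1, max_eq_right (by linarith), min_eq_left (by linarith)]
        ring
      rw [hval]
      rw [min_eq_left (by linarith), min_eq_left ht1]

open Set in
lemma aux_key_mono (σ g : ℝ → ℝ) (hσc : Continuous σ) (hm : StrictMono σ)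
    (hσb : ∃ L, Tendsto σ atBot (𝓝 L)) (hσt : ∃ L, Tendsto σ atTop (𝓝 L))
    (hgc : Continuous g) (hgb : ∃ L, Tendsto g atBot (𝓝 L))
    (hgt : ∃ L, Tendsto g atTop (𝓝 L)) (ε : ℝ) (hε : 0 < ε) :
    ∃ P : Polynomial ℝ, ∀ t, |g t - P.eval (σ t)| ≤ ε := by
  obtain ⟨A, hA⟩ := hσb
  obtain ⟨B, hB⟩ := hσt
  obtain ⟨L₀, hL₀⟩ := hgb
  obtain ⟨L₁, hL₁⟩ := hgt
  have h0 : ∀ᶠ t in atBot, |g t - L₀| < ε/4 := by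
    have := Metric.tendsto_nhds.mp hL₀ (ε/4) (by positivity)
    simpa [Real.dist_eq] using this
  have h1 : ∀ᶠ t in atTop, |g t - L₁| < ε/4 := by
    have := Metric.tendsto_nhds.mp hL₁ (ε/4) (by positivity)
    simpa [Real.dist_eq] using this
  obtain ⟨T₀, hT₀⟩ := eventually_atBot.1 h0
  obtain ⟨T₁, hT₁⟩ := eventually_atTop.1 h1
  set t₀ : ℝ := min T₀ T₁ with ht₀
  set t₁ : ℝ := max T₀ T₁ with ht₁
  have h01 : t₀ ≤ t₁ := (min_le_left _ _).trans (le_max_left _ _)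
  obtain ⟨ρ, hρc, hρ⟩ := aux_exists_clamped_inverse σ hm t₀ t₁ h01
  set G : ℝ → ℝ := fun s => g (max t₀ (min t₁ (ρ s))) with hG
  have hGc : Continuous G := hgc.comp (continuous_const.max (continuous_const.min hρc))
  have hGσ : ∀ t, G (σ t) = g (max t₀ (min t₁ t)) := fun t => congrArg g (hρ t)
  have hclose : ∀ t, |g t - G (σ t)| ≤ ε/2 := by
    intro t
    rw [hGσ]
    rcases le_total t t₀ with ht | ht
    · rw [min_eq_right (ht.trans h01), max_eq_left ht]
      have e1 := hT₀ t (ht.trans (min_le_left _ _))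
      have e2 := hT₀ t₀ (min_le_left _ _)
      have e3 : |g t - g t₀| ≤ |g t - L₀| + |L₀ - g t₀| := abs_sub_le _ _ _
      rw [abs_sub_comm L₀ (g t₀)] at e3
      linarith
    · rcases le_total t t₁ with ht1 | ht1
      · rw [min_eq_right ht1, max_eq_right ht]
        simp only [sub_self, abs_zero]
        positivity
      · rw [min_eq_left ht1, max_eq_right h01]
        have e1 := hT₁ t ((le_max_right _ _).trans ht1)
        have e2 := hT₁ t₁ (le_max_right _ _)
        have e3 : |g t - g t₁| ≤ |g t - L₁| + |L₁ - g t₁| := abs_sub_le _ _ _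
        rw [abs_sub_comm L₁ (g t₁)] at e3
        linarith
  have hAB : ∀ t, σ t ∈ Icc A B := by
    intro t
    constructor
    · exact le_of_tendsto hA (eventually_atBot.2 ⟨t, fun s hs => hm.monotone hs⟩)
    · exact ge_of_tendsto hB (eventually_atTop.2 ⟨t, fun s hs => hm.monotone hs⟩)
  obtain ⟨P, hP⟩ := exists_polynomial_near_of_continuousOn A B G hGc.continuousOn
    (ε/2) (by positivity)
  refine ⟨P, fun t => ?_⟩
  have h2 := hP (σ t) (hAB t)
  have h3 : |g t - P.eval (σ t)| ≤ |g t - G (σ t)| + |G (σ t) - P.eval (σ t)| :=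
    abs_sub_le _ _ _
  rw [abs_sub_comm (G (σ t)) _] at h3
  have := hclose t
  linarith

lemma aux_key_signed (σ g : ℝ → ℝ) (hσ : σ ∈ SR)
    (hmono : StrictMono σ ∨ StrictAnti σ) (hg : g ∈ SR) (ε : ℝ) (hε : 0 < ε) :
    ∃ (P : Polynomial ℝ) (c : ℝ), ∀ t, |g t - P.eval (σ (c * t))| ≤ ε := by
  obtain ⟨hσc, hσb, hσt⟩ := hσ
  obtain ⟨hgc, hgb, hgt⟩ := hg
  rcases hmono with hm | hm
  · obtain ⟨P, hP⟩ := aux_key_mono σ g hσc hm hσb hσt hgc hgb hgt ε hε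
    exact ⟨P, 1, fun t => by simpa using hP t⟩
  · have hτc : Continuous (fun t => σ (-t)) := hσc.comp continuous_neg
    have hτm : StrictMono (fun t => σ (-t)) := fun a b hab => hm (neg_lt_neg hab)
    have hτb : ∃ L, Tendsto (fun t => σ (-t)) atBot (𝓝 L) := by
      obtain ⟨L, hL⟩ := hσt
      exact ⟨L, hL.comp tendsto_neg_atBot_atTop⟩
    have hτt : ∃ L, Tendsto (fun t => σ (-t)) atTop (𝓝 L) := by
      obtain ⟨L, hL⟩ := hσb
      exact ⟨L, hL.comp tendsto_neg_atTop_atBot⟩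
    obtain ⟨P, hP⟩ := aux_key_mono _ g hτc hτm hτb hτt hgc hgb hgt ε hε
    refine ⟨P, -1, fun t => ?_⟩
    simpa [neg_one_mul] using hP t

lemma aux_prod_sub_prod {ι : Type*} (s : Finset ι) (u v : ι → ℝ) (C δ : ℝ)
    (hC : 1 ≤ C) (hδ : 0 ≤ δ)
    (hu : ∀ j ∈ s, |u j| ≤ C) (hv : ∀ j ∈ s, |v j| ≤ C)
    (hd : ∀ j ∈ s, |u j - v j| ≤ δ) :
    |∏ j ∈ s, u j - ∏ j ∈ s, v j| ≤ s.card * C ^ s.card * δ := by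
  induction s using Finset.cons_induction with
  | empty => simp
  | cons a s ha ih =>
    rw [Finset.prod_cons, Finset.prod_cons, Finset.card_cons]
    have hvp : |∏ j ∈ s, v j| ≤ C ^ s.card := by
      rw [Finset.abs_prod]
      calc ∏ j ∈ s, |v j| ≤ ∏ j ∈ s, C :=
            Finset.prod_le_prod (fun j _ => abs_nonneg _)
              (fun j hj => hv j (Finset.mem_cons.2 (Or.inr hj)))
        _ = C ^ s.card := by rw [Finset.prod_const]
    have ih' := ih (fun j hj => hu j (Finset.mem_cons.2 (Or.inr hj)))
      (fun j hj => hv j (Finset.mem_cons.2 (Or.inr hj)))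
      (fun j hj => hd j (Finset.mem_cons.2 (Or.inr hj)))
    have hmem : a ∈ Finset.cons a s ha := Finset.mem_cons_self a s
    have hC0 : (0:ℝ) ≤ C := le_trans zero_le_one hC
    have hkey : u a * ∏ j ∈ s, u j - v a * ∏ j ∈ s, v j
        = u a * (∏ j ∈ s, u j - ∏ j ∈ s, v j) + (u a - v a) * ∏ j ∈ s, v j := by ring
    rw [hkey]
    have b0 : |u a * (∏ j ∈ s, u j - ∏ j ∈ s, v j) + (u a - v a) * ∏ j ∈ s, v j|
        ≤ |u a| * |∏ j ∈ s, u j - ∏ j ∈ s, v j| + |u a - v a| * |∏ j ∈ s, v j| := by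
      refine (abs_add_le _ _).trans ?_
      rw [abs_mul, abs_mul]
    have b1 : |u a| * |∏ j ∈ s, u j - ∏ j ∈ s, v j| ≤ C * (s.card * C ^ s.card * δ) :=
      mul_le_mul (hu a hmem) ih' (abs_nonneg _) hC0
    have b2 : |u a - v a| * |∏ j ∈ s, v j| ≤ δ * C ^ s.card :=
      mul_le_mul (hd a hmem) hvp (abs_nonneg _) hδ
    have hCpow : (0:ℝ) ≤ C ^ s.card := by positivity
    have hpmono : C ^ s.card ≤ C ^ (s.card + 1) :=
      pow_le_pow_right₀ (by linarith) (Nat.le_succ _)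
    have : C * (s.card * C ^ s.card * δ) + δ * C ^ s.card
        ≤ (s.card + 1 : ℕ) * C ^ (s.card + 1) * δ := by
      push_cast
      rw [pow_succ]
      have e2 : δ * C ^ s.card * 1 ≤ δ * C ^ s.card * C :=
        mul_le_mul_of_nonneg_left hC (mul_nonneg hδ hCpow)
      nlinarith [Nat.cast_nonneg (α := ℝ) s.card, e2]
    linarith

lemma aux_sr_bounded (g : ℝ → ℝ) (hg : g ∈ SR) :
    ∃ M : ℝ, 0 ≤ M ∧ ∀ t, |g t| ≤ M := by
  obtain ⟨hgc, ⟨L₀, hL₀⟩, ⟨L₁, hL₁⟩⟩ := hg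
  have h0 : ∀ᶠ t in atBot, |g t - L₀| < 1 := by
    have := Metric.tendsto_nhds.mp hL₀ 1 one_pos
    simpa [Real.dist_eq] using this
  have h1 : ∀ᶠ t in atTop, |g t - L₁| < 1 := by
    have := Metric.tendsto_nhds.mp hL₁ 1 one_pos
    simpa [Real.dist_eq] using this
  obtain ⟨T₀, hT₀⟩ := eventually_atBot.1 h0
  obtain ⟨T₁, hT₁⟩ := eventually_atTop.1 h1
  obtain ⟨Cc, hCc⟩ := (isCompact_Icc (a := T₀) (b := T₁)).exists_bound_of_continuousOn
    hgc.continuousOn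
  refine ⟨max Cc (max (|L₀| + 1) (|L₁| + 1)), ?_, fun t => ?_⟩
  · have : (0:ℝ) ≤ |L₀| + 1 := by positivity
    exact this.trans ((le_max_left _ _).trans (le_max_right _ _))
  · rcases le_total t T₀ with h | h
    · have := hT₀ t h
      have e : |g t| ≤ |g t - L₀| + |L₀| := by
        have h2 := abs_add_le (g t - L₀) L₀
        simpa using h2
      have : |g t| ≤ |L₀| + 1 := by linarith
      exact this.trans ((le_max_left _ _).trans (le_max_right _ _))
    · rcases le_total t T₁ with h' | h'
      · have := hCc t ⟨h, h'⟩
        rw [Real.norm_eq_abs] at this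
        exact this.trans (le_max_left _ _)
      · have := hT₁ t h'
        have e : |g t| ≤ |g t - L₁| + |L₁| := by
          have h2 := abs_add_le (g t - L₁) L₁
          simpa using h2
        have : |g t| ≤ |L₁| + 1 := by linarith
        exact this.trans ((le_max_right _ _).trans (le_max_right _ _))

lemma aux_subset_unifClosure {α : Type*} (S : Set (α → ℝ)) : S ⊆ UnifClosure S :=
  fun f hf ε hε => ⟨f, hf, fun x => by simp [hε.le]⟩

lemma aux_unifClosure_mono {α : Type*} {S T : Set (α → ℝ)} (h : S ⊆ T) :
    UnifClosure S ⊆ UnifClosure T := by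
  intro f hf ε hε
  obtain ⟨g, hg, hfg⟩ := hf ε hε
  exact ⟨g, h hg, hfg⟩

lemma aux_unifClosure_trans {α : Type*} {S T : Set (α → ℝ)}
    (h : S ⊆ UnifClosure T) : UnifClosure S ⊆ UnifClosure T := by
  intro f hf ε hε
  obtain ⟨g, hg, hfg⟩ := hf (ε/2) (by positivity)
  obtain ⟨k, hk, hgk⟩ := h hg (ε/2) (by positivity)
  refine ⟨k, hk, fun x => ?_⟩
  have := abs_sub_le (f x) (g x) (k x)
  have h1 := hfg x
  have h2 := hgk x
  linarith

lemma aux_span_subset_unifClosure {α : Type*} (s : Set (α → ℝ))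
    (p : Submodule ℝ (α → ℝ)) (h : s ⊆ UnifClosure ↑p) :
    (Submodule.span ℝ s : Set (α → ℝ)) ⊆ UnifClosure ↑p := by
  intro f hf
  induction hf using Submodule.span_induction with
  | mem f hfs => exact h hfs
  | zero => exact fun ε hε => ⟨0, p.zero_mem, fun x => by simp [hε.le]⟩
  | add f g _ _ hf hg =>
    intro ε hε
    obtain ⟨f', hf', hff'⟩ := hf (ε/2) (by positivity)
    obtain ⟨g', hg', hgg'⟩ := hg (ε/2) (by positivity)
    refine ⟨f' + g', p.add_mem hf' hg', fun x => ?_⟩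
    have h1 := hff' x
    have h2 := hgg' x
    have : |(f x + g x) - (f' x + g' x)| ≤ |f x - f' x| + |g x - g' x| := by
      have := abs_add_le (f x - f' x) (g x - g' x)
      rw [show (f x + g x) - (f' x + g' x) = (f x - f' x) + (g x - g' x) by ring]
      exact this
    simp only [Pi.add_apply]
    linarith
  | smul c f _ hf =>
    intro ε hε
    obtain ⟨f', hf', hff'⟩ := hf (ε/(|c|+1)) (by positivity)
    refine ⟨c • f', p.smul_mem c hf', fun x => ?_⟩
    have h1 := hff' x
    have h2 : |c • f x - c • f' x| = |c| * |f x - f' x| := by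
      rw [smul_eq_mul, smul_eq_mul, ← mul_sub, abs_mul]
    simp only [Pi.smul_apply]
    rw [h2]
    have hc1 : (0:ℝ) < |c| + 1 := by positivity
    have h3 : |c| * |f x - f' x| ≤ |c| * (ε/(|c|+1)) :=
      mul_le_mul_of_nonneg_left h1 (abs_nonneg c)
    have h4 : |c| * (ε/(|c|+1)) ≤ (|c|+1) * (ε/(|c|+1)) :=
      mul_le_mul_of_nonneg_right (by linarith) (by positivity)
    have h5 : (|c|+1) * (ε/(|c|+1)) = ε := by field_simp
    linarith

/-- The generating set of products of `σ` composed with linear functionals. -/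
def Pgen (σ : ℝ → ℝ) (n : ℕ) : Set (E n → ℝ) :=
  {f : E n → ℝ | ∃ (m : ℕ) (a : Fin m → E n),
    f = fun x => ∏ j, σ (inner ℝ (a j) x : ℝ)}

lemma aux_one_mem_Pgen (σ : ℝ → ℝ) (n : ℕ) : (1 : E n → ℝ) ∈ Pgen σ n := by
  refine ⟨0, fun _ => 0, ?_⟩
  funext x
  simp

lemma aux_mul_mem_Pgen (σ : ℝ → ℝ) (n : ℕ) {f g : E n → ℝ}
    (hf : f ∈ Pgen σ n) (hg : g ∈ Pgen σ n) : f * g ∈ Pgen σ n := by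
  obtain ⟨m₁, a₁, rfl⟩ := hf
  obtain ⟨m₂, a₂, rfl⟩ := hg
  refine ⟨m₁ + m₂, Fin.append a₁ a₂, ?_⟩
  funext x
  simp [Fin.prod_univ_add, Fin.append_left, Fin.append_right]

lemma aux_mul_mem_span_Pgen (σ : ℝ → ℝ) (n : ℕ) {f g : E n → ℝ}
    (hf : f ∈ Submodule.span ℝ (Pgen σ n)) (hg : g ∈ Submodule.span ℝ (Pgen σ n)) :
    f * g ∈ Submodule.span ℝ (Pgen σ n) := by
  have hle : Submodule.span ℝ (Pgen σ n) * Submodule.span ℝ (Pgen σ n)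
      ≤ Submodule.span ℝ (Pgen σ n) := by
    rw [Submodule.span_mul_span]
    apply Submodule.span_le.2
    rintro h hh
    rw [Set.mem_mul] at hh
    obtain ⟨f₁, hf₁, f₂, hf₂, rfl⟩ := hh
    exact Submodule.subset_span (aux_mul_mem_Pgen σ n hf₁ hf₂)
  exact Submodule.mul_le.1 hle f hf g hg

lemma aux_pow_mem_Pgen (σ : ℝ → ℝ) (n : ℕ) (b : E n) (k : ℕ) :
    (fun x : E n => (σ (inner ℝ b x : ℝ)) ^ k) ∈ Pgen σ n := by
  refine ⟨k, fun _ => b, ?_⟩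
  funext x
  rw [Finset.prod_const, Finset.card_univ, Fintype.card_fin]

lemma aux_poly_mem_span_Pgen (σ : ℝ → ℝ) (n : ℕ) (b : E n) (P : Polynomial ℝ) :
    (fun x : E n => P.eval (σ (inner ℝ b x : ℝ))) ∈ Submodule.span ℝ (Pgen σ n) := by
  have : (fun x : E n => P.eval (σ (inner ℝ b x : ℝ)))
      = ∑ i ∈ Finset.range (P.natDegree + 1),
          P.coeff i • (fun x : E n => (σ (inner ℝ b x : ℝ)) ^ i) := by
    funext x
    rw [Finset.sum_apply]
    simp only [Pi.smul_apply, smul_eq_mul]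
    exact Polynomial.eval_eq_sum_range _
  rw [this]
  exact Submodule.sum_mem _ fun i _ =>
    Submodule.smul_mem _ _ (Submodule.subset_span (aux_pow_mem_Pgen σ n b i))

/-- Main approximation step: any product generator of `S(ℝⁿ)` lies in the
uniform closure of the span of products of `σ`. -/
lemma aux_gen_mem_closure (n : ℕ) (σ : ℝ → ℝ) (hσ : σ ∈ SR)
    (hmono : StrictMono σ ∨ StrictAnti σ) (m : ℕ) (g : Fin m → ℝ → ℝ)
    (a : Fin m → E n) (hg : ∀ j, g j ∈ SR) :
    (fun x => ∏ j, g j (inner ℝ (a j) x : ℝ))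
      ∈ UnifClosure ↑(Submodule.span ℝ (Pgen σ n)) := by
  intro ε hε
  choose M hM0 hM using fun j => aux_sr_bounded (g j) (hg j)
  set C : ℝ := 1 + ∑ j, M j with hC
  have hsum0 : (0:ℝ) ≤ ∑ j, M j := Finset.sum_nonneg fun j _ => hM0 j
  have hC1 : 1 ≤ C := by rw [hC]; linarith
  have hMC : ∀ j, M j + 1 ≤ C := by
    intro j
    have : M j ≤ ∑ i, M i :=
      Finset.single_le_sum (fun i _ => hM0 i) (Finset.mem_univ j)
    rw [hC]; linarith
  have hq : (0:ℝ) < m * C ^ m + 1 := by positivity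
  set δ : ℝ := min 1 (ε / (m * C ^ m + 1)) with hδ
  have hδpos : 0 < δ := lt_min one_pos (by positivity)
  have hδ1 : δ ≤ 1 := min_le_left _ _
  have hδε : (m : ℝ) * C ^ m * δ ≤ ε := by
    have h1 : δ ≤ ε / (m * C ^ m + 1) := min_le_right _ _
    have h2 : (0:ℝ) ≤ (m : ℝ) * C ^ m := by positivity
    have h3 : (m : ℝ) * C ^ m * δ ≤ (m : ℝ) * C ^ m * (ε / (m * C ^ m + 1)) :=
      mul_le_mul_of_nonneg_left h1 h2
    have h4 : (m : ℝ) * C ^ m * (ε / (m * C ^ m + 1)) ≤ ε := by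
      rw [mul_div_assoc', div_le_iff₀ hq]
      nlinarith
    linarith
  choose P c hPc using fun j =>
    aux_key_signed σ (g j) hσ hmono (hg j) δ hδpos
  refine ⟨fun x => ∏ j, (P j).eval (σ (inner ℝ (c j • a j) x : ℝ)), ?_, ?_⟩
  · have hfun : (fun x : E n => ∏ j, (P j).eval (σ (inner ℝ (c j • a j) x : ℝ)))
        = ∏ j, (fun x : E n => (P j).eval (σ (inner ℝ (c j • a j) x : ℝ))) := by
      funext x
      rw [Finset.prod_apply]
    rw [hfun]
    exact Finset.prod_induction _ (· ∈ Submodule.span ℝ (Pgen σ n))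
      (fun f g hf hg => aux_mul_mem_span_Pgen σ n hf hg)
      (Submodule.subset_span (aux_one_mem_Pgen σ n))
      (fun j _ => aux_poly_mem_span_Pgen σ n (c j • a j) (P j))
  · intro x
    have hv : ∀ j, |(P j).eval (σ (c j * (inner ℝ (a j) x : ℝ)))| ≤ C := by
      intro j
      have h1 := hPc j (inner ℝ (a j) x : ℝ)
      have h2 := hM j (inner ℝ (a j) x : ℝ)
      have h3 := abs_sub_abs_le_abs_sub
        ((P j).eval (σ (c j * (inner ℝ (a j) x : ℝ)))) (g j (inner ℝ (a j) x : ℝ))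
      rw [abs_sub_comm] at h3
      have hc := hMC j
      linarith
    have hbound := aux_prod_sub_prod (Finset.univ : Finset (Fin m))
      (fun j => g j (inner ℝ (a j) x : ℝ))
      (fun j => (P j).eval (σ (c j * (inner ℝ (a j) x : ℝ)))) C δ hC1 hδpos.le
      (fun j _ => by have := hMC j; exact (hM j _).trans (by linarith))
      (fun j _ => hv j) (fun j _ => hPc j _)
    rw [Finset.card_univ, Fintype.card_fin] at hbound
    simp only [real_inner_smul_left]
    exact hbound.trans hδε

/-- For any strictly monotone `σ ∈ S(ℝ)` (e.g. `tanh`), `S(ℝⁿ)` equals the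
uniformly closed span of the products `x ↦ ∏_{j=1}^m σ(a_j·x)`. -/
theorem stmt15 (n : ℕ) (hn : 1 ≤ n) (σ : ℝ → ℝ) (hσ : σ ∈ SR)
    (hmono : StrictMono σ ∨ StrictAnti σ) :
    SRn n = UnifClosure ↑(Submodule.span ℝ
      {f : E n → ℝ | ∃ (m : ℕ) (a : Fin m → E n),
        f = fun x => ∏ j, σ (inner ℝ (a j) x : ℝ)}) := by
  have hPgen : {f : E n → ℝ | ∃ (m : ℕ) (a : Fin m → E n),
      f = fun x => ∏ j, σ (inner ℝ (a j) x : ℝ)} = Pgen σ n := rfl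
  rw [hPgen]
  apply Set.Subset.antisymm
  · apply aux_unifClosure_trans
    apply aux_span_subset_unifClosure
    rintro f ⟨m, hm, g, a, hgSR, rfl⟩
    exact aux_gen_mem_closure n σ hσ hmono m g a hgSR
  · apply aux_unifClosure_mono
    apply SetLike.coe_subset_coe.2
    apply Submodule.span_le.2
    rintro f ⟨m, a, rfl⟩
    cases m with
    | zero =>
      apply Submodule.subset_span
      refine ⟨1, le_rfl, fun _ => fun _ => (1:ℝ), fun _ => 0,
        fun j => ⟨continuous_const, ⟨1, tendsto_const_nhds⟩, ⟨1, tendsto_const_nhds⟩⟩, ?_⟩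
      funext x
      simp
    | succ m =>
      exact Submodule.subset_span
        ⟨m+1, Nat.succ_le_succ (Nat.zero_le m), fun _ => σ, a, fun j => hσ, rfl⟩
end
end
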